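/- arXiv:1411.5505 — 7 statements merged into one kernel-verified Lean document; each statement's English description precedes it below -/
import Mathlib

section
/- Let q > 2, λ > 0, and let f : [0,∞) → ℝ be a twice continuously differentiable solution of the ODE f''(ξ) + λ|f'(ξ)|^q − (1/2)ξ f'(ξ) + ((q−2)/(2(q−1))) f(ξ) = 0 on [0,∞) with f(0) = −1 and f'(0) = 0. Define g : ℝ → ℝ by g(t) = e^{−t/(q−1)} f'(e^t). Then lim_{t→∞} g(t) = C₀, where C₀ = (1/(λq))^{1/(q−1)}. -/
open Set Filter Topology Real

/-- `f` is a twice continuously differentiable solution, on the set `s`, of the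
self-similar profile ODE `f'' + λ|f'|^q - (1/2)ξ f' + ((q-2)/(2(q-1))) f = 0`
associated with the generalized deterministic KPZ equation. -/
def SolvesKPZProfile (q lam : ℝ) (s : Set ℝ) (f : ℝ → ℝ) : Prop :=
  ContDiffOn ℝ 2 f s ∧
  ∀ ξ ∈ s,
    derivWithin (derivWithin f s) s ξ + lam * |derivWithin f s ξ| ^ q
      - (1 / 2) * ξ * derivWithin f s ξ + ((q - 2) / (2 * (q - 1))) * f ξ = 0

/-- The function `g(t) = e^{-t/(q-1)} f'(e^t)`, i.e. the profile derivative in the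
variables `f'(ξ) = ξ^{1/(q-1)} g(t)`, `ξ = e^t`. -/
noncomputable def kpzG (q : ℝ) (f : ℝ → ℝ) : ℝ → ℝ :=
  fun t => Real.exp (-t / (q - 1)) * derivWithin f (Set.Ici 0) (Real.exp t)


lemma cont_of_deriv {a b : ℝ} {φ φ' : ℝ → ℝ}
    (hd : ∀ ξ ∈ Icc a b, HasDerivAt φ (φ' ξ) ξ) : ContinuousOn φ (Icc a b) :=
  fun ξ hξ => ((hd ξ hξ).continuousAt).continuousWithinAt

lemma slope_right_nonneg {φ : ℝ → ℝ} {d m b : ℝ} (hmb : m < b)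
    (hder : HasDerivAt φ d m) (hmin : ∀ η ∈ Ioc m b, φ m ≤ φ η) : 0 ≤ d := by
  have hs : Tendsto (slope φ m) (𝓝[>] m) (𝓝 d) :=
    (hasDerivAt_iff_tendsto_slope.mp hder).mono_left
      (nhdsWithin_mono m fun x hx => ne_of_gt hx)
  refine ge_of_tendsto hs ?_
  filter_upwards [Ioc_mem_nhdsGT_of_mem (⟨le_rfl, hmb⟩ : m ∈ Ico m b)] with η hη
  rw [slope_def_field]
  exact div_nonneg (sub_nonneg.2 (hmin η hη)) (sub_nonneg.2 hη.1.le)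

lemma slope_left_nonpos {φ : ℝ → ℝ} {d m a : ℝ} (ham : a < m)
    (hder : HasDerivAt φ d m) (hmin : ∀ η ∈ Ico a m, φ m ≤ φ η) : d ≤ 0 := by
  have hs : Tendsto (slope φ m) (𝓝[<] m) (𝓝 d) :=
    (hasDerivAt_iff_tendsto_slope.mp hder).mono_left
      (nhdsWithin_mono m fun x hx => ne_of_lt hx)
  refine le_of_tendsto hs ?_
  filter_upwards [Ico_mem_nhdsLT_of_mem (⟨ham, le_rfl⟩ : m ∈ Ioc a m)] with η hη
  rw [slope_def_field]
  exact div_nonpos_of_nonneg_of_nonpos (sub_nonneg.2 (hmin η hη)) (by linarith [hη.2] : η - m ≤ 0)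

/-- Barrier lemma: if `φ a ≤ 0` and whenever `φ` touches `0` its derivative is
strictly negative, then `φ ≤ 0` on `[a,b]`. -/
lemma barrier_le {a b : ℝ} {φ φ' : ℝ → ℝ}
    (hd : ∀ ξ ∈ Icc a b, HasDerivAt φ (φ' ξ) ξ)
    (h0 : φ a ≤ 0)
    (key : ∀ ξ ∈ Icc a b, φ ξ = 0 → φ' ξ < 0) :
    ∀ ξ ∈ Icc a b, φ ξ ≤ 0 := by
  intro c hc
  by_contra hpos
  push_neg at hpos
  have hac : a ≤ c := hc.1
  have hIcc : Icc a c ⊆ Icc a b := Icc_subset_Icc le_rfl hc.2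
  set S := {η | η ∈ Icc a c ∧ φ η ≤ 0} with hS
  have hSne : a ∈ S := ⟨⟨le_rfl, hac⟩, h0⟩
  have hScl : IsClosed S := by
    have : S = Icc a c ∩ φ ⁻¹' (Iic 0) := rfl
    rw [this]
    exact ((cont_of_deriv hd).mono hIcc).preimage_isClosed_of_isClosed isClosed_Icc isClosed_Iic
  have hbdd : BddAbove S := ⟨c, fun η hη => hη.1.2⟩
  set m := sSup S with hm
  have hmS : m ∈ S := hScl.csSup_mem ⟨a, hSne⟩ hbdd
  have hmc : m < c := lt_of_le_of_ne hmS.1.2 (fun h => absurd hmS.2 (by rw [h]; exact not_le.2 hpos))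
  have hgt : ∀ η ∈ Ioc m c, 0 < φ η := by
    intro η hη
    by_contra hle
    push_neg at hle
    have : η ∈ S := ⟨⟨hmS.1.1.trans hη.1.le, hη.2⟩, hle⟩
    exact absurd (le_csSup hbdd this) (not_le.2 hη.1)
  have hmb : m ∈ Icc a b := hIcc hmS.1
  have hcont : ContinuousAt φ m := (hd m hmb).continuousAt
  have hge : 0 ≤ φ m := by
    refine ge_of_tendsto (hcont.tendsto.mono_left (nhdsWithin_le_nhds (s := Ioi m))) ?_
    filter_upwards [Ioc_mem_nhdsGT_of_mem (⟨le_rfl, hmc⟩ : m ∈ Ico m c)] with η hη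
    exact (hgt η hη).le
  have hm0 : φ m = 0 := le_antisymm hmS.2 hge
  have hk := key m hmb hm0
  have : 0 ≤ φ' m := by
    refine slope_right_nonneg hmc (hd m hmb) ?_
    intro η hη
    rw [hm0]
    exact (hgt η hη).le
  linarith

lemma le_of_deriv_nonneg {a b : ℝ} {φ φ' : ℝ → ℝ} (hab : a ≤ b)
    (hd : ∀ ξ ∈ Icc a b, HasDerivAt φ (φ' ξ) ξ)
    (hpos : ∀ ξ ∈ Icc a b, 0 ≤ φ' ξ) : φ a ≤ φ b := by
  have hmono : MonotoneOn φ (Icc a b) := by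
    refine monotoneOn_of_deriv_nonneg (convex_Icc a b) (cont_of_deriv hd) ?_ ?_
    · intro ξ hξ
      rw [interior_Icc] at hξ
      exact ((hd ξ (Ioo_subset_Icc_self hξ)).differentiableAt).differentiableWithinAt
    · intro ξ hξ
      rw [interior_Icc] at hξ
      rw [(hd ξ (Ioo_subset_Icc_self hξ)).deriv]
      exact hpos ξ (Ioo_subset_Icc_self hξ)
  exact hmono ⟨le_rfl, hab⟩ ⟨hab, le_rfl⟩ hab

section Construct

lemma kpz_construct (q lam : ℝ) (hq : 2 < q) (hlam : 0 < lam)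
    (f : ℝ → ℝ) (hsol : SolvesKPZProfile q lam (Set.Ici 0) f)
    (hf0 : f 0 = -1) (hf'0 : derivWithin f (Set.Ici 0) 0 = 0) :
    ∃ w : ℝ → ℝ,
      (∀ ξ > (0:ℝ), 0 < derivWithin f (Set.Ici 0) ξ) ∧
      (∀ ξ ≥ (0:ℝ), 0 < w ξ) ∧
      (∀ ξ > (0:ℝ), HasDerivAt (derivWithin f (Set.Ici 0)) (w ξ) ξ) ∧
      (∀ ξ > (0:ℝ), HasDerivAt w
        ((ξ/2 - lam*q*(derivWithin f (Set.Ici 0) ξ)^(q-1)) * w ξ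
          + (1/(2*(q-1))) * derivWithin f (Set.Ici 0) ξ) ξ) := by
  have hq1 : (0:ℝ) < q - 1 := by linarith
  have hq2 : (0:ℝ) < q - 2 := by linarith
  have hqpos : (0:ℝ) < q := by linarith
  set s : Set ℝ := Set.Ici 0 with hs
  set v : ℝ → ℝ := derivWithin f s with hv
  set c : ℝ := (q - 2) / (2 * (q - 1)) with hcdef
  have hc : 0 < c := div_pos hq2 (by linarith)
  have hu : UniqueDiffOn ℝ s := uniqueDiffOn_Ici 0
  have hf2 : ContDiffOn ℝ 2 f s := hsol.1
  have hfd : DifferentiableOn ℝ f s := hf2.differentiableOn (by norm_num)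
  have hv1 : ContDiffOn ℝ 1 v s := hf2.derivWithin hu (by norm_num)
  have hvd : DifferentiableOn ℝ v s := hv1.differentiableOn (by norm_num)
  have hvc : ContinuousOn v s := hvd.continuousOn
  have hfc : ContinuousOn f s := hfd.continuousOn
  set w : ℝ → ℝ := fun ξ => -(lam * |v ξ| ^ q) + 1/2 * ξ * v ξ - c * f ξ with hwdef
  have hweq : ∀ ξ ∈ s, derivWithin v s ξ = w ξ := by
    intro ξ hξ
    have h := hsol.2 ξ hξ
    simp only [hwdef]
    rw [hcdef]
    linarith
  have hvw : ∀ ξ ∈ s, HasDerivWithinAt v (w ξ) s ξ := by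
    intro ξ hξ
    have := (hvd ξ hξ).hasDerivWithinAt
    rwa [hweq ξ hξ] at this
  have hv' : ∀ ξ > (0:ℝ), HasDerivAt v (w ξ) ξ := by
    intro ξ hξ
    exact (hvw ξ (le_of_lt hξ)).hasDerivAt (Ici_mem_nhds hξ)
  have hf' : ∀ ξ > (0:ℝ), HasDerivAt f (v ξ) ξ := by
    intro ξ hξ
    exact ((hfd ξ (le_of_lt hξ)).hasDerivWithinAt.hasDerivAt (Ici_mem_nhds hξ))
  have habs : Continuous (fun y : ℝ => |y| ^ q) :=
    continuous_abs.rpow_const (fun x => Or.inr (by linarith))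
  have hwc : ContinuousOn w s := by
    apply ContinuousOn.sub
    · apply ContinuousOn.add
      · have h1 : ContinuousOn (fun ξ => lam * |v ξ| ^ q) s :=
          continuousOn_const.mul (habs.comp_continuousOn hvc)
        exact h1.neg
      · exact (continuousOn_const.mul continuousOn_id).mul hvc
    · exact continuousOn_const.mul hfc
  have hv0 : v 0 = 0 := hf'0
  have hw0 : w 0 = c := by
    simp only [hwdef, hv0, hf0]
    rw [abs_zero, Real.zero_rpow (by positivity)]
    ring
  have hw' : ∀ ξ > (0:ℝ), 0 < v ξ →
      HasDerivAt w ((ξ/2 - lam*q*(v ξ)^(q-1)) * w ξ + (1/(2*(q-1))) * v ξ) ξ := by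
    intro ξ hξ hvpos
    have hvco : ContinuousAt v ξ := hvc.continuousAt (Ici_mem_nhds hξ)
    have hev : ∀ᶠ η in 𝓝 ξ, 0 < v η := hvco.eventually_mem (Ioi_mem_nhds hvpos)
    have heq : (fun η => -(lam * (v η) ^ q) + 1/2 * η * v η - c * f η) =ᶠ[𝓝 ξ] w := by
      filter_upwards [hev] with η hη
      simp only [hwdef, abs_of_pos hη]
    have h1 : HasDerivAt (fun η => (v η) ^ q) (w ξ * q * (v ξ) ^ (q-1)) ξ :=
      (hv' ξ hξ).rpow_const (Or.inl (ne_of_gt hvpos))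
    have hW : HasDerivAt (fun η => -(lam * (v η) ^ q) + 1/2 * η * v η - c * f η)
        (-(lam * (w ξ * q * (v ξ) ^ (q-1))) + ((1/2 * 1) * v ξ + (1/2 * ξ) * w ξ) - c * v ξ) ξ :=
      (((h1.const_mul lam).neg).add (((hasDerivAt_id ξ).const_mul (1/2)).mul (hv' ξ hξ))).sub
        ((hf' ξ hξ).const_mul c)
    have hW2 := hW.congr_of_eventuallyEq heq.symm
    refine hW2.congr_deriv ?_
    rw [hcdef]
    field_simp
    ring
  have hwcont0 : ContinuousWithinAt w s 0 := hwc 0 (self_mem_Ici)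
  have hev0 : ∀ᶠ η in 𝓝[s] 0, c/2 < w η := by
    have hmem : Set.Ioi (c/2) ∈ 𝓝 (w 0) := by rw [hw0]; exact Ioi_mem_nhds (by linarith)
    exact hwcont0.eventually_mem hmem
  obtain ⟨ε, hε, hball⟩ := Metric.mem_nhdsWithin_iff.mp hev0
  set δ : ℝ := ε/2 with hδdef
  have hδ : 0 < δ := by positivity
  have hδw : ∀ η ∈ Icc (0:ℝ) δ, 0 < w η := by
    intro η hη
    have hmem : c/2 < w η := by
      refine hball ⟨?_, hη.1⟩
      rw [Metric.mem_ball, Real.dist_eq, sub_zero, abs_of_nonneg hη.1]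
      linarith [hη.2]
    exact lt_trans (half_pos hc) hmem
  have hwpos : ∀ ξ ≥ (0:ℝ), 0 < w ξ := by
    by_contra hcon
    push_neg at hcon
    obtain ⟨ξ₀, hξ₀0, hξ₀⟩ := hcon
    set S : Set ℝ := {η | η ∈ Icc 0 ξ₀ ∧ w η ≤ 0} with hSdef
    have hSne : ξ₀ ∈ S := ⟨⟨hξ₀0, le_rfl⟩, hξ₀⟩
    have hIccs : Icc (0:ℝ) ξ₀ ⊆ s := fun η hη => hη.1
    have hScl : IsClosed S := by
      have hrfl : S = Icc 0 ξ₀ ∩ w ⁻¹' (Iic 0) := rfl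
      rw [hrfl]
      exact (hwc.mono hIccs).preimage_isClosed_of_isClosed isClosed_Icc isClosed_Iic
    have hbdd : BddBelow S := ⟨0, fun η hη => hη.1.1⟩
    set m := sInf S with hm
    have hmS : m ∈ S := hScl.csInf_mem ⟨ξ₀, hSne⟩ hbdd
    have hmδ : δ < m := by
      by_contra hle
      push_neg at hle
      exact absurd hmS.2 (not_le.2 (hδw m ⟨hmS.1.1, hle⟩))
    have hm0 : 0 < m := lt_trans hδ hmδ
    have hwgt : ∀ η ∈ Ico (0:ℝ) m, 0 < w η := by
      intro η hη
      by_contra hle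
      push_neg at hle
      have hηS : η ∈ S := ⟨⟨hη.1, le_trans hη.2.le hmS.1.2⟩, hle⟩
      exact absurd (csInf_le hbdd hηS) (not_le.2 hη.2)
    have hsm : StrictMonoOn v (Icc 0 m) := by
      refine strictMonoOn_of_deriv_pos (convex_Icc 0 m) (hvc.mono Icc_subset_Ici_self) ?_
      intro η hη
      rw [interior_Icc] at hη
      rw [(hv' η hη.1).deriv]
      exact hwgt η ⟨hη.1.le, hη.2⟩
    have hvm : 0 < v m := by
      have := hsm ⟨le_rfl, hm0.le⟩ ⟨hm0.le, le_rfl⟩ hm0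
      rwa [hv0] at this
    have hwm0 : w m = 0 := by
      refine le_antisymm hmS.2 ?_
      have hcm : ContinuousAt w m := hwc.continuousAt (Ici_mem_nhds hm0)
      refine ge_of_tendsto (hcm.tendsto.mono_left (nhdsWithin_le_nhds (s := Iio m))) ?_
      filter_upwards [Ico_mem_nhdsLT_of_mem (⟨hm0, le_rfl⟩ : m ∈ Ioc 0 m)] with η hη
      exact (hwgt η hη).le
    have hder := hw' m hm0 hvm
    rw [hwm0] at hder
    have hle : (m/2 - lam*q*(v m)^(q-1)) * 0 + (1/(2*(q-1))) * v m ≤ 0 := by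
      refine slope_left_nonpos hm0 hder ?_
      intro η hη
      rw [hwm0]
      exact (hwgt η hη).le
    have : 0 < (m/2 - lam*q*(v m)^(q-1)) * 0 + (1/(2*(q-1))) * v m := by
      rw [mul_zero, zero_add]
      positivity
    linarith
  have hvpos : ∀ ξ > (0:ℝ), 0 < v ξ := by
    intro ξ hξ
    have hsm : StrictMonoOn v (Icc 0 ξ) := by
      refine strictMonoOn_of_deriv_pos (convex_Icc 0 ξ) (hvc.mono Icc_subset_Ici_self) ?_
      intro η hη
      rw [interior_Icc] at hη
      rw [(hv' η hη.1).deriv]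
      exact hwpos η hη.1.le
    have := hsm ⟨le_rfl, hξ.le⟩ ⟨hξ.le, le_rfl⟩ hξ
    rwa [hv0] at this
  exact ⟨w, hvpos, hwpos, hv', fun ξ hξ => hw' ξ hξ (hvpos ξ hξ)⟩

end Construct

section MainAnalysis

/-- The bundled hypotheses for the reduced system: `v > 0`, `w = v' > 0`, and the
second-order equation `w' = (ξ/2 - λ q v^{q-1}) w + v/(2(q-1))` on `(0,∞)`. -/
structure Nice (q lam : ℝ) (v w : ℝ → ℝ) : Prop where
  hq : 2 < q
  hlam : 0 < lam
  vpos : ∀ ξ > (0:ℝ), 0 < v ξ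
  wpos : ∀ ξ > (0:ℝ), 0 < w ξ
  hv : ∀ ξ > (0:ℝ), HasDerivAt v (w ξ) ξ
  hw : ∀ ξ > (0:ℝ), HasDerivAt w ((ξ/2 - lam*q*(v ξ)^(q-1)) * w ξ + (1/(2*(q-1))) * v ξ) ξ

noncomputable def Xf (q lam : ℝ) (v : ℝ → ℝ) (ξ : ℝ) : ℝ := lam * q * v ξ ^ (q-1)

noncomputable def Pf (v w : ℝ → ℝ) (ξ : ℝ) : ℝ := w ξ / v ξ

namespace Nice

variable {q lam : ℝ} {v w : ℝ → ℝ}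

lemma hq1 (hN : Nice q lam v w) : (1:ℝ) < q - 1 := by linarith [hN.hq]

lemma Xpos (hN : Nice q lam v w) {ξ : ℝ} (hξ : 0 < ξ) : 0 < Xf q lam v ξ := by
  have := hN.vpos ξ hξ
  have := hN.hlam
  have : (0:ℝ) < q := by linarith [hN.hq]
  unfold Xf
  positivity

lemma Ppos (hN : Nice q lam v w) {ξ : ℝ} (hξ : 0 < ξ) : 0 < Pf v w ξ :=
  div_pos (hN.wpos ξ hξ) (hN.vpos ξ hξ)

lemma hX (hN : Nice q lam v w) {ξ : ℝ} (hξ : 0 < ξ) :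
    HasDerivAt (Xf q lam v) ((q-1) * Xf q lam v ξ * Pf v w ξ) ξ := by
  have hvp := hN.vpos ξ hξ
  have h1 : HasDerivAt (fun η => v η ^ (q-1)) (w ξ * (q-1) * v ξ ^ (q-1-1)) ξ :=
    (hN.hv ξ hξ).rpow_const (Or.inl (ne_of_gt hvp))
  have h2 := h1.const_mul (lam*q)
  have h3 : (v ξ) ^ (q-1) = (v ξ) ^ (q-1-1) * v ξ := by
    have h4 := Real.rpow_add_one (ne_of_gt hvp) (q-1-1)
    rw [show q-1-1+1 = q-1 by ring] at h4
    exact h4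
  refine h2.congr_deriv ?_
  unfold Xf Pf
  rw [h3]
  field_simp

lemma hP (hN : Nice q lam v w) {ξ : ℝ} (hξ : 0 < ξ) :
    HasDerivAt (Pf v w)
      ((ξ/2 - Xf q lam v ξ) * Pf v w ξ + 1/(2*(q-1)) - (Pf v w ξ)^2) ξ := by
  have hvp := hN.vpos ξ hξ
  have h1 := (hN.hw ξ hξ).div (hN.hv ξ hξ) (ne_of_gt hvp)
  refine h1.congr_deriv ?_
  unfold Xf Pf
  field_simp

lemma hLogX (hN : Nice q lam v w) {ξ : ℝ} (hξ : 0 < ξ) :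
    HasDerivAt (fun η => Real.log (Xf q lam v η)) ((q-1) * Pf v w ξ) ξ := by
  have h1 := (hN.hX hξ).log (ne_of_gt (hN.Xpos hξ))
  convert h1 using 1
  field_simp [ne_of_gt (hN.Xpos hξ)]

lemma Xmono (hN : Nice q lam v w) {a b : ℝ} (ha : 0 < a) (hab : a ≤ b) :
    Xf q lam v a ≤ Xf q lam v b := by
  refine le_of_deriv_nonneg hab (fun ξ hξ => hN.hX (lt_of_lt_of_le ha hξ.1)) ?_
  intro ξ hξ
  have hξp : 0 < ξ := lt_of_lt_of_le ha hξ.1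
  have := hN.Xpos hξp
  have := hN.Ppos hξp
  have h1 : (0:ℝ) < q - 1 := by linarith [hN.hq]
  positivity

end Nice

end MainAnalysis

namespace Nice

variable {q lam : ℝ} {v w : ℝ → ℝ}

lemma psi_upper (hN : Nice q lam v w) :
    ∃ K ≥ (1:ℝ), ∀ ξ ≥ (1:ℝ), Pf v w ξ ≤ ξ + K := by
  have hP1 := hN.Ppos one_pos
  obtain ⟨K, hKdef⟩ : ∃ K : ℝ, K = Pf v w 1 + 1 := ⟨_, rfl⟩
  have hK1 : (1:ℝ) ≤ K := by rw [hKdef]; linarith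
  refine ⟨K, hK1, ?_⟩
  intro b hb
  have hbar := barrier_le (a := 1) (b := b)
      (φ := fun ξ => Pf v w ξ - (ξ + K))
      (φ' := fun ξ => ((ξ/2 - Xf q lam v ξ) * Pf v w ξ + 1/(2*(q-1)) - (Pf v w ξ)^2) - 1)
      (fun ξ hξ => (hN.hP (by linarith [hξ.1] : (0:ℝ) < ξ)).sub
        ((hasDerivAt_id ξ).add_const K))
      (by beta_reduce; rw [hKdef]; linarith)
      ?_
  · have h2 : Pf v w b - (b + K) ≤ 0 := hbar b ⟨hb, le_rfl⟩
    linarith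
  · intro ξ hξ h0
    beta_reduce at h0 ⊢
    have hξp : (0:ℝ) < ξ := by linarith [hξ.1]
    have hXp := hN.Xpos hξp
    have hPK : Pf v w ξ = ξ + K := by linarith
    have h12 : 1/(2*(q-1)) < 1/2 := by
      rw [div_lt_div_iff₀ (by linarith [hN.hq]) (by norm_num)]
      linarith [hN.hq]
    have e3 : (2:ℝ) ≤ ξ + K := by linarith [hξ.1]
    have e2 : (3:ℝ)/2 ≤ ξ/2 + K + Xf q lam v ξ := by linarith [hξ.1]
    have hprod : (3:ℝ) ≤ (ξ + K) * (ξ/2 + K + Xf q lam v ξ) := by nlinarith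
    rw [hPK]
    nlinarith [hprod]

set_option maxHeartbeats 1600000 in
lemma crude_lower (hN : Nice q lam v w) :
    ∃ A ≥ (1:ℝ), ∀ ξ ≥ A, ξ/8 ≤ Xf q lam v ξ := by
  have hq1 := hN.hq1
  obtain ⟨A₁, hA₁def⟩ : ∃ A₁ : ℝ, A₁ = 8 + 4*(q-1) := ⟨_, rfl⟩
  have hA₁pos : (0:ℝ) < A₁ := by rw [hA₁def]; linarith
  have hXA1 : 0 < Xf q lam v A₁ := hN.Xpos hA₁pos
  obtain ⟨X₀, hX₀def⟩ : ∃ X₀ : ℝ, X₀ = Xf q lam v A₁ := ⟨_, rfl⟩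
  have hX₀ : 0 < X₀ := by rw [hX₀def]; exact hXA1
  obtain ⟨A₂, hA₂def⟩ : ∃ A₂ : ℝ, A₂ = A₁ + 8/X₀ + 1 := ⟨_, rfl⟩
  have hdivpos : 0 < 8/X₀ := by positivity
  have hA₂A₁ : A₁ + 1 ≤ A₂ := by rw [hA₂def]; linarith
  have hA₂12 : (12:ℝ) ≤ A₂ := by rw [hA₂def, hA₁def]; linarith
  have C2a : ∀ a ≥ A₂, ∃ η ∈ Icc a (2*a), η/4 < Xf q lam v η := by
    intro a ha
    by_contra hcon
    push_neg at hcon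
    have ha12 : (12:ℝ) ≤ a := le_trans hA₂12 ha
    have hapos : (0:ℝ) < a := by linarith
    have haA₁ : A₁ ≤ a := by linarith
    have haq : 2*(q-1) ≤ a := by rw [hA₁def] at haA₁; linarith
    -- (i) psi reaches 1
    have hstep1 : ∃ η₁ ∈ Icc a (a + 2*(q-1)), 1 ≤ Pf v w η₁ := by
      by_contra hc1
      push_neg at hc1
      have hgrow := le_of_deriv_nonneg (a := a) (b := a + 2*(q-1)) (by linarith)
          (φ := fun ξ => Pf v w ξ - (1/(2*(q-1))) * ξ)
          (φ' := fun ξ => ((ξ/2 - Xf q lam v ξ) * Pf v w ξ + 1/(2*(q-1)) - (Pf v w ξ)^2)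
            - (1/(2*(q-1))) * 1)
          (fun ξ hξ => (hN.hP (by linarith [hξ.1] : (0:ℝ) < ξ)).sub
            ((hasDerivAt_id ξ).const_mul (1/(2*(q-1)))))
          ?_
      · have hgrow2 : Pf v w a - (1/(2*(q-1))) * a
            ≤ Pf v w (a + 2*(q-1)) - (1/(2*(q-1))) * (a + 2*(q-1)) := hgrow
        have hend := hc1 (a + 2*(q-1)) ⟨by linarith, le_rfl⟩
        have hPa := hN.Ppos hapos
        have h2 : (1/(2*(q-1))) * (a + 2*(q-1)) - (1/(2*(q-1))) * a = 1 := by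
          field_simp; ring
        linarith
      · intro ξ hξ
        beta_reduce
        have hξp : (0:ℝ) < ξ := by linarith [hξ.1]
        have hξ8 : (8:ℝ) ≤ ξ := by linarith [hξ.1]
        have hXle : Xf q lam v ξ ≤ ξ/4 := hcon ξ ⟨hξ.1, by linarith [hξ.2]⟩
        have hPlt : Pf v w ξ < 1 := hc1 ξ hξ
        have hPp := hN.Ppos hξp
        nlinarith [hPp, hPlt, hXle, hξ8]
    obtain ⟨η₁, hη₁I, hη₁⟩ := hstep1
    have hη₁p : (0:ℝ) < η₁ := by linarith [hη₁I.1]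
    have hη₁2a : η₁ ≤ 2*a := by linarith [hη₁I.2]
    -- (ii) invariance of psi >= 1
    have hinv : ∀ ξ ∈ Icc η₁ (2*a), 1 ≤ Pf v w ξ := by
      have hbar := barrier_le (a := η₁) (b := 2*a)
          (φ := fun ξ => 1 - Pf v w ξ)
          (φ' := fun ξ => -((ξ/2 - Xf q lam v ξ) * Pf v w ξ + 1/(2*(q-1)) - (Pf v w ξ)^2))
          (fun ξ hξ => (hN.hP (by linarith [hξ.1] : (0:ℝ) < ξ)).neg.const_add 1)
          (by beta_reduce; linarith)
          ?_
      · intro ξ hξ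
        have h2 : 1 - Pf v w ξ ≤ 0 := hbar ξ hξ
        linarith
      · intro ξ hξ h0
        beta_reduce at h0 ⊢
        have hξp : (0:ℝ) < ξ := by linarith [hξ.1]
        have hξ8 : (8:ℝ) ≤ ξ := by linarith [hξ.1, hη₁I.1]
        have hP1 : Pf v w ξ = 1 := by linarith
        have hXle : Xf q lam v ξ ≤ ξ/4 := hcon ξ ⟨by linarith [hξ.1, hη₁I.1], hξ.2⟩
        have hb : 0 < 1/(2*(q-1)) := by positivity
        rw [hP1]
        nlinarith
    -- (iii) growth of log X
    have hgrow2' := le_of_deriv_nonneg (a := η₁) (b := 2*a) hη₁2a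
        (φ := fun ξ => Real.log (Xf q lam v ξ) - ξ)
        (φ' := fun ξ => (q-1) * Pf v w ξ - 1)
        (fun ξ hξ => (hN.hLogX (by linarith [hξ.1] : (0:ℝ) < ξ)).sub (hasDerivAt_id ξ))
        (by
          intro ξ hξ
          beta_reduce
          have h1 := hinv ξ hξ
          nlinarith [h1])
    have hgrow2 : Real.log (Xf q lam v η₁) - η₁ ≤ Real.log (Xf q lam v (2*a)) - 2*a := hgrow2'
    have hlog1 : Real.log X₀ ≤ Real.log (Xf q lam v η₁) := by
      rw [hX₀def]
      exact Real.log_le_log hXA1 (hN.Xmono hA₁pos (by linarith [hη₁I.1]))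
    have hlogX : Real.log X₀ + a/2 ≤ Real.log (Xf q lam v (2*a)) := by
      have hu : a - 2*(q-1) ≤ 2*a - η₁ := by linarith [hη₁I.2]
      have hu2 : a/2 ≤ a - 2*(q-1) := by linarith
      linarith
    have hXfinal : X₀ * Real.exp (a/2) ≤ Xf q lam v (2*a) := by
      have h1 : Real.exp (Real.log X₀ + a/2) ≤ Real.exp (Real.log (Xf q lam v (2*a))) :=
        Real.exp_le_exp.2 hlogX
      rw [Real.exp_add, Real.exp_log hX₀, Real.exp_log (hN.Xpos (by linarith))] at h1
      exact h1
    have hexp : (1 + a/4)^2 ≤ Real.exp (a/2) := by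
      have h1 := Real.add_one_le_exp (a/4)
      have h2 : Real.exp (a/2) = Real.exp (a/4) * Real.exp (a/4) := by
        rw [← Real.exp_add]
        congr 1
        ring
      nlinarith [Real.exp_pos (a/4)]
    have hup : Xf q lam v (2*a) ≤ a/2 := by
      have := hcon (2*a) ⟨by linarith, le_rfl⟩
      linarith
    have haX : 8 < X₀ * a := by
      have h8 : 8/X₀ + 1 ≤ a := by rw [hA₂def] at ha; linarith
      have h9 : 8/X₀ * X₀ = 8 := by field_simp
      nlinarith [hX₀]
    have e1 : X₀ * (1+a/4)^2 ≤ a/2 :=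
      le_trans (le_trans (mul_le_mul_of_nonneg_left hexp hX₀.le) hXfinal) hup
    have e2 : a/2 < X₀*(1+a/4)^2 := by
      nlinarith [mul_lt_mul_of_pos_right haX (show (0:ℝ) < a/16 by linarith),
        mul_pos hX₀ hapos, hX₀]
    linarith
  refine ⟨2*A₂, by linarith, ?_⟩
  intro ξ hξ
  have hξpos : (0:ℝ) < ξ := by linarith
  obtain ⟨η, hηI, hη⟩ := C2a (ξ/2) (by linarith)
  have hηpos : (0:ℝ) < η := by linarith [hηI.1]
  have hmono := hN.Xmono hηpos (by linarith [hηI.2] : η ≤ ξ)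
  have : ξ/8 ≤ η/4 := by linarith [hηI.1]
  linarith

end Nice

namespace Nice

variable {q lam : ℝ} {v w : ℝ → ℝ}

set_option maxHeartbeats 1600000 in
/-- In the "bad region" `X ≤ (1-ε)ξ`, below the barrier `ψ ≤ p/ξ`, the
Riccati derivative of `ψ` is at least `εβ/4`. -/
lemma rate (hN : Nice q lam v w) {ε ξ : ℝ} (hε : 0 < ε) (hε8 : ε ≤ 1/8)
    (hξ : 16*(q-1)/ε + 2/ε + 2 ≤ ξ)
    (hbad : Xf q lam v ξ ≤ (1-ε)*ξ)
    (hP : Pf v w ξ ≤ ((1+ε)/(q-1))*ξ⁻¹) :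
    ε/(4*(q-1)) ≤ (ξ/2 - Xf q lam v ξ)*(Pf v w ξ) + 1/(2*(q-1)) - (Pf v w ξ)^2 := by
  have hq1 := hN.hq1
  have hqm : (0:ℝ) < q - 1 := by linarith
  obtain ⟨β, hβdef⟩ : ∃ β : ℝ, β = 1/(q-1) := ⟨_, rfl⟩
  have hβpos : 0 < β := by rw [hβdef]; positivity
  have hβq : (q-1)*β = 1 := by rw [hβdef]; field_simp
  have hβ1 : β ≤ 1 := by rw [hβdef, div_le_one hqm]; linarith
  have hp : (1+ε)/(q-1) = (1+ε)*β := by rw [hβdef]; ring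
  have hhalf : 1/(2*(q-1)) = β/2 := by rw [hβdef]; field_simp
  have hκ : ε/(4*(q-1)) = ε*β/4 := by
    rw [hβdef, one_div, ← div_eq_mul_inv, div_div, mul_comm (q-1) 4]
  have ht1 : (0:ℝ) < 16*(q-1)/ε := by positivity
  have ht2 : (0:ℝ) < 2/ε := by positivity
  have hξpos : 0 < ξ := by linarith
  have hεξ : 16*(q-1) ≤ ε*ξ := by
    have h1 : 16*(q-1)/ε ≤ ξ := by linarith
    have h2 : 16*(q-1)/ε*ε = 16*(q-1) := by field_simp
    calc 16*(q-1) = 16*(q-1)/ε*ε := h2.symm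
      _ ≤ ξ*ε := mul_le_mul_of_nonneg_right h1 hε.le
      _ = ε*ξ := mul_comm _ _
  have hP0 : 0 ≤ Pf v w ξ := (hN.Ppos hξpos).le
  rw [hp] at hP
  have hξP : ξ * Pf v w ξ ≤ (1+ε)*β := by
    have h1 := mul_le_mul_of_nonneg_left hP hξpos.le
    have h2 : ξ*((1+ε)*β*ξ⁻¹) = (1+ε)*β := by field_simp
    rw [h2] at h1
    exact h1
  -- k2
  have t1 : (Xf q lam v ξ - (1-ε)*ξ)*(Pf v w ξ) ≤ 0 :=
    mul_nonpos_of_nonpos_of_nonneg (by linarith) hP0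
  have t2 : (ε-1/2)*((1+ε)*β) ≤ (ε-1/2)*(ξ*Pf v w ξ) :=
    mul_le_mul_of_nonpos_left hξP (by linarith)
  have k2 : (ε-1/2)*((1+ε)*β) ≤ (ξ/2 - Xf q lam v ξ)*(Pf v w ξ) := by nlinarith [t1, t2]
  -- k3
  have s0 := mul_le_mul_of_nonneg_right hεξ hβpos.le
  have s0' : 16*(q-1)*β = 16 := by rw [mul_assoc, hβq, mul_one]
  have s1 : 16 ≤ ε*ξ*β := by linarith
  have hβ2 : β*β ≤ 1 := mul_le_one₀ hβ1 hβpos.le hβ1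
  have s3 : ε*(ε*β*β) ≤ (1/8)*(ε*β*β) :=
    mul_le_mul_of_nonneg_right hε8 (by positivity)
  have s4 : Pf v w ξ * 16 ≤ 2*(ε*β*β) := by
    nlinarith [mul_le_mul_of_nonneg_left s1 hP0,
      mul_le_mul_of_nonneg_right hξP (mul_pos hε hβpos).le, s3,
      mul_nonneg (mul_nonneg hε.le hβpos.le) hβpos.le]
  have s5 : Pf v w ξ ≤ ε*β*β/8 := by linarith
  have u1 : ε*β ≤ 1 := by nlinarith
  have s8 : (ε*β*β/8)*(ε*β*β/8) ≤ ε*β/4 := by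
    nlinarith [mul_nonneg hε.le hβpos.le, u1, hβ2, hε.le, hβpos.le,
      mul_le_mul_of_nonneg_left hβ2 (mul_nonneg hε.le hβpos.le)]
  have k3 : (Pf v w ξ)^2 ≤ ε*β/4 := by
    have hA := mul_le_mul_of_nonneg_left s5 hP0
    have hB := mul_le_mul_of_nonneg_right s5 (by positivity : (0:ℝ) ≤ ε*β*β/8)
    nlinarith [hA, hB, s8]
  rw [hhalf, hκ]
  nlinarith [k2, k3, mul_nonneg (mul_nonneg hε.le hε.le) hβpos.le]

set_option maxHeartbeats 1600000 in
/-- If the bad region `X ≤ (1-ε)ξ` persists on `[a,b]`, then from time `a+1` on,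
`ψ` is above the barrier `p/ξ` with `p = (1+ε)/(q-1)`. -/
lemma entry (hN : Nice q lam v w) {ε a b : ℝ} (hε : 0 < ε) (hε8 : ε ≤ 1/8)
    (ha : 16*(q-1)/ε + 2/ε + 2 ≤ a)
    (hbad : ∀ η ∈ Icc a b, Xf q lam v η ≤ (1-ε)*η) :
    ∀ ξ ∈ Icc (a+1) b, ((1+ε)/(q-1))*ξ⁻¹ ≤ Pf v w ξ := by
  have hq1 := hN.hq1
  have hqm : (0:ℝ) < q - 1 := by linarith
  have ht1 : (0:ℝ) < 16*(q-1)/ε := by positivity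
  have ht2 : (0:ℝ) < 2/ε := by positivity
  have hapos : (0:ℝ) < a := by linarith
  have hppos : 0 < (1+ε)/(q-1) := by positivity
  have hκpos : 0 < ε/(4*(q-1)) := by positivity
  intro ξ hξI
  have hab1 : a + 1 ≤ b := le_trans hξI.1 hξI.2
  -- step 1: crossing in [a, a+1]
  have hcross : ∃ η ∈ Icc a (a+1), ((1+ε)/(q-1))*η⁻¹ ≤ Pf v w η := by
    by_contra hc
    push_neg at hc
    have hgrow := le_of_deriv_nonneg (a := a) (b := a+1) (by linarith)
        (φ := fun t => Pf v w t - (ε/(4*(q-1)))*t)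
        (φ' := fun t => ((t/2 - Xf q lam v t) * Pf v w t + 1/(2*(q-1)) - (Pf v w t)^2)
          - (ε/(4*(q-1)))*1)
        (fun t ht => (hN.hP (by linarith [ht.1] : (0:ℝ) < t)).sub
          ((hasDerivAt_id t).const_mul (ε/(4*(q-1)))))
        ?_
    · have hgrow2 : Pf v w a - (ε/(4*(q-1)))*a ≤ Pf v w (a+1) - (ε/(4*(q-1)))*(a+1) := hgrow
      have hPa := (hN.Ppos hapos).le
      have hca := hc (a+1) ⟨by linarith, le_rfl⟩
      -- κ ≥ p/(a+1): κ*(a+1) ≥ 4 ≥ p since a ≥ 16(q-1)/ε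
      have hb1 : 4 ≤ ε/(4*(q-1))*(a+1) := by
        have e : ε/(4*(q-1))*(16*(q-1)/ε) = 4 := by field_simp; ring
        have h5 := mul_le_mul_of_nonneg_left
          (show 16*(q-1)/ε ≤ a+1 by linarith) hκpos.le
        rw [e] at h5
        exact h5
      have hb2 : ((1+ε)/(q-1))*(a+1)⁻¹ ≤ 4*(a+1)⁻¹ := by
        apply mul_le_mul_of_nonneg_right _ (by positivity)
        rw [div_le_iff₀ hqm]
        linarith
      have hb3 : 4*(a+1)⁻¹ ≤ ε/(4*(q-1)) := by
        have h6 := mul_le_mul_of_nonneg_right hb1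
          (by positivity : (0:ℝ) ≤ (a+1)⁻¹)
        have e2 : ε/(4*(q-1))*(a+1)*(a+1)⁻¹ = ε/(4*(q-1)) := by
          field_simp
        rw [e2] at h6
        exact h6
      linarith
    · intro t ht
      beta_reduce
      have hPle : Pf v w t ≤ ((1+ε)/(q-1))*t⁻¹ := (hc t ht).le
      have hr := hN.rate hε hε8 (by linarith [ht.1]) (hbad t ⟨ht.1, by linarith [ht.2]⟩) hPle
      linarith
  obtain ⟨η, hηI, hηP⟩ := hcross
  have hηpos : (0:ℝ) < η := by linarith [hηI.1]
  have hηξ : η ≤ ξ := by linarith [hηI.2, hξI.1]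
  -- step 2: barrier invariance on [η, ξ]
  have hbar := barrier_le (a := η) (b := ξ)
      (φ := fun t => ((1+ε)/(q-1))*t⁻¹ - Pf v w t)
      (φ' := fun t => ((1+ε)/(q-1))*(-(t^2)⁻¹)
        - ((t/2 - Xf q lam v t) * Pf v w t + 1/(2*(q-1)) - (Pf v w t)^2))
      (fun t ht => ((hasDerivAt_inv (ne_of_gt (show (0:ℝ) < t by linarith [ht.1]))).const_mul
          ((1+ε)/(q-1))).sub (hN.hP (show (0:ℝ) < t by linarith [ht.1])))
      (by beta_reduce; linarith)
      ?_
  · have h2 : ((1+ε)/(q-1))*ξ⁻¹ - Pf v w ξ ≤ 0 := hbar ξ ⟨hηξ, le_rfl⟩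
    linarith
  · intro t ht h0
    beta_reduce at h0 ⊢
    have htpos : (0:ℝ) < t := by linarith [ht.1]
    have hPle : Pf v w t ≤ ((1+ε)/(q-1))*t⁻¹ := by linarith
    have hr := hN.rate hε hε8 (by linarith [ht.1, hηI.1])
        (hbad t ⟨by linarith [ht.1, hηI.1], by linarith [ht.2, hξI.2]⟩) hPle
    have hneg : ((1+ε)/(q-1))*(-(t^2)⁻¹) < 0 := by
      have : (0:ℝ) < (t^2)⁻¹ := by positivity
      nlinarith
    linarith
end Nice

namespace Nice

variable {q lam : ℝ} {v w : ℝ → ℝ}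

set_option maxHeartbeats 2000000 in
lemma lower (hN : Nice q lam v w) {ε : ℝ} (hε : 0 < ε) (hε8 : ε ≤ 1/8) :
    ∃ A ≥ (1:ℝ), ∀ ξ ≥ A, (1-2*ε)*ξ ≤ Xf q lam v ξ := by
  have hq1 := hN.hq1
  have hqm : (0:ℝ) < q-1 := by linarith
  obtain ⟨Ξ₀, hΞdef⟩ : ∃ Ξ₀:ℝ, Ξ₀ = 16*(q-1)/ε + 2/ε + 2 := ⟨_, rfl⟩
  have ht1 : (0:ℝ) < 16*(q-1)/ε := by positivity
  have ht2 : (0:ℝ) < 2/ε := by positivity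
  have hΞ2 : 2 ≤ Ξ₀ := by rw [hΞdef]; linarith
  have hΞpos : 0 < Ξ₀ := by linarith
  have hΞε : 2 ≤ ε*Ξ₀ := by
    have h1 : 2/ε ≤ Ξ₀ := by rw [hΞdef]; linarith
    have h2 : 2/ε*ε = 2 := by field_simp
    calc (2:ℝ) = 2/ε*ε := h2.symm
      _ ≤ Ξ₀*ε := mul_le_mul_of_nonneg_right h1 hε.le
      _ = ε*Ξ₀ := mul_comm _ _
  -- there is no bad tail: good points exist beyond any bound
  have hgood : ∀ G₁ ≥ Ξ₀, ∃ G ≥ G₁, (1-ε)*G < Xf q lam v G := by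
    intro G₁ hG₁
    by_contra hcon
    push_neg at hcon
    have hG₁pos : 0 < G₁ := lt_of_lt_of_le hΞpos hG₁
    have hXpos1 : 0 < Xf q lam v (G₁+1) := hN.Xpos (by linarith)
    obtain ⟨T, hTdef⟩ : ∃ T:ℝ,
        T = max ((Real.log ((1-ε)*(G₁+1)) - Real.log (Xf q lam v (G₁+1)))/ε + 1) 1 := ⟨_, rfl⟩
    have hT1 : 1 ≤ T := by rw [hTdef]; exact le_max_right _ _
    have hTD : (Real.log ((1-ε)*(G₁+1)) - Real.log (Xf q lam v (G₁+1)))/ε + 1 ≤ T := by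
      rw [hTdef]; exact le_max_left _ _
    obtain ⟨ξ₁, hξ₁def⟩ : ∃ ξ₁:ℝ, ξ₁ = (G₁+1)*Real.exp T := ⟨_, rfl⟩
    have hξ₁gt : G₁+1 ≤ ξ₁ := by
      rw [hξ₁def]
      nlinarith [Real.add_one_le_exp T, hG₁pos]
    have hξ₁pos : 0 < ξ₁ := by linarith
    have hψ := hN.entry (b := ξ₁) hε hε8 (by rw [hΞdef] at hG₁; linarith)
        (fun η hη => hcon η hη.1)
    have hgrow := le_of_deriv_nonneg (a := G₁+1) (b := ξ₁) hξ₁gt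
        (φ := fun t => Real.log (Xf q lam v t) - (1+ε)*Real.log t)
        (φ' := fun t => (q-1)*Pf v w t - (1+ε)*t⁻¹)
        (fun t ht => (hN.hLogX (show (0:ℝ) < t by linarith [ht.1])).sub
          ((Real.hasDerivAt_log (ne_of_gt (show (0:ℝ) < t by linarith [ht.1]))).const_mul (1+ε)))
        ?_
    · have hgrow2 : Real.log (Xf q lam v (G₁+1)) - (1+ε)*Real.log (G₁+1)
          ≤ Real.log (Xf q lam v ξ₁) - (1+ε)*Real.log ξ₁ := hgrow
      have hXξ₁ : Xf q lam v ξ₁ ≤ (1-ε)*ξ₁ := hcon ξ₁ (by linarith)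
      have hXξ₁pos : 0 < Xf q lam v ξ₁ := hN.Xpos hξ₁pos
      have hlogup : Real.log (Xf q lam v ξ₁) ≤ Real.log (1-ε) + Real.log ξ₁ := by
        have h3 := Real.log_le_log hXξ₁pos hXξ₁
        rwa [Real.log_mul (by linarith : (1-ε) ≠ 0) (ne_of_gt hξ₁pos)] at h3
      have hlogξ₁ : Real.log ξ₁ = Real.log (G₁+1) + T := by
        rw [hξ₁def, Real.log_mul (by linarith) (ne_of_gt (Real.exp_pos T)), Real.log_exp]
      have hlogprod : Real.log ((1-ε)*(G₁+1))
          = Real.log (1-ε) + Real.log (G₁+1) :=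
        Real.log_mul (by linarith) (by linarith)
      have hεT : Real.log ((1-ε)*(G₁+1)) - Real.log (Xf q lam v (G₁+1)) + ε ≤ ε*T := by
        have h4 := mul_le_mul_of_nonneg_left hTD hε.le
        have e : ε*((Real.log ((1-ε)*(G₁+1)) - Real.log (Xf q lam v (G₁+1)))/ε + 1)
            = Real.log ((1-ε)*(G₁+1)) - Real.log (Xf q lam v (G₁+1)) + ε := by
          field_simp
        rw [e] at h4
        exact h4
      rw [hlogξ₁] at hgrow2 hlogup
      rw [hlogprod] at hεT
      nlinarith [hgrow2, hlogup, hεT, hε]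
    · intro t ht
      beta_reduce
      have htpos : (0:ℝ) < t := by linarith [ht.1]
      have hψt := hψ t ht
      have h1 := mul_le_mul_of_nonneg_left hψt (by linarith : (0:ℝ) ≤ q-1)
      have h2 : (q-1)*(((1+ε)/(q-1))*t⁻¹) = (1+ε)*t⁻¹ := by field_simp
      rw [h2] at h1
      linarith
  -- patching from the last good point
  obtain ⟨G₀, hG₀Ξ, hG₀good⟩ := hgood Ξ₀ le_rfl
  have hG₀pos : 0 < G₀ := lt_of_lt_of_le hΞpos hG₀Ξ
  refine ⟨G₀, by linarith, ?_⟩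
  intro ξ hξG
  have hξpos : 0 < ξ := by linarith
  have hεξ2 : 2 ≤ ε*ξ := by
    have := mul_le_mul_of_nonneg_left (show Ξ₀ ≤ ξ by linarith) hε.le
    linarith
  by_cases hcase : (1-ε)*ξ ≤ Xf q lam v ξ
  · nlinarith [hcase, mul_nonneg hε.le hξpos.le]
  push_neg at hcase
  have hXcont : ContinuousOn (fun η => Xf q lam v η - (1-ε)*η) (Icc G₀ ξ) := by
    intro η hη
    have hηpos : (0:ℝ) < η := lt_of_lt_of_le hG₀pos hη.1
    exact (((hN.hX hηpos).continuousAt).sub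
      ((continuous_const.mul continuous_id).continuousAt)).continuousWithinAt
  have hSne : G₀ ∈ Icc G₀ ξ ∩ (fun η => Xf q lam v η - (1-ε)*η) ⁻¹' (Ici 0) :=
    ⟨⟨le_rfl, hξG⟩, by simp only [mem_preimage, mem_Ici]; linarith [hG₀good]⟩
  have hScl : IsClosed (Icc G₀ ξ ∩ (fun η => Xf q lam v η - (1-ε)*η) ⁻¹' (Ici 0)) :=
    hXcont.preimage_isClosed_of_isClosed isClosed_Icc isClosed_Ici
  have hbdd : BddAbove (Icc G₀ ξ ∩ (fun η => Xf q lam v η - (1-ε)*η) ⁻¹' (Ici 0)) :=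
    ⟨ξ, fun η hη => hη.1.2⟩
  obtain ⟨hstarI, hstarmem⟩ := hScl.csSup_mem ⟨G₀, hSne⟩ hbdd
  obtain ⟨a', ha'def⟩ : ∃ a':ℝ,
      a' = sSup (Icc G₀ ξ ∩ (fun η => Xf q lam v η - (1-ε)*η) ⁻¹' (Ici 0)) := ⟨_, rfl⟩
  rw [← ha'def] at hstarI hstarmem
  have hstar1 : (1-ε)*a' ≤ Xf q lam v a' := by
    simp only [mem_preimage, mem_Ici] at hstarmem
    linarith
  have hstarpos : 0 < a' := lt_of_lt_of_le hG₀pos hstarI.1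
  have hstarlt : a' < ξ := by
    rcases lt_or_eq_of_le hstarI.2 with h|h
    · exact h
    · rw [h] at hstar1; linarith
  have hbadr : ∀ η ∈ Ioc a' ξ, Xf q lam v η ≤ (1-ε)*η := by
    intro η hη
    by_contra hle
    push_neg at hle
    have hmem : η ∈ Icc G₀ ξ ∩ (fun η => Xf q lam v η - (1-ε)*η) ⁻¹' (Ici 0) :=
      ⟨⟨le_trans hstarI.1 hη.1.le, hη.2⟩, by simp only [mem_preimage, mem_Ici]; linarith⟩
    have := le_csSup hbdd hmem
    rw [← ha'def] at this
    exact absurd this (not_le.2 hη.1)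
  have hbadstar : Xf q lam v a' ≤ (1-ε)*a' := by
    have hcont : ContinuousAt (fun η => Xf q lam v η - (1-ε)*η) a' :=
      ((hN.hX hstarpos).continuousAt).sub ((continuous_const.mul continuous_id).continuousAt)
    have hlim : Xf q lam v a' - (1-ε)*a' ≤ 0 := by
      refine le_of_tendsto (hcont.tendsto.mono_left (nhdsWithin_le_nhds (s := Ioi a'))) ?_
      filter_upwards [Ioc_mem_nhdsGT_of_mem (⟨le_rfl, hstarlt⟩ : a' ∈ Ico a' ξ)] with η hη
      have := hbadr η hη
      beta_reduce
      linarith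
    linarith
  have hbadIcc : ∀ η ∈ Icc a' ξ, Xf q lam v η ≤ (1-ε)*η := by
    intro η hη
    rcases eq_or_lt_of_le hη.1 with h|h
    · rw [← h]; exact hbadstar
    · exact hbadr η ⟨h, hη.2⟩
  have hstarΞ : 16*(q-1)/ε + 2/ε + 2 ≤ a' := by
    rw [hΞdef] at hG₀Ξ
    linarith [hstarI.1]
  have hεa : 2 ≤ ε*a' := by
    have := mul_le_mul_of_nonneg_left (show Ξ₀ ≤ a' by linarith [hstarI.1]) hε.le
    linarith
  by_cases hc2 : ξ ≤ a' + 1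
  · have hXm := hN.Xmono hstarpos hstarI.2
    have hkey := mul_le_mul_of_nonneg_left (show ξ-1 ≤ a' by linarith)
      (show (0:ℝ) ≤ 1-ε by linarith)
    nlinarith [hstar1, hXm, hεξ2, hkey]
  · push_neg at hc2
    have hψ := hN.entry hε hε8 hstarΞ hbadIcc
    have hgrow := le_of_deriv_nonneg (a := a'+1) (b := ξ) hc2.le
        (φ := fun t => Real.log (Xf q lam v t) - Real.log t)
        (φ' := fun t => (q-1)*Pf v w t - t⁻¹)
        (fun t ht => (hN.hLogX (show (0:ℝ) < t by linarith [ht.1])).sub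
          (Real.hasDerivAt_log (ne_of_gt (show (0:ℝ) < t by linarith [ht.1]))))
        ?_
    · have hgrow2 : Real.log (Xf q lam v (a'+1)) - Real.log (a'+1)
          ≤ Real.log (Xf q lam v ξ) - Real.log ξ := hgrow
      have hXa1pos : 0 < Xf q lam v (a'+1) := hN.Xpos (by linarith)
      have hXξpos : 0 < Xf q lam v ξ := hN.Xpos hξpos
      have ha1pos : (0:ℝ) < a'+1 := by linarith
      have h1 : Xf q lam v (a'+1)/(a'+1) ≤ Xf q lam v ξ/ξ := by
        have e1 : Real.log (Xf q lam v (a'+1)/(a'+1)) ≤ Real.log (Xf q lam v ξ/ξ) := by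
          rw [Real.log_div (ne_of_gt hXa1pos) (ne_of_gt ha1pos),
            Real.log_div (ne_of_gt hXξpos) (ne_of_gt hξpos)]
          linarith
        exact (Real.log_le_log_iff (by positivity) (by positivity)).mp e1
      have hXm := hN.Xmono hstarpos (by linarith : a' ≤ a'+1)
      have h2 : (1-2*ε) ≤ Xf q lam v (a'+1)/(a'+1) := by
        rw [le_div_iff₀ ha1pos]
        nlinarith [hstar1, hXm, hεa]
      have h3 : (1-2*ε) ≤ Xf q lam v ξ/ξ := le_trans h2 h1
      rw [le_div_iff₀ hξpos] at h3
      exact h3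
    · intro t ht
      beta_reduce
      have htpos : (0:ℝ) < t := by linarith [ht.1]
      have hψt := hψ t ht
      have h1 := mul_le_mul_of_nonneg_left hψt (by linarith : (0:ℝ) ≤ q-1)
      have h2 : (q-1)*(((1+ε)/(q-1))*t⁻¹) = (1+ε)*t⁻¹ := by field_simp
      rw [h2] at h1
      have h5 : (0:ℝ) ≤ t⁻¹ := by positivity
      nlinarith [h1, h5, mul_nonneg hε.le h5]

end Nice

namespace Nice

variable {q lam : ℝ} {v w : ℝ → ℝ}

set_option maxHeartbeats 2000000 in
lemma psi_small (hN : Nice q lam v w) :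
    ∃ A ≥ (1:ℝ), ∀ ξ ≥ A, Pf v w ξ ≤ (2/(q-1))*ξ⁻¹ := by
  have hq1 := hN.hq1
  have hqm : (0:ℝ) < q-1 := by linarith
  obtain ⟨A₃, hA₃1, hA₃⟩ := hN.lower (by norm_num : (0:ℝ) < 1/16) (by norm_num)
  obtain ⟨K, hK1, hKpsi⟩ := hN.psi_upper
  obtain ⟨a, hadef⟩ : ∃ a:ℝ, a = A₃ + K + 512*(q-1) + 3 := ⟨_, rfl⟩
  have haA₃ : A₃ ≤ a := by rw [hadef]; linarith
  have haK : K ≤ a := by rw [hadef]; linarith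
  have ha3 : (3:ℝ) ≤ a := by rw [hadef]; linarith
  have ha512 : 512*(q-1) ≤ a := by rw [hadef]; linarith
  have hapos : (0:ℝ) < a := by linarith
  -- X ≥ (7/8) ξ for ξ ≥ a
  have hX78 : ∀ ξ, a ≤ ξ → (7/8)*ξ ≤ Xf q lam v ξ := by
    intro ξ hξ
    have := hA₃ ξ (by linarith)
    linarith
  -- decay estimate for the Riccati derivative
  have hdecay : ∀ t, a ≤ t → (2/(q-1))*t⁻¹ ≤ Pf v w t →
      (t/2 - Xf q lam v t)*(Pf v w t) + 1/(2*(q-1)) - (Pf v w t)^2 ≤ -(t/8)*Pf v w t := by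
    intro t hat hPt
    have htpos : (0:ℝ) < t := by linarith
    have hP0 : 0 ≤ Pf v w t := (hN.Ppos htpos).le
    have hXt := hX78 t hat
    have h1 : (t/2 - Xf q lam v t) ≤ -(3/8)*t := by linarith
    have h2 : (t/2 - Xf q lam v t)*(Pf v w t) ≤ (-(3/8)*t)*(Pf v w t) :=
      mul_le_mul_of_nonneg_right h1 hP0
    have h3 : 2/(q-1) ≤ t*Pf v w t := by
      have h4 := mul_le_mul_of_nonneg_left hPt htpos.le
      have h5 : t*((2/(q-1))*t⁻¹) = 2/(q-1) := by
        rw [mul_comm, mul_assoc, inv_mul_cancel₀ (ne_of_gt htpos), mul_one]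
      rw [h5] at h4
      exact h4
    have h6 : (2:ℝ)/(q-1) = 4*(1/(2*(q-1))) := by
      rw [mul_one_div, div_eq_div_iff (ne_of_gt hqm) (by positivity : (2*(q-1)) ≠ 0)]
      ring
    have h7 : (Pf v w t)^2 ≥ 0 := sq_nonneg _
    nlinarith [h2, h3, h7, h6]
  -- crossing below the barrier 2β/ξ
  have hcross : ∃ η ∈ Icc a (2*a+K), Pf v w η < (2/(q-1))*η⁻¹ := by
    by_contra hc
    push_neg at hc
    obtain ⟨c, hcdef⟩ : ∃ c:ℝ, c = 2*a + K := ⟨_, rfl⟩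
    have hac : a ≤ c := by rw [hcdef]; linarith
    have hcpos : 0 < c := by linarith
    -- monotonicity of -(Pf t * exp (a/8*t))
    have hder : ∀ t ∈ Icc a c, HasDerivAt (fun t => -(Pf v w t * Real.exp (a/8*t)))
        (-(((t/2 - Xf q lam v t)*(Pf v w t) + 1/(2*(q-1)) - (Pf v w t)^2)
          * Real.exp (a/8*t) + Pf v w t * (Real.exp (a/8*t) * (a/8)))) t := by
      intro t ht
      have htpos : (0:ℝ) < t := by linarith [ht.1]
      have hlin : HasDerivAt (fun x : ℝ => a/8*x) (a/8) t := by
        simpa using (hasDerivAt_id t).const_mul (a/8)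
      exact ((hN.hP htpos).mul hlin.exp).neg
    have hmono := le_of_deriv_nonneg (a := a) (b := c) hac
        (φ := fun t => -(Pf v w t * Real.exp (a/8*t)))
        (φ' := fun t => -(((t/2 - Xf q lam v t)*(Pf v w t) + 1/(2*(q-1)) - (Pf v w t)^2)
          * Real.exp (a/8*t) + Pf v w t * (Real.exp (a/8*t) * (a/8))))
        hder
        ?_
    · have hm2 : -(Pf v w a * Real.exp (a/8*a)) ≤ -(Pf v w c * Real.exp (a/8*c)) := hmono
      have hPa : Pf v w a ≤ a + K := hKpsi a (by linarith)
      have hPc : (2/(q-1))*c⁻¹ ≤ Pf v w c := hc c ⟨hac, by rw [hcdef]⟩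
      have hEc : (0:ℝ) < Real.exp (a/8*c) := Real.exp_pos _
      have hEa : (0:ℝ) < Real.exp (a/8*a) := Real.exp_pos _
      -- Pf c * exp(a/8*c) ≤ (a+K) * exp(a/8*a)
      have hm3 : Pf v w c * Real.exp (a/8*c) ≤ (a+K) * Real.exp (a/8*a) := by
        have := mul_le_mul_of_nonneg_right hPa hEa.le
        linarith
      -- exp lower bound: exp x ≥ x^2/4 for x ≥ 0, x := a/8*(c-a)
      have hexpgrow : Real.exp (a/8*c) = Real.exp (a/8*a) * Real.exp (a/8*(c-a)) := by
        rw [← Real.exp_add]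
        congr 1
        ring
      have hx0 : (0:ℝ) ≤ a/8*(c-a) := by
        have : 0 ≤ c - a := by linarith
        positivity
      have hexpsq : (a/8*(c-a))^2/4 ≤ Real.exp (a/8*(c-a)) := by
        have h1 := Real.add_one_le_exp (a/8*(c-a)/2)
        have h2 : Real.exp (a/8*(c-a)) = Real.exp (a/8*(c-a)/2) * Real.exp (a/8*(c-a)/2) := by
          rw [← Real.exp_add]; congr 1; ring
        nlinarith [Real.exp_pos (a/8*(c-a)/2), hx0]
      -- combine: (2/(q-1)) * c⁻¹ * exp(a/8*(c-a)) ≤ (a+K)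
      have hcomb : (2/(q-1))*c⁻¹ * Real.exp (a/8*(c-a)) ≤ (a+K) := by
        have h1 : (2/(q-1))*c⁻¹ * Real.exp (a/8*c) ≤ (a+K) * Real.exp (a/8*a) := by
          calc (2/(q-1))*c⁻¹ * Real.exp (a/8*c)
              ≤ Pf v w c * Real.exp (a/8*c) := mul_le_mul_of_nonneg_right hPc hEc.le
            _ ≤ (a+K) * Real.exp (a/8*a) := hm3
        rw [hexpgrow] at h1
        have h2 := mul_le_mul_of_nonneg_right h1 (by positivity : (0:ℝ) ≤ (Real.exp (a/8*a))⁻¹)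
        have e1 : (2/(q-1))*c⁻¹ * (Real.exp (a/8*a) * Real.exp (a/8*(c-a)))
            * (Real.exp (a/8*a))⁻¹ = (2/(q-1))*c⁻¹ * Real.exp (a/8*(c-a)) := by
          field_simp
        have e2 : (a+K) * Real.exp (a/8*a) * (Real.exp (a/8*a))⁻¹ = a+K := by
          field_simp
        rw [e1, e2] at h2
        exact h2
      -- now derive numeric contradiction
      have hca : c - a = a + K := by rw [hcdef]; ring
      have hc3a : c ≤ 3*a := by rw [hcdef]; linarith
      have hβa : 512 ≤ a*a/(q-1) := by
        have h1 : 512*(q-1) ≤ a := ha512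
        have h2 : 512*(q-1)*a ≤ a*a := mul_le_mul_of_nonneg_right h1 hapos.le
        rw [le_div_iff₀ hqm]
        nlinarith [h2, hapos]
      -- lower bound the lhs of hcomb
      have hlow : (2/(q-1))*c⁻¹ * ((a/8*(a+K))^2/4) ≤ (a+K) := by
        calc (2/(q-1))*c⁻¹ * ((a/8*(a+K))^2/4)
            ≤ (2/(q-1))*c⁻¹ * Real.exp (a/8*(c-a)) := by
              apply mul_le_mul_of_nonneg_left _ (by positivity)
              rw [hca] at hexpsq ⊢
              exact hexpsq
          _ ≤ (a+K) := hcomb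
      have hcinv : c⁻¹ ≥ (3*a)⁻¹ := by
        apply inv_anti₀ (by linarith) hc3a
      have haK0 : (0:ℝ) < a + K := by linarith
      -- (2/(q-1)) * (3a)⁻¹ * a²(a+K)²/256 ≤ a+K  ⇒ contradiction
      have hlow2 : (2/(q-1))*(3*a)⁻¹ * ((a/8*(a+K))^2/4) ≤ (a+K) := by
        refine le_trans (mul_le_mul_of_nonneg_right
          (mul_le_mul_of_nonneg_left hcinv (by positivity)) (by positivity)) hlow
      have hexpand : (2/(q-1))*(3*a)⁻¹ * ((a/8*(a+K))^2/4)
          = (a*(a+K)/(q-1)) * ((a+K)/384) := by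
        field_simp
        ring
      rw [hexpand] at hlow2
      have hge : 512 ≤ a*(a+K)/(q-1) := by
        have h1 : a*a ≤ a*(a+K) := mul_le_mul_of_nonneg_left (by linarith) hapos.le
        have h2 : a*a/(q-1) ≤ a*(a+K)/(q-1) := by
          gcongr
        linarith
      have hmul := mul_le_mul_of_nonneg_right hge
        (by positivity : (0:ℝ) ≤ (a+K)/384)
      nlinarith [haK0, hmul, hlow2]
    · intro t ht
      beta_reduce
      have htpos : (0:ℝ) < t := by linarith [ht.1]
      have ht' : t ∈ Icc a (2*a+K) := by rw [← hcdef]; exact ht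
      have hPt : (2/(q-1))*t⁻¹ ≤ Pf v w t := hc t ht'
      have hd := hdecay t ht.1 hPt
      have hE : (0:ℝ) < Real.exp (a/8*t) := Real.exp_pos _
      have hP0 : 0 ≤ Pf v w t := (hN.Ppos htpos).le
      have h1 : ((t/2 - Xf q lam v t)*(Pf v w t) + 1/(2*(q-1)) - (Pf v w t)^2)
            * Real.exp (a/8*t) + Pf v w t * (Real.exp (a/8*t) * (a/8)) ≤ 0 := by
        have h2 : ((t/2 - Xf q lam v t)*(Pf v w t) + 1/(2*(q-1)) - (Pf v w t)^2)
            * Real.exp (a/8*t) ≤ (-(t/8)*Pf v w t) * Real.exp (a/8*t) :=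
          mul_le_mul_of_nonneg_right hd hE.le
        have h3 : (-(t/8)*Pf v w t) * Real.exp (a/8*t)
            + Pf v w t * (Real.exp (a/8*t) * (a/8)) ≤ 0 := by
          have h4 : (-(t/8)*Pf v w t) * Real.exp (a/8*t)
              + Pf v w t * (Real.exp (a/8*t) * (a/8))
              = -((t-a)/8) * Pf v w t * Real.exp (a/8*t) := by ring
          rw [h4]
          have h5 : (0:ℝ) ≤ (t-a)/8 := by linarith [ht.1]
          have := mul_nonneg (mul_nonneg h5 hP0) hE.le
          nlinarith [this]
        linarith
      linarith
  -- invariance of the barrier from the crossing point on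
  obtain ⟨η, hηI, hηP⟩ := hcross
  have hηpos : (0:ℝ) < η := by linarith [hηI.1]
  refine ⟨2*a+K, by linarith, ?_⟩
  intro ξ hξ
  have hηξ : η ≤ ξ := le_trans hηI.2 hξ
  have hbar := barrier_le (a := η) (b := ξ)
      (φ := fun t => Pf v w t - (2/(q-1))*t⁻¹)
      (φ' := fun t => ((t/2 - Xf q lam v t)*(Pf v w t) + 1/(2*(q-1)) - (Pf v w t)^2)
        - (2/(q-1))*(-(t^2)⁻¹))
      (fun t ht => (hN.hP (show (0:ℝ) < t by linarith [ht.1])).sub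
        ((hasDerivAt_inv (ne_of_gt (show (0:ℝ) < t by linarith [ht.1]))).const_mul (2/(q-1))))
      (by beta_reduce; linarith)
      ?_
  · have h2 : Pf v w ξ - (2/(q-1))*ξ⁻¹ ≤ 0 := hbar ξ ⟨hηξ, le_rfl⟩
    linarith
  · intro t ht h0
    beta_reduce at h0 ⊢
    have htpos : (0:ℝ) < t := by linarith [ht.1]
    have hta : a ≤ t := by linarith [ht.1, hηI.1]
    have hPt : (2/(q-1))*t⁻¹ ≤ Pf v w t := by linarith
    have hd := hdecay t hta hPt
    -- Pf t = 2β/t, so -(t/8)*Pf = -β/4 where β = 2/(q-1) … bound numerically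
    have hPeq : Pf v w t = (2/(q-1))*t⁻¹ := by linarith
    have h3 : -(t/8)*Pf v w t = -(2/(q-1))/8 := by
      rw [hPeq]
      field_simp
    have h4 : (2/(q-1))*(t^2)⁻¹ ≤ (2/(q-1))/9 := by
      have h5 : (9:ℝ) ≤ t^2 := by nlinarith [hta, ha3]
      have h6 : (t^2)⁻¹ ≤ 9⁻¹ := by
        apply inv_anti₀ (by norm_num) h5
      have := mul_le_mul_of_nonneg_left h6 (by positivity : (0:ℝ) ≤ 2/(q-1))
      calc (2/(q-1))*(t^2)⁻¹ ≤ (2/(q-1))*9⁻¹ := this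
        _ = (2/(q-1))/9 := by ring
    have h7 : (0:ℝ) < 2/(q-1) := by positivity
    nlinarith [hd, h3, h4, h7]

end Nice

namespace Nice

variable {q lam : ℝ} {v w : ℝ → ℝ}

set_option maxHeartbeats 1600000 in
lemma urate (hN : Nice q lam v w) {ε ξ : ℝ} (hε : 0 < ε) (hε8 : ε ≤ 1/8)
    (hξpos : 0 < ξ)
    (hbad : (1+ε)*ξ ≤ Xf q lam v ξ)
    (hP : ((1-ε)/(q-1))*ξ⁻¹ ≤ Pf v w ξ) :
    (ξ/2 - Xf q lam v ξ)*(Pf v w ξ) + 1/(2*(q-1)) - (Pf v w ξ)^2 ≤ -(ε/(4*(q-1))) := by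
  have hq1 := hN.hq1
  have hqm : (0:ℝ) < q - 1 := by linarith
  obtain ⟨β, hβdef⟩ : ∃ β : ℝ, β = 1/(q-1) := ⟨_, rfl⟩
  have hβpos : 0 < β := by rw [hβdef]; positivity
  have hβ1 : β ≤ 1 := by rw [hβdef, div_le_one hqm]; linarith
  have hp : (1-ε)/(q-1) = (1-ε)*β := by rw [hβdef]; ring
  have hhalf : 1/(2*(q-1)) = β/2 := by rw [hβdef]; field_simp
  have hκ : ε/(4*(q-1)) = ε*β/4 := by
    rw [hβdef, one_div, ← div_eq_mul_inv, div_div, mul_comm (q-1) 4]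
  have hP0 : 0 ≤ Pf v w ξ := (hN.Ppos hξpos).le
  rw [hp] at hP
  have hξP : (1-ε)*β ≤ ξ * Pf v w ξ := by
    have h1 := mul_le_mul_of_nonneg_left hP hξpos.le
    have h2 : ξ*((1-ε)*β*ξ⁻¹) = (1-ε)*β := by field_simp
    rw [h2] at h1
    exact h1
  have hco : ξ/2 - Xf q lam v ξ ≤ -((1/2+ε)*ξ) := by linarith
  have h3 : (ξ/2 - Xf q lam v ξ)*(Pf v w ξ) ≤ (-((1/2+ε)*ξ))*(Pf v w ξ) :=
    mul_le_mul_of_nonneg_right hco hP0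
  have h4 : (-(1/2+ε))*(ξ*Pf v w ξ) ≤ (-(1/2+ε))*((1-ε)*β) :=
    mul_le_mul_of_nonpos_left hξP (by linarith)
  have h5 : (Pf v w ξ)^2 ≥ 0 := sq_nonneg _
  rw [hhalf, hκ]
  nlinarith [h3, h4, h5, mul_nonneg (mul_nonneg hε.le hε.le) hβpos.le]

set_option maxHeartbeats 1600000 in
lemma uentry (hN : Nice q lam v w) {ε a b A₄ : ℝ} (hε : 0 < ε) (hε8 : ε ≤ 1/8)
    (hA₄ : ∀ ξ ≥ A₄, Pf v w ξ ≤ (2/(q-1))*ξ⁻¹)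
    (haA : A₄ ≤ a) (haε : 8/ε ≤ a) (ha1 : 1 ≤ a)
    (hbad : ∀ η ∈ Icc a b, (1+ε)*η ≤ Xf q lam v η) :
    ∀ ξ ∈ Icc (a+1) b, Pf v w ξ ≤ ((1-ε)/(q-1))*ξ⁻¹ := by
  have hq1 := hN.hq1
  have hqm : (0:ℝ) < q - 1 := by linarith
  have hapos : (0:ℝ) < a := by linarith
  have hκpos : 0 < ε/(4*(q-1)) := by positivity
  intro ξ hξI
  -- crossing in [a, a+1]
  have hcross : ∃ η ∈ Icc a (a+1), Pf v w η ≤ ((1-ε)/(q-1))*η⁻¹ := by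
    by_contra hc
    push_neg at hc
    have hgrow := le_of_deriv_nonneg (a := a) (b := a+1) (by linarith)
        (φ := fun t => -(Pf v w t) - (ε/(4*(q-1)))*t)
        (φ' := fun t => -((t/2 - Xf q lam v t) * Pf v w t + 1/(2*(q-1)) - (Pf v w t)^2)
          - (ε/(4*(q-1)))*1)
        (fun t ht => ((hN.hP (show (0:ℝ) < t by linarith [ht.1])).neg).sub
          ((hasDerivAt_id t).const_mul (ε/(4*(q-1)))))
        ?_
    · have hgrow2 : -(Pf v w a) - (ε/(4*(q-1)))*a
          ≤ -(Pf v w (a+1)) - (ε/(4*(q-1)))*(a+1) := hgrow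
      have hPa : Pf v w a ≤ (2/(q-1))*a⁻¹ := hA₄ a haA
      have hP1pos := hN.Ppos (show (0:ℝ) < a+1 by linarith)
      -- 2β/a ≤ βε/4 i.e. (2/(q-1))*a⁻¹ ≤ ε/(4*(q-1))  since a ≥ 8/ε
      have hainv : a⁻¹ ≤ ε/8 := by
        have h0 := inv_anti₀ (by positivity : (0:ℝ) < 8/ε) haε
        rwa [show (8/ε)⁻¹ = ε/8 by field_simp] at h0
      have hsmall : (2/(q-1))*a⁻¹ ≤ ε/(4*(q-1)) := by
        have h1 := mul_le_mul_of_nonneg_left hainv (by positivity : (0:ℝ) ≤ 2/(q-1))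
        have h2 : (2/(q-1))*(ε/8) = ε/(4*(q-1)) := by
          field_simp
          ring
        rw [h2] at h1
        exact h1
      nlinarith [hgrow2, hPa, hP1pos, hsmall, hκpos]
    · intro t ht
      beta_reduce
      have htpos : (0:ℝ) < t := by linarith [ht.1]
      have hPge : ((1-ε)/(q-1))*t⁻¹ ≤ Pf v w t := (hc t ht).le
      have hr := hN.urate hε hε8 htpos
        (hbad t ⟨ht.1, by linarith [ht.2, hξI.1, hξI.2]⟩) hPge
      linarith
  obtain ⟨η, hηI, hηP⟩ := hcross
  have hηpos : (0:ℝ) < η := by linarith [hηI.1]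
  have hηξ : η ≤ ξ := by linarith [hηI.2, hξI.1]
  have hbar := barrier_le (a := η) (b := ξ)
      (φ := fun t => Pf v w t - ((1-ε)/(q-1))*t⁻¹)
      (φ' := fun t => ((t/2 - Xf q lam v t) * Pf v w t + 1/(2*(q-1)) - (Pf v w t)^2)
        - ((1-ε)/(q-1))*(-(t^2)⁻¹))
      (fun t ht => (hN.hP (show (0:ℝ) < t by linarith [ht.1])).sub
        ((hasDerivAt_inv (ne_of_gt (show (0:ℝ) < t by linarith [ht.1]))).const_mul
          ((1-ε)/(q-1))))
      (by beta_reduce; linarith)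
      ?_
  · have h2 : Pf v w ξ - ((1-ε)/(q-1))*ξ⁻¹ ≤ 0 := hbar ξ ⟨hηξ, le_rfl⟩
    linarith
  · intro t ht h0
    beta_reduce at h0 ⊢
    have htpos : (0:ℝ) < t := by linarith [ht.1]
    have hta : a ≤ t := by linarith [ht.1, hηI.1]
    have hPge : ((1-ε)/(q-1))*t⁻¹ ≤ Pf v w t := by linarith
    have hr := hN.urate hε hε8 htpos
        (hbad t ⟨hta, by linarith [ht.2, hξI.2]⟩) hPge
    -- ((1-ε)/(q-1))*(t²)⁻¹ < ε/(4(q-1)) since t ≥ 8/ε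
    have ht8 : 8/ε ≤ t := by linarith
    have hsq1 : t*(8/ε) ≤ t*t := mul_le_mul_of_nonneg_left ht8 htpos.le
    have hsq2 : (8/ε) ≤ t*(8/ε) := by
      nlinarith [div_pos (by norm_num : (0:ℝ) < 8) hε, hta, ha1]
    have he48 : 4/ε ≤ 8/ε := by
      rw [div_le_div_iff₀ hε hε]
      nlinarith [hε]
    have htsq : 4/ε ≤ t^2 := by nlinarith [hsq1, hsq2, he48]
    have hlt : ((1-ε)/(q-1))*(t^2)⁻¹ < ε/(4*(q-1)) := by
      have h6 : (t^2)⁻¹ ≤ (4/ε)⁻¹ := inv_anti₀ (by positivity) htsq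
      have h7 : (4/ε)⁻¹ = ε/4 := by field_simp
      have h8 : ((1-ε)/(q-1))*(t^2)⁻¹ ≤ ((1-ε)/(q-1))*(ε/4) := by
        apply mul_le_mul_of_nonneg_left _ (div_nonneg (by linarith) (by linarith))
        rw [← h7]
        exact h6
      have h9 : ((1-ε)/(q-1))*(ε/4) < ε/(4*(q-1)) := by
        rw [div_mul_div_comm, div_lt_div_iff₀ (by positivity) (by positivity)]
        nlinarith [hε, hqm, mul_pos (mul_pos hε hε) hqm]
      linarith
    linarith
end Nice

namespace Nice

variable {q lam : ℝ} {v w : ℝ → ℝ}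

set_option maxHeartbeats 2000000 in
lemma upper (hN : Nice q lam v w) {ε : ℝ} (hε : 0 < ε) (hε8 : ε ≤ 1/8) :
    ∃ A ≥ (1:ℝ), ∀ ξ ≥ A, Xf q lam v ξ ≤ (1+2*ε)*ξ := by
  have hq1 := hN.hq1
  have hqm : (0:ℝ) < q-1 := by linarith
  obtain ⟨A₄, hA₄1, hA₄⟩ := hN.psi_small
  obtain ⟨Au, hAudef⟩ : ∃ Au:ℝ, Au = A₄ + 8/ε + 2/ε + 1 := ⟨_, rfl⟩
  have h8ε : (0:ℝ) < 8/ε := by positivity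
  have h2ε : (0:ℝ) < 2/ε := by positivity
  have hAuA₄ : A₄ ≤ Au := by rw [hAudef]; linarith
  have hAu8 : 8/ε ≤ Au := by rw [hAudef]; linarith
  have hAu2 : 2/ε ≤ Au := by rw [hAudef]; linarith
  have hAu1 : (1:ℝ) ≤ Au := by rw [hAudef]; linarith
  have hAupos : (0:ℝ) < Au := by linarith
  -- no bad tail
  have hgood : ∀ G₁ ≥ Au, ∃ G ≥ G₁, Xf q lam v G < (1+ε)*G := by
    intro G₁ hG₁
    by_contra hcon
    push_neg at hcon
    have hG₁pos : 0 < G₁ := lt_of_lt_of_le hAupos hG₁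
    have hXpos1 : 0 < Xf q lam v (G₁+1) := hN.Xpos (by linarith)
    obtain ⟨L, hLdef⟩ : ∃ L:ℝ, L = max ((Real.log (Xf q lam v (G₁+1))
        - (1-ε)*Real.log (G₁+1) - Real.log (1+ε))/ε + 1) (Real.log (G₁+1) + 1) := ⟨_, rfl⟩
    have hL1 : Real.log (G₁+1) + 1 ≤ L := by rw [hLdef]; exact le_max_right _ _
    have hLD : (Real.log (Xf q lam v (G₁+1)) - (1-ε)*Real.log (G₁+1)
        - Real.log (1+ε))/ε + 1 ≤ L := by rw [hLdef]; exact le_max_left _ _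
    obtain ⟨ξ₁, hξ₁def⟩ : ∃ ξ₁:ℝ, ξ₁ = Real.exp L := ⟨_, rfl⟩
    have hξ₁pos : 0 < ξ₁ := by rw [hξ₁def]; exact Real.exp_pos L
    have hlogξ₁ : Real.log ξ₁ = L := by rw [hξ₁def, Real.log_exp]
    have hξ₁ge : G₁+1 ≤ ξ₁ := by
      have h1 : Real.log (G₁+1) ≤ L := by linarith
      have h2 := Real.exp_le_exp.2 h1
      rw [Real.exp_log (by linarith : (0:ℝ) < G₁+1)] at h2
      rw [hξ₁def]
      exact h2
    have hψ := hN.uentry (b := ξ₁) hε hε8 hA₄ (by linarith) (by linarith) (by linarith)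
        (fun η hη => hcon η hη.1)
    have hgrow := le_of_deriv_nonneg (a := G₁+1) (b := ξ₁) hξ₁ge
        (φ := fun t => (1-ε)*Real.log t - Real.log (Xf q lam v t))
        (φ' := fun t => (1-ε)*t⁻¹ - (q-1)*Pf v w t)
        (fun t ht => ((Real.hasDerivAt_log
            (ne_of_gt (show (0:ℝ) < t by linarith [ht.1]))).const_mul (1-ε)).sub
          (hN.hLogX (show (0:ℝ) < t by linarith [ht.1])))
        ?_
    · have hgrow2 : (1-ε)*Real.log (G₁+1) - Real.log (Xf q lam v (G₁+1))
          ≤ (1-ε)*Real.log ξ₁ - Real.log (Xf q lam v ξ₁) := hgrow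
      have hXξ₁ : (1+ε)*ξ₁ ≤ Xf q lam v ξ₁ := hcon ξ₁ (by linarith)
      have hXξ₁pos : 0 < Xf q lam v ξ₁ := hN.Xpos hξ₁pos
      have hloglow : Real.log (1+ε) + Real.log ξ₁ ≤ Real.log (Xf q lam v ξ₁) := by
        have h3 := Real.log_le_log (by positivity : (0:ℝ) < (1+ε)*ξ₁) hXξ₁
        rwa [Real.log_mul (by linarith : (1+ε) ≠ 0) (ne_of_gt hξ₁pos)] at h3
      have hεL : Real.log (Xf q lam v (G₁+1)) - (1-ε)*Real.log (G₁+1)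
          - Real.log (1+ε) + ε ≤ ε*L := by
        have h4 := mul_le_mul_of_nonneg_left hLD hε.le
        have e : ε*((Real.log (Xf q lam v (G₁+1)) - (1-ε)*Real.log (G₁+1)
            - Real.log (1+ε))/ε + 1)
            = Real.log (Xf q lam v (G₁+1)) - (1-ε)*Real.log (G₁+1)
              - Real.log (1+ε) + ε := by
          field_simp
        rw [e] at h4
        exact h4
      rw [hlogξ₁] at hgrow2 hloglow
      nlinarith [hgrow2, hloglow, hεL, hε]
    · intro t ht
      beta_reduce
      have htpos : (0:ℝ) < t := by linarith [ht.1]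
      have hψt := hψ t ht
      have h1 := mul_le_mul_of_nonneg_left hψt (by linarith : (0:ℝ) ≤ q-1)
      have h2 : (q-1)*(((1-ε)/(q-1))*t⁻¹) = (1-ε)*t⁻¹ := by field_simp
      rw [h2] at h1
      linarith
  -- patching
  obtain ⟨G₀, hG₀A, hG₀good⟩ := hgood Au le_rfl
  have hG₀pos : 0 < G₀ := lt_of_lt_of_le hAupos hG₀A
  refine ⟨G₀, by linarith, ?_⟩
  intro ξ hξG
  have hξpos : 0 < ξ := by linarith
  by_cases hcase : Xf q lam v ξ ≤ (1+ε)*ξ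
  · nlinarith [hcase, mul_nonneg hε.le hξpos.le]
  push_neg at hcase
  have hXcont : ContinuousOn (fun η => (1+ε)*η - Xf q lam v η) (Icc G₀ ξ) := by
    intro η hη
    have hηpos : (0:ℝ) < η := lt_of_lt_of_le hG₀pos hη.1
    exact (((continuous_const.mul continuous_id).continuousAt).sub
      ((hN.hX hηpos).continuousAt)).continuousWithinAt
  have hSne : G₀ ∈ Icc G₀ ξ ∩ (fun η => (1+ε)*η - Xf q lam v η) ⁻¹' (Ici 0) :=
    ⟨⟨le_rfl, hξG⟩, by simp only [mem_preimage, mem_Ici]; linarith [hG₀good]⟩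
  have hScl : IsClosed (Icc G₀ ξ ∩ (fun η => (1+ε)*η - Xf q lam v η) ⁻¹' (Ici 0)) :=
    hXcont.preimage_isClosed_of_isClosed isClosed_Icc isClosed_Ici
  have hbdd : BddAbove (Icc G₀ ξ ∩ (fun η => (1+ε)*η - Xf q lam v η) ⁻¹' (Ici 0)) :=
    ⟨ξ, fun η hη => hη.1.2⟩
  obtain ⟨hstarI, hstarmem⟩ := hScl.csSup_mem ⟨G₀, hSne⟩ hbdd
  obtain ⟨a', ha'def⟩ : ∃ a':ℝ,
      a' = sSup (Icc G₀ ξ ∩ (fun η => (1+ε)*η - Xf q lam v η) ⁻¹' (Ici 0)) := ⟨_, rfl⟩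
  rw [← ha'def] at hstarI hstarmem
  have hstar1 : Xf q lam v a' ≤ (1+ε)*a' := by
    simp only [mem_preimage, mem_Ici] at hstarmem
    linarith
  have hstarpos : 0 < a' := lt_of_lt_of_le hG₀pos hstarI.1
  have hstarlt : a' < ξ := by
    rcases lt_or_eq_of_le hstarI.2 with h|h
    · exact h
    · rw [h] at hstar1; linarith
  have hbadr : ∀ η ∈ Ioc a' ξ, (1+ε)*η ≤ Xf q lam v η := by
    intro η hη
    by_contra hle
    push_neg at hle
    have hmem : η ∈ Icc G₀ ξ ∩ (fun η => (1+ε)*η - Xf q lam v η) ⁻¹' (Ici 0) :=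
      ⟨⟨le_trans hstarI.1 hη.1.le, hη.2⟩, by simp only [mem_preimage, mem_Ici]; linarith⟩
    have h5 := le_csSup hbdd hmem
    rw [← ha'def] at h5
    exact absurd h5 (not_le.2 hη.1)
  have hbadstar : (1+ε)*a' ≤ Xf q lam v a' := by
    have hcont : ContinuousAt (fun η => (1+ε)*η - Xf q lam v η) a' :=
      ((continuous_const.mul continuous_id).continuousAt).sub ((hN.hX hstarpos).continuousAt)
    have hlim : (1+ε)*a' - Xf q lam v a' ≤ 0 := by
      refine le_of_tendsto (hcont.tendsto.mono_left (nhdsWithin_le_nhds (s := Ioi a'))) ?_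
      filter_upwards [Ioc_mem_nhdsGT_of_mem (⟨le_rfl, hstarlt⟩ : a' ∈ Ico a' ξ)] with η hη
      have := hbadr η hη
      beta_reduce
      linarith
    linarith
  have hbadIcc : ∀ η ∈ Icc a' ξ, (1+ε)*η ≤ Xf q lam v η := by
    intro η hη
    rcases eq_or_lt_of_le hη.1 with h|h
    · rw [← h]; exact hbadstar
    · exact hbadr η ⟨h, hη.2⟩
  have hstarAu : Au ≤ a' := le_trans hG₀A hstarI.1
  have hεa : 2 ≤ ε*a' := by
    have h1 : 2/ε ≤ a' := by linarith
    have h2 : 2/ε*ε = 2 := by field_simp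
    calc (2:ℝ) = 2/ε*ε := h2.symm
      _ ≤ a'*ε := mul_le_mul_of_nonneg_right h1 hε.le
      _ = ε*a' := mul_comm _ _
  -- growth control: for c ≥ a', X c * a'² ≤ X a' * c²
  have hgrow2fun : ∀ c, a' ≤ c → Xf q lam v c * a'^2 ≤ Xf q lam v a' * c^2 := by
    intro c hc
    have hcpos : 0 < c := lt_of_lt_of_le hstarpos hc
    have hgr := le_of_deriv_nonneg (a := a') (b := c) hc
        (φ := fun t => 2*Real.log t - Real.log (Xf q lam v t))
        (φ' := fun t => 2*t⁻¹ - (q-1)*Pf v w t)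
        (fun t ht => ((Real.hasDerivAt_log
            (ne_of_gt (show (0:ℝ) < t by linarith [ht.1]))).const_mul 2).sub
          (hN.hLogX (show (0:ℝ) < t by linarith [ht.1])))
        ?_
    · have hgr2 : 2*Real.log a' - Real.log (Xf q lam v a')
          ≤ 2*Real.log c - Real.log (Xf q lam v c) := hgr
      have hXc : 0 < Xf q lam v c := hN.Xpos hcpos
      have hXa : 0 < Xf q lam v a' := hN.Xpos hstarpos
      have e1 : Real.log (Xf q lam v c/c^2) ≤ Real.log (Xf q lam v a'/a'^2) := by
        rw [Real.log_div (ne_of_gt hXc) (by positivity),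
          Real.log_div (ne_of_gt hXa) (by positivity),
          Real.log_pow, Real.log_pow]
        push_cast
        linarith
      have e2 := (Real.log_le_log_iff (by positivity) (by positivity)).mp e1
      rw [div_le_div_iff₀ (by positivity) (by positivity)] at e2
      linarith [e2]
    · intro t ht
      beta_reduce
      have htpos : (0:ℝ) < t := by linarith [ht.1]
      have hψt : Pf v w t ≤ (2/(q-1))*t⁻¹ := hA₄ t (by linarith [ht.1])
      have h1 := mul_le_mul_of_nonneg_left hψt (by linarith : (0:ℝ) ≤ q-1)
      have h2 : (q-1)*((2/(q-1))*t⁻¹) = 2*t⁻¹ := by field_simp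
      rw [h2] at h1
      linarith
  by_cases hc2 : ξ ≤ a'+1
  · have h1 := hgrow2fun ξ hstarI.2
    have c1 : Xf q lam v ξ * a'^2 ≤ (1+ε)*a'*ξ^2 :=
      le_trans h1 (mul_le_mul_of_nonneg_right hstar1 (by positivity))
    have c2 : ξ^2 ≤ ξ*(a'+1) := by nlinarith [hξpos, hc2]
    have c3 : Xf q lam v ξ * a'^2 ≤ (1+ε)*a'*(ξ*(a'+1)) := by
      calc Xf q lam v ξ * a'^2 ≤ (1+ε)*a'*ξ^2 := c1
        _ ≤ (1+ε)*a'*(ξ*(a'+1)) := by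
            apply mul_le_mul_of_nonneg_left c2 (by positivity)
    have c4 : Xf q lam v ξ * a'^2 ≤ ((1+2*ε)*ξ)*a'^2 := by
      nlinarith [c3, hεa, hξpos, hstarpos, mul_pos hξpos hstarpos]
    exact (mul_le_mul_iff_of_pos_right (by positivity : (0:ℝ) < a'^2)).mp c4
  · push_neg at hc2
    have hstep1 := hgrow2fun (a'+1) (by linarith)
    have hψ := hN.uentry (b := ξ) hε hε8 hA₄ (by linarith) (by linarith) (by linarith) hbadIcc
    have hgrow3 := le_of_deriv_nonneg (a := a'+1) (b := ξ) hc2.le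
        (φ := fun t => Real.log t - Real.log (Xf q lam v t))
        (φ' := fun t => t⁻¹ - (q-1)*Pf v w t)
        (fun t ht => (Real.hasDerivAt_log
            (ne_of_gt (show (0:ℝ) < t by linarith [ht.1]))).sub
          (hN.hLogX (show (0:ℝ) < t by linarith [ht.1])))
        ?_
    · have hgr3 : Real.log (a'+1) - Real.log (Xf q lam v (a'+1))
          ≤ Real.log ξ - Real.log (Xf q lam v ξ) := hgrow3
      have hXa1 : 0 < Xf q lam v (a'+1) := hN.Xpos (by linarith)
      have hXξ : 0 < Xf q lam v ξ := hN.Xpos hξpos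
      have ha1pos : (0:ℝ) < a'+1 := by linarith
      have h1 : Xf q lam v ξ/ξ ≤ Xf q lam v (a'+1)/(a'+1) := by
        have e1 : Real.log (Xf q lam v ξ/ξ) ≤ Real.log (Xf q lam v (a'+1)/(a'+1)) := by
          rw [Real.log_div (ne_of_gt hXξ) (ne_of_gt hξpos),
            Real.log_div (ne_of_gt hXa1) (ne_of_gt ha1pos)]
          linarith
        exact (Real.log_le_log_iff (by positivity) (by positivity)).mp e1
      rw [div_le_div_iff₀ hξpos ha1pos] at h1
      -- h1 : Xξ*(a'+1) ≤ X(a'+1)*ξ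
      have c1 : Xf q lam v (a'+1)*a'^2 ≤ (1+ε)*a'*(a'+1)^2 :=
        le_trans hstep1 (mul_le_mul_of_nonneg_right hstar1 (by positivity))
      have c2 := mul_le_mul_of_nonneg_right h1 (by positivity : (0:ℝ) ≤ a'^2)
      have c3 := mul_le_mul_of_nonneg_right c1 hξpos.le
      -- c2 : Xξ(a'+1)a'² ≤ X(a'+1)ξa'² ; c3 : X(a'+1)a'²ξ ≤ (1+ε)a'(a'+1)²ξ
      have c4 : Xf q lam v ξ*((a'+1)*a'^2) ≤ ((1+2*ε)*ξ)*((a'+1)*a'^2) := by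
        nlinarith [c2, c3, hεa, hξpos, hstarpos, mul_pos hξpos hstarpos,
          mul_pos (mul_pos hξpos hstarpos) hstarpos]
      exact (mul_le_mul_iff_of_pos_right (by positivity : (0:ℝ) < (a'+1)*a'^2)).mp c4
    · intro t ht
      beta_reduce
      have htpos : (0:ℝ) < t := by linarith [ht.1]
      have hψt := hψ t ht
      have h1 := mul_le_mul_of_nonneg_left hψt (by linarith : (0:ℝ) ≤ q-1)
      have h2 : (q-1)*(((1-ε)/(q-1))*t⁻¹) = (1-ε)*t⁻¹ := by field_simp
      rw [h2] at h1
      have h5 : (0:ℝ) ≤ t⁻¹ := by positivity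
      nlinarith [h1, h5, mul_nonneg hε.le h5]

end Nice

namespace Nice

variable {q lam : ℝ} {v w : ℝ → ℝ}

lemma tendsto_ratio (hN : Nice q lam v w) :
    Tendsto (fun ξ => Xf q lam v ξ / ξ) atTop (𝓝 1) := by
  rw [Metric.tendsto_atTop]
  intro δ hδ
  obtain ⟨ε, hεdef⟩ : ∃ ε:ℝ, ε = min (δ/4) (1/8) := ⟨_, rfl⟩
  have hε : 0 < ε := by rw [hεdef]; exact lt_min (by linarith) (by norm_num)
  have hε8 : ε ≤ 1/8 := by rw [hεdef]; exact min_le_right _ _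
  have hεδ : 2*ε < δ := by
    have : ε ≤ δ/4 := by rw [hεdef]; exact min_le_left _ _
    linarith
  obtain ⟨A1, hA11, hlow⟩ := hN.lower hε hε8
  obtain ⟨A2, hA21, hup⟩ := hN.upper hε hε8
  refine ⟨max A1 A2, ?_⟩
  intro ξ hξ
  have hξA1 : A1 ≤ ξ := le_trans (le_max_left _ _) hξ
  have hξA2 : A2 ≤ ξ := le_trans (le_max_right _ _) hξ
  have hξpos : 0 < ξ := by linarith
  have h1 := hlow ξ hξA1
  have h2 := hup ξ hξA2
  rw [Real.dist_eq, abs_lt]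
  constructor
  · have h3 : (1-2*ε)*ξ ≤ Xf q lam v ξ := h1
    rw [div_sub_one (ne_of_gt hξpos), lt_div_iff₀ hξpos]
    nlinarith [h3, mul_pos hε hξpos]
  · rw [sub_lt_iff_lt_add, div_lt_iff₀ hξpos]
    nlinarith [h2, mul_pos hε hξpos]

end Nice

theorem kpz_g_limit (q lam : ℝ) (hq : 2 < q) (hlam : 0 < lam)
    (f : ℝ → ℝ)
    (hsol : SolvesKPZProfile q lam (Set.Ici 0) f)
    (hf0 : f 0 = -1)
    (hf'0 : derivWithin f (Set.Ici 0) 0 = 0) :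
    Tendsto (kpzG q f) atTop (𝓝 ((1 / (lam * q)) ^ (1 / (q - 1)))) := by
  obtain ⟨w, hvpos, hwpos, hv', hw'⟩ := kpz_construct q lam hq hlam f hsol hf0 hf'0
  set v : ℝ → ℝ := derivWithin f (Set.Ici 0) with hvdef
  have hN : Nice q lam v w :=
    ⟨hq, hlam, hvpos, fun ξ hξ => hwpos ξ hξ.le, hv', hw'⟩
  have hqm : (0:ℝ) < q - 1 := by linarith
  have hlamq : (0:ℝ) < lam*q := by positivity
  have hratio := hN.tendsto_ratio
  -- composition with exp
  have hcomp : Tendsto (fun t => Xf q lam v (Real.exp t) / Real.exp t) atTop (𝓝 1) :=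
    hratio.comp Real.tendsto_exp_atTop
  have hmul : Tendsto (fun t => (Xf q lam v (Real.exp t) / Real.exp t) * (1/(lam*q)))
      atTop (𝓝 (1 * (1/(lam*q)))) := hcomp.mul_const _
  rw [one_mul] at hmul
  have hrpow : Tendsto
      (fun t => ((Xf q lam v (Real.exp t) / Real.exp t) * (1/(lam*q))) ^ (1/(q-1)))
      atTop (𝓝 ((1/(lam*q)) ^ (1/(q-1)))) :=
    hmul.rpow_const (Or.inl (by positivity))
  refine Tendsto.congr (fun t => ?_) hrpow
  -- pointwise identity
  have hξpos : (0:ℝ) < Real.exp t := Real.exp_pos t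
  have hvp : 0 < v (Real.exp t) := hvpos _ hξpos
  have h1 : (Xf q lam v (Real.exp t) / Real.exp t) * (1/(lam*q))
      = (v (Real.exp t)) ^ (q-1) / Real.exp t := by
    unfold Xf
    field_simp
  rw [h1, Real.div_rpow (Real.rpow_nonneg hvp.le _) hξpos.le]
  rw [← Real.rpow_mul hvp.le, mul_one_div, div_self (ne_of_gt hqm), Real.rpow_one]
  have h2 : (Real.exp t) ^ (1/(q-1)) = Real.exp (t * (1/(q-1))) := by
    rw [Real.rpow_def_of_pos hξpos, Real.log_exp]
  rw [h2]
  unfold kpzG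
  rw [← hvdef]
  rw [div_eq_mul_inv, ← Real.exp_neg, mul_comm]
  congr 1
  ring
end

section
/- Let q > 2, λ > 0, and let f : [0,∞) → ℝ be a twice continuously differentiable solution of the ODE f''(ξ) + λ|f'(ξ)|^q − (1/2)ξ f'(ξ) + ((q−2)/(2(q−1))) f(ξ) = 0 on [0,∞) with f(0) = −1 and f'(0) = 0, and define g(t) = e^{−t/(q−1)} f'(e^t). Then g(t) > 0 for every t ∈ ℝ, and there exists T ∈ ℝ such that for all t ≥ T one has g(t) < (1/(2λ))^{1/(q−1)} and g'(t) > −g(t)/(q−1). -/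
set_option maxHeartbeats 1000000

open Set Filter Topology Real

theorem kpz_g_pos_and_bounds (q lam : ℝ) (hq : 2 < q) (hlam : 0 < lam)
    (f : ℝ → ℝ)
    (hsol : SolvesKPZProfile q lam (Set.Ici 0) f)
    (hf0 : f 0 = -1)
    (hf'0 : derivWithin f (Set.Ici 0) 0 = 0) :
    (∀ t : ℝ, 0 < kpzG q f t) ∧
    ∃ T : ℝ, ∀ t : ℝ, T ≤ t →
      kpzG q f t < (1 / (2 * lam)) ^ (1 / (q - 1)) ∧
      -(kpzG q f t) / (q - 1) < deriv (kpzG q f) t := by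
  obtain ⟨hreg, hode⟩ := hsol
  have hq1 : (0:ℝ) < q - 1 := by linarith
  have hq2 : (0:ℝ) < q - 2 := by linarith
  set c : ℝ := (q - 2) / (2 * (q - 1)) with hc_def
  have hc : 0 < c := div_pos hq2 (by linarith)
  have hchalf : c < 1/2 := by
    rw [hc_def, div_lt_div_iff₀ (by linarith) (by norm_num)]; linarith
  set F1 := derivWithin f (Set.Ici 0) with hF1_def
  set F2 := derivWithin F1 (Set.Ici 0) with hF2_def
  have hud : UniqueDiffOn ℝ (Set.Ici (0:ℝ)) := uniqueDiffOn_Ici 0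
  have hC1 : ContDiffOn ℝ 1 F1 (Set.Ici 0) := hreg.derivWithin hud (by norm_num)
  have hF1cont : ContinuousOn F1 (Set.Ici 0) := hC1.continuousOn
  have hF2cont : ContinuousOn F2 (Set.Ici 0) := hC1.continuousOn_derivWithin hud le_rfl
  have hfcont : ContinuousOn f (Set.Ici 0) := hreg.continuousOn
  have hF1w : ∀ x ∈ Set.Ici (0:ℝ), HasDerivWithinAt F1 (F2 x) (Set.Ici 0) x := fun x hx =>
    ((hC1.differentiableOn one_ne_zero) x hx).hasDerivWithinAt
  have hF1d : ∀ x : ℝ, 0 < x → HasDerivAt F1 (F2 x) x := fun x hx =>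
    (hF1w x (le_of_lt hx)).hasDerivAt (Ici_mem_nhds hx)
  have hfw : ∀ x ∈ Set.Ici (0:ℝ), HasDerivWithinAt f (F1 x) (Set.Ici 0) x := fun x hx =>
    ((hreg.differentiableOn (by norm_num)) x hx).hasDerivWithinAt
  have hfd : ∀ x : ℝ, 0 < x → HasDerivAt f (F1 x) x := fun x hx =>
    (hfw x (le_of_lt hx)).hasDerivAt (Ici_mem_nhds hx)
  have hODE : ∀ ξ : ℝ, 0 ≤ ξ → F2 ξ = 1/2 * ξ * F1 ξ - lam * |F1 ξ| ^ q - c * f ξ := by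
    intro ξ hξ
    have h := hode ξ hξ
    linarith
  have hF20 : F2 0 = c := by
    have h := hODE 0 le_rfl
    rw [hf'0, hf0] at h
    rw [h, abs_zero, Real.zero_rpow (by positivity : q ≠ 0)]
    ring
  -- positivity of F2 near 0
  have hev : F2 ⁻¹' (Set.Ioi 0) ∈ 𝓝[Set.Ici 0] (0:ℝ) := by
    have hcont0 : ContinuousWithinAt F2 (Set.Ici 0) 0 := hF2cont 0 Set.self_mem_Ici
    exact hcont0 (isOpen_Ioi.mem_nhds (by rw [hF20]; exact hc))
  obtain ⟨δ, hδ0, hδsub⟩ := mem_nhdsGE_iff_exists_Icc_subset.mp hev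
  have hδ2 : ∀ x ∈ Set.Icc (0:ℝ) δ, 0 < F2 x := fun x hx => hδsub hx
  have hmono0 : StrictMonoOn F1 (Set.Icc 0 δ) := by
    apply strictMonoOn_of_deriv_pos (convex_Icc _ _) (hF1cont.mono Icc_subset_Ici_self)
    intro x hx
    rw [interior_Icc] at hx
    rw [(hF1d x hx.1).deriv]
    exact hδ2 x ⟨le_of_lt hx.1, le_of_lt hx.2⟩
  have hF1near : ∀ x ∈ Set.Ioc (0:ℝ) δ, 0 < F1 x := by
    intro x hx
    have h := hmono0 ⟨le_rfl, le_of_lt hδ0⟩ ⟨hx.1.le, hx.2⟩ hx.1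
    rwa [hf'0] at h
  -- main claim : F1 and F2 are positive on (0,∞)
  have key : ∀ ξ : ℝ, 0 < ξ → 0 < F1 ξ ∧ 0 < F2 ξ := by
    by_contra hcon
    push_neg at hcon
    obtain ⟨ξ₀, hξ₀pos, hξ₀⟩ := hcon
    set S : Set ℝ := {x | 0 < x ∧ (F1 x ≤ 0 ∨ F2 x ≤ 0)} with hS_def
    have hmemS : ∀ x : ℝ, 0 < x → ¬(0 < F1 x ∧ 0 < F2 x) → x ∈ S := by
      intro x hx hnx
      refine ⟨hx, ?_⟩
      by_cases h1 : 0 < F1 x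
      · exact Or.inr (le_of_not_gt fun h2 => hnx ⟨h1, h2⟩)
      · exact Or.inl (le_of_not_gt h1)
    have hSne : S.Nonempty := ⟨ξ₀, hmemS ξ₀ hξ₀pos (by
      intro h; exact absurd (hξ₀ h.1) (not_le.mpr h.2))⟩
    have hSbdd : BddBelow S := ⟨0, fun x hx => le_of_lt hx.1⟩
    set ζ := sInf S with hζ_def
    have hδS : ∀ x ∈ S, δ ≤ x := by
      intro x hx
      by_contra hlt
      push_neg at hlt
      have hx' : x ∈ Set.Ioc (0:ℝ) δ := ⟨hx.1, le_of_lt hlt⟩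
      rcases hx.2 with h | h
      · exact absurd (hF1near x hx') (not_lt.mpr h)
      · exact absurd (hδ2 x ⟨le_of_lt hx.1, hx'.2⟩) (not_lt.mpr h)
    have hζδ : δ ≤ ζ := le_csInf hSne hδS
    have hζpos : 0 < ζ := lt_of_lt_of_le hδ0 hζδ
    have hbelow : ∀ x : ℝ, 0 < x → x < ζ → 0 < F1 x ∧ 0 < F2 x := by
      intro x hx hxζ
      by_contra hcx
      exact absurd (csInf_le hSbdd (hmemS x hx hcx)) (not_le.mpr hxζ)
    have hmonoζ : StrictMonoOn F1 (Set.Icc 0 ζ) := by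
      apply strictMonoOn_of_deriv_pos (convex_Icc _ _) (hF1cont.mono Icc_subset_Ici_self)
      intro x hx
      rw [interior_Icc] at hx
      rw [(hF1d x hx.1).deriv]
      exact (hbelow x hx.1 hx.2).2
    have hF1ζ : 0 < F1 ζ := by
      have h1 : F1 (ζ/2) < F1 ζ :=
        hmonoζ ⟨by positivity, by linarith⟩ ⟨hζpos.le, le_rfl⟩ (by linarith)
      have h2 : 0 < F1 (ζ/2) := (hbelow (ζ/2) (by positivity) (by linarith)).1
      linarith
    have hF1ca : ContinuousAt F1 ζ := (hF1cont ζ hζpos.le).continuousAt (Ici_mem_nhds hζpos)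
    have hF2ca : ContinuousAt F2 ζ := (hF2cont ζ hζpos.le).continuousAt (Ici_mem_nhds hζpos)
    have hF2ζ_le : F2 ζ ≤ 0 := by
      by_contra hpos
      push_neg at hpos
      have hset : {x : ℝ | 0 < x ∧ 0 < F1 x ∧ 0 < F2 x} ∈ 𝓝 ζ := by
        have h1 : F1 ⁻¹' (Set.Ioi 0) ∈ 𝓝 ζ := hF1ca (isOpen_Ioi.mem_nhds hF1ζ)
        have h2 : F2 ⁻¹' (Set.Ioi 0) ∈ 𝓝 ζ := hF2ca (isOpen_Ioi.mem_nhds hpos)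
        have h3 : Set.Ioi (0:ℝ) ∈ 𝓝 ζ := isOpen_Ioi.mem_nhds hζpos
        filter_upwards [h1, h2, h3] with x hx1 hx2 hx3
        exact ⟨hx3, hx1, hx2⟩
      obtain ⟨ε, hε, hball⟩ := Metric.mem_nhds_iff.mp hset
      obtain ⟨x, hxS, hxlt⟩ := exists_lt_of_csInf_lt hSne (show sInf S < ζ + ε by
        rw [← hζ_def]; linarith)
      have hζx : ζ ≤ x := csInf_le hSbdd hxS
      have hxball : x ∈ Metric.ball ζ ε := by
        rw [Metric.mem_ball, Real.dist_eq, abs_of_nonneg (by linarith)]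
        linarith
      have := hball hxball
      rcases hxS.2 with h | h
      · exact absurd this.2.1 (not_lt.mpr h)
      · exact absurd this.2.2 (not_lt.mpr h)
    have hF2ζ : F2 ζ = 0 := by
      refine le_antisymm hF2ζ_le ?_
      have htend : Filter.Tendsto F2 (𝓝[<] ζ) (𝓝 (F2 ζ)) := hF2ca.tendsto.mono_left nhdsWithin_le_nhds
      refine ge_of_tendsto htend ?_
      have h3 : ∀ᶠ x in 𝓝[<] ζ, 0 < x :=
        eventually_nhdsWithin_of_eventually_nhds (isOpen_Ioi.eventually_mem hζpos)
      filter_upwards [h3, self_mem_nhdsWithin] with x hx1 hx2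
      exact (hbelow x hx1 hx2).2.le
    -- derivative of F2 at ζ
    have hevF : ∀ᶠ x in 𝓝 ζ, 0 < x ∧ 0 < F1 x := by
      have h1 : F1 ⁻¹' (Set.Ioi 0) ∈ 𝓝 ζ := hF1ca (isOpen_Ioi.mem_nhds hF1ζ)
      have h3 : Set.Ioi (0:ℝ) ∈ 𝓝 ζ := isOpen_Ioi.mem_nhds hζpos
      filter_upwards [h1, h3] with x hx1 hx3
      exact ⟨hx3, hx1⟩
    have hHeq : F2 =ᶠ[𝓝 ζ] fun x => 1/2 * x * F1 x - lam * (F1 x) ^ q - c * f x := by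
      filter_upwards [hevF] with x hx
      rw [hODE x hx.1.le, abs_of_pos hx.2]
    have hHd : HasDerivAt (fun x => 1/2 * x * F1 x - lam * (F1 x) ^ q - c * f x)
        ((1/2 * 1 * F1 ζ + 1/2 * ζ * F2 ζ) - lam * (q * F1 ζ ^ (q - 1) * F2 ζ) - c * F1 ζ) ζ := by
      have ha : HasDerivAt (fun x : ℝ => 1/2 * x * F1 x)
          (1/2 * 1 * F1 ζ + 1/2 * ζ * F2 ζ) ζ :=
        ((hasDerivAt_id ζ).const_mul (1/2 : ℝ)).mul (hF1d ζ hζpos)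
      have hb : HasDerivAt (fun x : ℝ => (F1 x) ^ q) (q * F1 ζ ^ (q - 1) * F2 ζ) ζ := by
        have := (hF1d ζ hζpos).rpow_const (p := q) (Or.inl (ne_of_gt hF1ζ))
        convert this using 1
        ring
      exact (ha.sub (hb.const_mul lam)).sub ((hfd ζ hζpos).const_mul c)
    have hF2d : HasDerivAt F2 ((1/2 - c) * F1 ζ) ζ := by
      have heq : (1/2 * 1 * F1 ζ + 1/2 * ζ * F2 ζ) - lam * (q * F1 ζ ^ (q - 1) * F2 ζ) - c * F1 ζ
          = (1/2 - c) * F1 ζ := by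
        rw [hF2ζ]; ring
      exact heq ▸ (hHd.congr_of_eventuallyEq hHeq)
    have hW : Filter.Tendsto (slope F2 ζ) (𝓝[Set.Iio ζ \ {ζ}] ζ) (𝓝 ((1/2 - c) * F1 ζ)) :=
      hasDerivWithinAt_iff_tendsto_slope.mp hF2d.hasDerivWithinAt
    rw [Set.diff_singleton_eq_self (by simp)] at hW
    have hslope : ∀ᶠ x in 𝓝[<] ζ, slope F2 ζ x ≤ 0 := by
      have h3 : ∀ᶠ x in 𝓝[<] ζ, 0 < x :=
        eventually_nhdsWithin_of_eventually_nhds (isOpen_Ioi.eventually_mem hζpos)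
      filter_upwards [h3, self_mem_nhdsWithin] with x hx1 hx2
      rw [slope_def_field, hF2ζ, sub_zero]
      apply div_nonpos_of_nonneg_of_nonpos (hbelow x hx1 hx2).2.le
      simp only [Set.mem_Iio] at hx2
      linarith
    have hle : (1/2 - c) * F1 ζ ≤ 0 := le_of_tendsto hW hslope
    nlinarith
  have hF1pos : ∀ x : ℝ, 0 < x → 0 < F1 x := fun x hx => (key x hx).1
  have hF2pos : ∀ x : ℝ, 0 < x → 0 < F2 x := fun x hx => (key x hx).2
  have hgfun : kpzG q f = fun u : ℝ => Real.exp (-u / (q - 1)) * F1 (Real.exp u) := rfl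
  constructor
  · intro t
    rw [hgfun]
    exact mul_pos (Real.exp_pos _) (hF1pos _ (Real.exp_pos t))
  -- monotonicity of f and F1
  have hfmono : StrictMonoOn f (Set.Ici 0) := by
    apply strictMonoOn_of_deriv_pos (convex_Ici 0) hfcont
    intro x hx
    rw [interior_Ici] at hx
    rw [(hfd x hx).deriv]
    exact hF1pos x hx
  have hF1mono : StrictMonoOn F1 (Set.Ici 0) := by
    apply strictMonoOn_of_deriv_pos (convex_Ici 0) hF1cont
    intro x hx
    rw [interior_Ici] at hx
    rw [(hF1d x hx).deriv]
    exact hF2pos x hx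
  set m := F1 1 with hm_def
  have hm : 0 < m := hF1pos 1 one_pos
  set ξa : ℝ := 1 + 2/m with hξa_def
  have hξa1 : 1 < ξa := by
    have : 0 < 2/m := by positivity
    rw [hξa_def]; linarith
  have hξapos : 0 < ξa := by linarith
  have hfξa : 0 < f ξa := by
    have hφ : MonotoneOn (fun x => f x - m * x) (Set.Icc 1 ξa) := by
      apply monotoneOn_of_deriv_nonneg (convex_Icc _ _)
      · apply ContinuousOn.sub (hfcont.mono ?_) (Continuous.continuousOn (by continuity))
        intro x hx
        exact le_trans zero_le_one hx.1
      · intro x hx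
        rw [interior_Icc] at hx
        exact ((hfd x (by linarith [hx.1])).sub
          ((hasDerivAt_id x).const_mul m)).differentiableAt.differentiableWithinAt
      · intro x hx
        rw [interior_Icc] at hx
        have hd := (hfd x (by linarith [hx.1])).sub ((hasDerivAt_id x).const_mul m)
        rw [show deriv (fun x => f x - m * x) x = F1 x - m * 1 from hd.deriv]
        have : m < F1 x := hF1mono (show (1:ℝ) ∈ Set.Ici 0 by norm_num)
          (show x ∈ Set.Ici 0 from le_trans zero_le_one hx.1.le) hx.1
        linarith
    have h1 : f 1 - m * 1 ≤ f ξa - m * ξa :=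
      hφ ⟨le_rfl, hξa1.le⟩ ⟨hξa1.le, le_rfl⟩ hξa1.le
    have h2 : f 0 < f 1 := hfmono Set.self_mem_Ici (by norm_num) one_pos
    have h3 : m * ξa = m + 2 := by
      rw [hξa_def]; field_simp
    rw [hf0] at h2
    linarith
  refine ⟨Real.log ξa, fun t ht => ?_⟩
  set ξ := Real.exp t with hξ_def
  have hξpos : 0 < ξ := Real.exp_pos t
  have hξa_le : ξa ≤ ξ := by
    rw [hξ_def, ← Real.exp_log hξapos]
    exact Real.exp_le_exp.mpr ht
  have hfξ : 0 < f ξ :=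
    lt_of_lt_of_le hfξa (hfmono.monotoneOn hξapos.le (by positivity : (0:ℝ) ≤ ξ) hξa_le)
  have hA : 0 < F1 ξ := hF1pos ξ hξpos
  have hF2ξ : 0 < F2 ξ := hF2pos ξ hξpos
  have hode2 := hODE ξ hξpos.le
  rw [abs_of_pos hA] at hode2
  -- lam * (F1 ξ)^(q-1) < ξ/2
  have hsplit : F1 ξ ^ q = F1 ξ ^ (q - 1) * F1 ξ := by
    rw [← Real.rpow_add_one (ne_of_gt hA) (q - 1)]
    norm_num
  have hcf : 0 < c * f ξ := mul_pos hc hfξ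
  have hstep1 : lam * (F1 ξ ^ (q - 1) * F1 ξ) < 1/2 * ξ * F1 ξ := by
    rw [← hsplit]; linarith
  have hstep2 : F1 ξ ^ (q - 1) < ξ / (2 * lam) := by
    rw [lt_div_iff₀ (by positivity)]
    have := (mul_lt_mul_iff_left₀ hA).mp (by linarith [hstep1] :
      lam * F1 ξ ^ (q - 1) * F1 ξ < (1/2 * ξ) * F1 ξ)
    nlinarith
  have hA_lt : F1 ξ < (ξ / (2 * lam)) ^ (1 / (q - 1)) := by
    have h6 : (F1 ξ ^ (q - 1)) ^ (1 / (q - 1)) < (ξ / (2 * lam)) ^ (1 / (q - 1)) :=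
      Real.rpow_lt_rpow (Real.rpow_nonneg hA.le _) hstep2 (by positivity)
    rwa [← Real.rpow_mul hA.le, mul_one_div_cancel (ne_of_gt hq1), Real.rpow_one] at h6
  constructor
  · -- first bound
    rw [hgfun]
    have hsplit2 : (ξ / (2 * lam)) ^ (1 / (q - 1))
        = Real.exp (t * (1 / (q - 1))) * (1 / (2 * lam)) ^ (1 / (q - 1)) := by
      have h7 : ξ / (2 * lam) = ξ * (1 / (2 * lam)) := by ring
      rw [h7, Real.mul_rpow hξpos.le (by positivity), hξ_def, ← Real.exp_mul]
    have h8 : Real.exp (-t / (q - 1)) * F1 ξ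
        < Real.exp (-t / (q - 1)) * (Real.exp (t * (1 / (q - 1))) * (1 / (2 * lam)) ^ (1 / (q - 1))) := by
      apply mul_lt_mul_of_pos_left _ (Real.exp_pos _)
      rw [← hsplit2]
      exact hA_lt
    calc Real.exp (-t / (q - 1)) * F1 (Real.exp t)
        < Real.exp (-t / (q - 1)) * (Real.exp (t * (1 / (q - 1))) * (1 / (2 * lam)) ^ (1 / (q - 1))) := h8
      _ = (1 / (2 * lam)) ^ (1 / (q - 1)) := by
          rw [← mul_assoc, ← Real.exp_add, show -t / (q - 1) + t * (1 / (q - 1)) = 0 by ring,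
            Real.exp_zero, one_mul]
  · -- derivative bound
    have hg1 : HasDerivAt (fun u : ℝ => -u / (q - 1)) (-1 / (q - 1)) t := by
      have h : HasDerivAt (fun u : ℝ => -1 / (q - 1) * u) (-1 / (q - 1) * 1) t :=
        (hasDerivAt_id t).const_mul _
      rw [mul_one] at h
      exact h.congr_of_eventuallyEq (Filter.Eventually.of_forall fun u => by ring)
    have hexp : HasDerivAt (fun u : ℝ => Real.exp (-u / (q - 1)))
        (Real.exp (-t / (q - 1)) * (-1 / (q - 1))) t := hg1.exp
    have hcomp : HasDerivAt (fun u : ℝ => F1 (Real.exp u)) (F2 ξ * ξ) t :=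
      (hF1d ξ hξpos).comp (h := Real.exp) t (Real.hasDerivAt_exp t)
    have hprod : HasDerivAt (fun u : ℝ => Real.exp (-u / (q - 1)) * F1 (Real.exp u)) _ t := hexp.mul hcomp
    rw [hgfun, hprod.deriv]
    have hpos2 : 0 < Real.exp (-t / (q - 1)) * (F2 ξ * ξ) :=
      mul_pos (Real.exp_pos _) (mul_pos hF2ξ hξpos)
    have hring : -(Real.exp (-t / (q - 1)) * F1 ξ) / (q - 1)
        = Real.exp (-t / (q - 1)) * (-1 / (q - 1)) * F1 ξ := by ring
    rw [hring]
    linarith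
end

section
/- Let q > 2 and λ > 0, and let g : ℝ → ℝ be a twice continuously differentiable function with g > 0 satisfying the ODE g''(t) + ((3−q)/(q−1)) g'(t) − ((q−2)/(q−1)²) g(t) = [ (1/2) g'(t) − λ q g(t)^{q−1} g'(t) + (1/(q−1)) g(t) − (λq/(q−1)) g(t)^q ] e^{2t} on ℝ. If t₀ ∈ ℝ is a point with g'(t₀) = 0 and g''(t₀) ≤ 0 (in particular, any local maximum of g), then g(t₀) > C₀, where C₀ = (1/(λq))^{1/(q−1)}. -/
open Set Filter Topology Real

theorem kpz_g_local_max_above_C0 (q lam : ℝ) (hq : 2 < q) (hlam : 0 < lam)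
    (g : ℝ → ℝ) (hg : ContDiff ℝ 2 g) (hgpos : ∀ t : ℝ, 0 < g t)
    (hode : ∀ t : ℝ,
      deriv (deriv g) t + ((3 - q) / (q - 1)) * deriv g t
          - ((q - 2) / (q - 1) ^ 2) * g t
        = ((1 / 2) * deriv g t - lam * q * g t ^ (q - 1) * deriv g t
            + (1 / (q - 1)) * g t - (lam * q / (q - 1)) * g t ^ q) * Real.exp (2 * t))
    (t₀ : ℝ) (ht₀' : deriv g t₀ = 0) (ht₀'' : deriv (deriv g) t₀ ≤ 0) :
    (1 / (lam * q)) ^ (1 / (q - 1)) < g t₀ := by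
  have hq1 : (0:ℝ) < q - 1 := by linarith
  have hgt := hgpos t₀
  have h := hode t₀
  rw [ht₀'] at h
  have hexp : 0 < Real.exp (2 * t₀) := Real.exp_pos _
  -- LHS is negative
  have hlhs : deriv (deriv g) t₀ + (3 - q) / (q - 1) * 0 - (q - 2) / (q - 1) ^ 2 * g t₀ < 0 := by
    have : 0 < (q - 2) / (q - 1) ^ 2 * g t₀ := by
      apply mul_pos _ hgt
      exact div_pos (by linarith) (by positivity)
    linarith
  rw [h] at hlhs
  have hfac : (1 / 2) * 0 - lam * q * g t₀ ^ (q - 1) * 0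
      + (1 / (q - 1)) * g t₀ - (lam * q / (q - 1)) * g t₀ ^ q < 0 := by
    by_contra hc
    push_neg at hc
    nlinarith [mul_nonneg hc hexp.le]
  have key : g t₀ < lam * q * g t₀ ^ q := by
    have h1 : (1 / (q - 1)) * g t₀ < (lam * q / (q - 1)) * g t₀ ^ q := by linarith
    have h1' := mul_lt_mul_of_pos_left h1 hq1
    have e1 : (q - 1) * ((1 / (q - 1)) * g t₀) = g t₀ := by field_simp
    have e2 : (q - 1) * ((lam * q / (q - 1)) * g t₀ ^ q) = lam * q * g t₀ ^ q := by
      field_simp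
    rw [e1, e2] at h1'
    exact h1'
  -- g^q = g * g^(q-1)
  have hsplit : g t₀ ^ q = g t₀ * g t₀ ^ (q - 1) := by
    rw [← Real.rpow_one_add' hgt.le (by linarith)]
    ring_nf
  rw [hsplit] at key
  have h2 : 1 < lam * q * g t₀ ^ (q - 1) := by
    have := (mul_lt_mul_iff_right₀ hgt).mp (by linarith [key] : g t₀ * 1 < g t₀ * (lam * q * g t₀ ^ (q - 1)))
    linarith
  have hlq : 0 < lam * q := by positivity
  have h3 : 1 / (lam * q) < g t₀ ^ (q - 1) := by
    rw [div_lt_iff₀ hlq]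
    linarith [h2]
  have h4 : (1 / (lam * q)) ^ (1 / (q - 1)) < (g t₀ ^ (q - 1)) ^ (1 / (q - 1)) :=
    Real.rpow_lt_rpow (by positivity) h3 (by positivity)
  rwa [← Real.rpow_mul hgt.le, mul_one_div, div_self (ne_of_gt hq1), Real.rpow_one] at h4
end

section
/- Let q > 2, λ > 0, and f₀ > 0. Let f be a twice continuously differentiable solution of the ODE f''(ξ) + λ|f'(ξ)|^q − (1/2)ξ f'(ξ) + ((q−2)/(2(q−1))) f(ξ) = 0 on an interval [0, ξ̄) (with 0 < ξ̄ ≤ ∞), satisfying f(0) = f₀ and f'(0) = 0. Then f'(ξ) < 0 and f''(ξ) < 0 for every ξ ∈ (0, ξ̄). -/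
open Set Filter Topology Real

/-- The interval `[0, ξb)` of real numbers, where the right endpoint `ξb` is an
extended real number (so `ξb = ⊤` gives `[0, ∞)`). -/
def KPZDomain (ξb : EReal) : Set ℝ := {ξ : ℝ | 0 ≤ ξ ∧ (ξ : EReal) < ξb}

lemma KPZDomain_cases (ξb : EReal) (h : 0 < ξb) :
    KPZDomain ξb = Ici 0 ∨ ∃ b : ℝ, 0 < b ∧ KPZDomain ξb = Ico 0 b := by
  induction ξb using EReal.rec with
  | bot => exact absurd h (by simp)
  | coe b =>
      refine Or.inr ⟨b, by exact_mod_cast h, ?_⟩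
      ext x
      simp [KPZDomain, EReal.coe_lt_coe_iff]
  | top =>
      refine Or.inl ?_
      ext x
      simp [KPZDomain]

theorem kpz_key (q lam f₀ : ℝ) (hq : 2 < q) (hlam : 0 < lam) (hf₀ : 0 < f₀)
    (s : Set ℝ)
    (hs0 : (0:ℝ) ∈ s)
    (hpos : ∀ ξ ∈ s, 0 ≤ ξ)
    (hseg : ∀ ξ ∈ s, Icc (0:ℝ) ξ ⊆ s)
    (hnhds : ∀ ξ ∈ s, 0 < ξ → s ∈ 𝓝 ξ)
    (hud : UniqueDiffOn ℝ s)
    (f : ℝ → ℝ)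
    (hf2 : ContDiffOn ℝ 2 f s)
    (hode : ∀ ξ ∈ s, derivWithin (derivWithin f s) s ξ + lam * |derivWithin f s ξ| ^ q
      - (1 / 2) * ξ * derivWithin f s ξ + ((q - 2) / (2 * (q - 1))) * f ξ = 0)
    (hf0 : f 0 = f₀) (hf'0 : derivWithin f s 0 = 0) :
    ∀ ξ ∈ s, 0 < ξ → derivWithin f s ξ < 0 ∧ derivWithin (derivWithin f s) s ξ < 0 := by
  set g := derivWithin f s with hgdef
  set h := derivWithin g s with hhdef
  set c := (q - 2) / (2 * (q - 1)) with hcdef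
  have h2q : (0:ℝ) < 2 * (q - 1) := by linarith
  have hcpos : 0 < c := div_pos (by linarith) h2q
  have hclt : c < 1/2 := by
    rw [hcdef, div_lt_div_iff₀ h2q (by norm_num : (0:ℝ) < 2)]
    linarith
  -- regularity
  have hfd : DifferentiableOn ℝ f s := hf2.differentiableOn (by norm_num)
  have hg1 : ContDiffOn ℝ 1 g s := hf2.derivWithin hud (by norm_num)
  have hgc : ContinuousOn g s := hg1.continuousOn
  have hgd : DifferentiableOn ℝ g s := hg1.differentiableOn (by norm_num)
  have hhc : ContinuousOn h s := hg1.continuousOn_derivWithin hud le_rfl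
  -- ODE rearranged
  have hode' : ∀ ξ ∈ s, h ξ = -(lam * |g ξ| ^ q) + (1/2) * ξ * g ξ - c * f ξ := by
    intro ξ hξ
    have := hode ξ hξ
    linarith
  have hh0 : h 0 = -(c * f₀) := by
    have h0 := hode' 0 hs0
    rw [hf'0, hf0] at h0
    rw [h0, abs_zero, Real.zero_rpow (by positivity)]
    ring
  have hh0neg : h 0 < 0 := by rw [hh0]; nlinarith
  -- derivatives as HasDerivAt at interior points
  have hfderiv : ∀ ξ ∈ s, 0 < ξ → HasDerivAt f (g ξ) ξ := by
    intro ξ hξ hξpos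
    have hn := hnhds ξ hξ hξpos
    have hd := ((hfd ξ hξ).differentiableAt hn).hasDerivAt
    rwa [hgdef, derivWithin_of_mem_nhds hn]
  have hgderiv : ∀ ξ ∈ s, 0 < ξ → HasDerivAt g (h ξ) ξ := by
    intro ξ hξ hξpos
    have hn := hnhds ξ hξ hξpos
    have hd := ((hgd ξ hξ).differentiableAt hn).hasDerivAt
    rwa [hhdef, derivWithin_of_mem_nhds hn]
  -- negativity of g from negativity of h on the interior
  have gneg : ∀ ξ ∈ s, 0 < ξ → (∀ ζ, 0 < ζ → ζ < ξ → h ζ < 0) → g ξ < 0 := by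
    intro ξ hξ hξpos hneg
    have hsub : Icc (0:ℝ) ξ ⊆ s := hseg ξ hξ
    have hanti : StrictAntiOn g (Icc 0 ξ) := by
      apply strictAntiOn_of_deriv_neg (convex_Icc 0 ξ) (hgc.mono hsub)
      intro x hx
      rw [interior_Icc] at hx
      have hxs : x ∈ s := hsub ⟨hx.1.le, hx.2.le⟩
      rw [(hgderiv x hxs hx.1).deriv]
      exact hneg x hx.1 hx.2
    have := hanti (left_mem_Icc.2 hξpos.le) (right_mem_Icc.2 hξpos.le) hξpos
    rwa [hf'0] at this
  -- main claim : h < 0 everywhere on s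
  have hmain : ∀ ξ ∈ s, h ξ < 0 := by
    by_contra hcon
    push_neg at hcon
    obtain ⟨ξ₀, hξ₀s, hξ₀⟩ := hcon
    have hξ₀pos : 0 < ξ₀ := by
      rcases (hpos ξ₀ hξ₀s).lt_or_eq with hlt | heq
      · exact hlt
      · exfalso; rw [← heq] at hξ₀; linarith
    have hsubI : Icc (0:ℝ) ξ₀ ⊆ s := hseg ξ₀ hξ₀s
    have hhcI : ContinuousOn h (Icc 0 ξ₀) := hhc.mono hsubI
    -- the set of zeros of h in [0, ξ₀]
    set T : Set ℝ := Icc 0 ξ₀ ∩ h ⁻¹' {0} with hTdef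
    have hTne : T.Nonempty := by
      obtain ⟨ζ₁, hζ₁, hζ₁0⟩ := intermediate_value_Icc hξ₀pos.le hhcI ⟨hh0neg.le, hξ₀⟩
      exact ⟨ζ₁, hζ₁, hζ₁0⟩
    have hTbdd : BddBelow T := ⟨0, fun x hx => hx.1.1⟩
    have hTclosed : IsClosed T :=
      hhcI.preimage_isClosed_of_isClosed isClosed_Icc isClosed_singleton
    set ξs := sInf T with hξsdef
    have hξsT : ξs ∈ T := hTclosed.csInf_mem hTne hTbdd
    have hξsI : ξs ∈ Icc 0 ξ₀ := hξsT.1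
    have hξs0 : h ξs = 0 := hξsT.2
    have hξss : ξs ∈ s := hsubI hξsI
    have hξspos : 0 < ξs := by
      rcases hξsI.1.lt_or_eq with hlt | heq
      · exact hlt
      · exfalso; rw [← heq] at hξs0; linarith
    have hbefore : ∀ ζ, 0 < ζ → ζ < ξs → h ζ < 0 := by
      intro ζ hζ0 hζlt
      have hζI : ζ ∈ Icc 0 ξ₀ := ⟨hζ0.le, hζlt.le.trans hξsI.2⟩
      rcases lt_trichotomy (h ζ) 0 with h1 | h1 | h1
      · exact h1
      · exact absurd (csInf_le hTbdd ⟨hζI, h1⟩) (not_le.2 hζlt)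
      · exfalso
        obtain ⟨ζ', hζ', hζ'0⟩ := intermediate_value_Icc hζ0.le
          (hhcI.mono (Icc_subset_Icc_right hζI.2)) ⟨hh0neg.le, h1.le⟩
        have hmem : ζ' ∈ T := ⟨⟨hζ'.1, hζ'.2.trans hζI.2⟩, hζ'0⟩
        have := csInf_le hTbdd hmem
        have := hζ'.2
        linarith
    have hgξs : g ξs < 0 := gneg ξs hξss hξspos hbefore
    -- compute the derivative of h at ξs
    have hn := hnhds ξs hξss hξspos
    have hfA : HasDerivAt f (g ξs) ξs := hfderiv ξs hξss hξspos
    have hgA : HasDerivAt g 0 ξs := by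
      have := hgderiv ξs hξss hξspos
      rwa [hξs0] at this
    have hgct : ContinuousAt g ξs := (hgc ξs hξss).continuousAt hn
    have hgnear : ∀ᶠ ζ in 𝓝 ξs, g ζ < 0 := hgct.eventually_lt continuousAt_const hgξs
    -- h agrees near ξs with a differentiable expression
    have heq : (fun ζ => -(lam * (-g ζ) ^ q) + (1/2) * ζ * g ζ - c * f ζ) =ᶠ[𝓝 ξs] h := by
      filter_upwards [hn, hgnear] with ζ hζs hζg
      rw [hode' ζ hζs, abs_of_neg hζg]
    have h1 : HasDerivAt (fun ζ => (-g ζ) ^ q) (-(0:ℝ) * q * (-g ξs) ^ (q - 1)) ξs :=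
      hgA.neg.rpow_const (Or.inl (by exact neg_ne_zero.mpr hgξs.ne))
    have h2 : HasDerivAt (fun ζ => (1/2) * ζ * g ζ)
        ((1/2 * 1) * g ξs + ((1/2) * ξs) * 0) ξs :=
      ((hasDerivAt_id ξs).const_mul (1/2)).mul hgA
    have hH : HasDerivAt (fun ζ => -(lam * (-g ζ) ^ q) + (1/2) * ζ * g ζ - c * f ζ)
        (-(lam * (-(0:ℝ) * q * (-g ξs) ^ (q - 1))) + ((1/2 * 1) * g ξs + ((1/2) * ξs) * 0)
          - c * g ξs) ξs :=
      ((h1.const_mul lam).neg.add h2).sub (hfA.const_mul c)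
    have hd : HasDerivAt h ((1/2 - c) * g ξs) ξs := by
      have := hH.congr_of_eventuallyEq heq.symm
      exact this.congr_deriv (by ring)
    have hdneg : (1/2 - c) * g ξs < 0 :=
      mul_neg_of_pos_of_neg (by linarith) hgξs
    -- but h ≤ 0 to the left of ξs and h ξs = 0, so the derivative is ≥ 0
    have hslope : Tendsto (slope h ξs) (𝓝[<] ξs) (𝓝 ((1/2 - c) * g ξs)) :=
      (hasDerivAt_iff_tendsto_slope.1 hd).mono_left
        (nhdsWithin_mono _ (fun x hx => ne_of_lt hx))
    have hev : ∀ᶠ ζ in 𝓝[<] ξs, 0 ≤ slope h ξs ζ := by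
      filter_upwards [Ioo_mem_nhdsLT_of_mem (⟨hξspos, le_rfl⟩ : ξs ∈ Ioc 0 ξs)] with ζ hζ
      have hneg := hbefore ζ hζ.1 hζ.2
      rw [slope_def_field]
      have hnum : h ζ - h ξs ≤ 0 := by rw [hξs0]; linarith
      have hden : ζ - ξs ≤ 0 := by linarith [hζ.2]
      exact div_nonneg_of_nonpos hnum hden
    have := ge_of_tendsto hslope hev
    linarith
  intro ξ hξ hξpos
  exact ⟨gneg ξ hξ hξpos (fun ζ h1 h2 => hmain ζ ((hseg ξ hξ) ⟨h1.le, h2.le⟩)),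
    hmain ξ hξ⟩

theorem kpz_profile_pos_data_derivs_neg (q lam f₀ : ℝ) (hq : 2 < q) (hlam : 0 < lam)
    (hf₀ : 0 < f₀)
    (ξb : EReal) (hξb : 0 < ξb)
    (f : ℝ → ℝ)
    (hsol : SolvesKPZProfile q lam (KPZDomain ξb) f)
    (hf0 : f 0 = f₀)
    (hf'0 : derivWithin f (KPZDomain ξb) 0 = 0) :
    ∀ ξ : ℝ, 0 < ξ → (ξ : EReal) < ξb →
      derivWithin f (KPZDomain ξb) ξ < 0 ∧
      derivWithin (derivWithin f (KPZDomain ξb)) (KPZDomain ξb) ξ < 0 := by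
  obtain ⟨hf2, hode⟩ := hsol
  intro ξ hξpos hξlt
  have hξmem : ξ ∈ KPZDomain ξb := ⟨hξpos.le, hξlt⟩
  rcases KPZDomain_cases ξb hξb with hI | ⟨b, hb, hI⟩
  · refine kpz_key q lam f₀ hq hlam hf₀ (KPZDomain ξb)
      (by rw [hI]; exact mem_Ici.2 le_rfl)
      (by rw [hI]; exact fun x hx => hx)
      (fun x hx ζ hζ => by rw [hI] at *; exact hζ.1)
      (fun x hx hxp => by
        rw [hI]; exact mem_of_superset (Ioi_mem_nhds hxp) Ioi_subset_Ici_self)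
      (by rw [hI]; exact uniqueDiffOn_Ici 0)
      f hf2 hode hf0 hf'0 ξ hξmem hξpos
  · refine kpz_key q lam f₀ hq hlam hf₀ (KPZDomain ξb)
      (by rw [hI]; exact ⟨le_rfl, hb⟩)
      (by rw [hI]; exact fun x hx => hx.1)
      (fun x hx ζ hζ => by
        rw [hI] at *; exact ⟨hζ.1, lt_of_le_of_lt hζ.2 hx.2⟩)
      (fun x hx hxp => by
        rw [hI] at *
        exact mem_of_superset (Ioo_mem_nhds hxp hx.2) Ioo_subset_Ico_self)
      (by rw [hI]; exact uniqueDiffOn_Ico 0 b)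
      f hf2 hode hf0 hf'0 ξ hξmem hξpos
end

section
/- Let q > 2, λ > 0, and f₀ > 0. Let f be a three times differentiable solution of the ODE f''(ξ) + λ|f'(ξ)|^q − (1/2)ξ f'(ξ) + ((q−2)/(2(q−1))) f(ξ) = 0 on an interval [0, ξ̄), satisfying f(0) = f₀, f'(0) = 0, and such that f'(ξ) < 0 and f''(ξ) < 0 on (0, ξ̄). Then f''(ξ) < −λ |f'(ξ)|^q for every ξ ∈ (0, ξ̄). -/
open Set Filter Topology Real

theorem kpz_profile_pos_data_diff_ineq (q lam f₀ : ℝ) (hq : 2 < q) (hlam : 0 < lam)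
    (hf₀ : 0 < f₀)
    (ξb : EReal) (hξb : 0 < ξb)
    (f : ℝ → ℝ)
    -- `f` is three times differentiable on `[0, ξb)`:
    (hdiff : DifferentiableOn ℝ f (KPZDomain ξb))
    (hdiff' : DifferentiableOn ℝ (derivWithin f (KPZDomain ξb)) (KPZDomain ξb))
    (hdiff'' : DifferentiableOn ℝ
      (derivWithin (derivWithin f (KPZDomain ξb)) (KPZDomain ξb)) (KPZDomain ξb))
    -- `f` solves the self-similar profile ODE on `[0, ξb)`:
    (hode : ∀ ξ ∈ KPZDomain ξb,
      derivWithin (derivWithin f (KPZDomain ξb)) (KPZDomain ξb) ξ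
        + lam * |derivWithin f (KPZDomain ξb) ξ| ^ q
        - (1 / 2) * ξ * derivWithin f (KPZDomain ξb) ξ
        + ((q - 2) / (2 * (q - 1))) * f ξ = 0)
    (hf0 : f 0 = f₀)
    (hf'0 : derivWithin f (KPZDomain ξb) 0 = 0)
    (hf'neg : ∀ ξ : ℝ, 0 < ξ → (ξ : EReal) < ξb → derivWithin f (KPZDomain ξb) ξ < 0)
    (hf''neg : ∀ ξ : ℝ, 0 < ξ → (ξ : EReal) < ξb →
      derivWithin (derivWithin f (KPZDomain ξb)) (KPZDomain ξb) ξ < 0) :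
    ∀ ξ : ℝ, 0 < ξ → (ξ : EReal) < ξb →
      derivWithin (derivWithin f (KPZDomain ξb)) (KPZDomain ξb) ξ
        < -lam * |derivWithin f (KPZDomain ξb) ξ| ^ q := by
  intro ξ hξ0 hξb'
  set D : Set ℝ := KPZDomain ξb with hD
  set c : ℝ := (q - 2) / (2 * (q - 1)) with hc
  have hq1 : (0:ℝ) < q - 1 := by linarith
  have hc_pos : 0 < c := by
    apply div_pos <;> linarith
  have hc_lt : c < 1 / 2 := by
    rw [hc, div_lt_div_iff₀ (by linarith) (by norm_num)]
    linarith
  set g : ℝ → ℝ := fun x => (1 / 2) * x * derivWithin f D x - c * f x with hg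
  -- membership facts
  have hsub : Icc (0:ℝ) ξ ⊆ D := by
    intro y hy
    exact ⟨hy.1, lt_of_le_of_lt (EReal.coe_le_coe_iff.mpr hy.2) hξb'⟩
  have h0D : (0:ℝ) ∈ D := by
    refine ⟨le_refl 0, ?_⟩
    simpa using hξb
  have hξD : ξ ∈ D := ⟨hξ0.le, hξb'⟩
  have hIoo : Ioo (0:ℝ) ξ ⊆ D := fun y hy => hsub ⟨hy.1.le, hy.2.le⟩
  -- continuity of g on Icc 0 ξ
  have hgc : ContinuousOn g (Icc 0 ξ) := by
    apply ContinuousOn.sub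
    · exact (continuousOn_const.mul continuousOn_id).mul
        ((hdiff'.continuousOn).mono hsub)
    · exact continuousOn_const.mul ((hdiff.continuousOn).mono hsub)
  -- derivative of g on the interior
  have hderiv : ∀ x ∈ Ioo (0:ℝ) ξ, deriv g x < 0 := by
    intro x hx
    have hxD : x ∈ D := hIoo hx
    have hnhds : D ∈ 𝓝 x := mem_nhds_iff.mpr ⟨Ioo 0 ξ, hIoo, isOpen_Ioo, hx⟩
    have hf'x : HasDerivAt f (derivWithin f D x) x :=
      ((hdiff x hxD).hasDerivWithinAt).hasDerivAt hnhds
    have hf''x : HasDerivAt (derivWithin f D)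
        (derivWithin (derivWithin f D) D x) x :=
      ((hdiff' x hxD).hasDerivWithinAt).hasDerivAt hnhds
    have h1 : HasDerivAt (fun y : ℝ => (1 / 2) * y) (1 / 2) x := by
      simpa using (hasDerivAt_id x).const_mul (1 / 2 : ℝ)
    have h2 : HasDerivAt (fun y => (1 / 2) * y * derivWithin f D y)
        ((1 / 2) * derivWithin f D x + (1 / 2) * x * derivWithin (derivWithin f D) D x) x := by
      simpa [Pi.mul_def] using h1.mul hf''x
    have h3 : HasDerivAt g
        ((1 / 2) * derivWithin f D x + (1 / 2) * x * derivWithin (derivWithin f D) D x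
          - c * derivWithin f D x) x := h2.sub (hf'x.const_mul c)
    rw [h3.deriv]
    have hA := hf'neg x hx.1 (hxD.2)
    have hB := hf''neg x hx.1 (hxD.2)
    nlinarith [mul_pos (mul_pos (by norm_num : (0:ℝ) < 1/2) hx.1) (neg_pos.mpr hB),
      mul_pos (sub_pos.mpr hc_lt) (neg_pos.mpr hA)]
  -- g strictly decreasing on [0, ξ]
  have hanti : StrictAntiOn g (Icc 0 ξ) := by
    apply strictAntiOn_of_deriv_neg (convex_Icc 0 ξ) hgc
    intro x hx
    rw [interior_Icc] at hx
    exact hderiv x hx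
  have hgξ : g ξ < g 0 :=
    hanti (left_mem_Icc.mpr hξ0.le) (right_mem_Icc.mpr hξ0.le) hξ0
  have hg0 : g 0 = -c * f₀ := by
    simp [hg, hf'0, hf0]
  have hgneg : g ξ < 0 := by
    have : -c * f₀ < 0 := by nlinarith
    linarith [hg0 ▸ hgξ]
  have heq := hode ξ hξD
  have : g ξ = derivWithin (derivWithin f D) D ξ + lam * |derivWithin f D ξ| ^ q := by
    rw [hg]; linarith
  linarith [this ▸ hgneg]
end

section
/- Let q > 2 and λ > 0, and let f : [0,∞) → ℝ be a twice differentiable function satisfying f'(ξ) < 0 on (0,∞) and the differential inequality f''(ξ) < −λ |f'(ξ)|^q on (0,∞). Then for any 0 < ξ₁ < ξ one has 1/((q−1) |f'(ξ₁)|^{q−1}) > λ (ξ − ξ₁); consequently no such function f can exist on all of [0,∞). -/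
open Set Filter Topology Real

theorem kpz_integrated_diff_ineq (q lam : ℝ) (hq : 2 < q) (hlam : 0 < lam)
    (f : ℝ → ℝ)
    -- `f` is twice differentiable on `[0, ∞)`:
    (hdiff : DifferentiableOn ℝ f (Set.Ici 0))
    (hdiff' : DifferentiableOn ℝ (derivWithin f (Set.Ici 0)) (Set.Ici 0))
    -- `f' < 0` on `(0, ∞)`:
    (hf'neg : ∀ ξ : ℝ, 0 < ξ → derivWithin f (Set.Ici 0) ξ < 0)
    -- the differential inequality `f'' < -λ |f'|^q` on `(0, ∞)`:
    (hineq : ∀ ξ : ℝ, 0 < ξ →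
      derivWithin (derivWithin f (Set.Ici 0)) (Set.Ici 0) ξ
        < -lam * |derivWithin f (Set.Ici 0) ξ| ^ q) :
    (∀ ξ₁ ξ : ℝ, 0 < ξ₁ → ξ₁ < ξ →
      lam * (ξ - ξ₁) < 1 / ((q - 1) * |derivWithin f (Set.Ici 0) ξ₁| ^ (q - 1))) ∧
    False := by
  set g := derivWithin f (Set.Ici 0) with hgdef
  set g' := derivWithin g (Set.Ici 0) with hg'def
  have hq1 : (1:ℝ) < q := by linarith
  have hq1' : q - 1 ≠ 0 := by linarith
  have hq1pos : 0 < q - 1 := by linarith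
  -- g has derivative g' x at interior points
  have hA : ∀ x : ℝ, 0 < x → HasDerivAt g (g' x) x := by
    intro x hx
    have hmem : Set.Ici (0:ℝ) ∈ 𝓝 x := Ici_mem_nhds hx
    have hda : DifferentiableAt ℝ g x := (hdiff' x hx.le).differentiableAt hmem
    have : g' x = deriv g x := derivWithin_of_mem_nhds hmem
    rw [this]
    exact hda.hasDerivAt
  -- the auxiliary function
  set H : ℝ → ℝ := fun x => (-(g x)) ^ (1 - q) * (q - 1)⁻¹ with hHdef
  set φ : ℝ → ℝ := fun x => H x + lam * x with hφdef
  have hφderiv : ∀ x : ℝ, 0 < x → HasDerivAt φ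
      ((-(g' x) * (1 - q) * (-(g x)) ^ (1 - q - 1)) * (q - 1)⁻¹ + lam) x := by
    intro x hx
    have hgx : g x < 0 := hf'neg x hx
    have hne : -(g x) ≠ 0 := by linarith
    have h1 : HasDerivAt (fun y => -(g y)) (-(g' x)) x := (hA x hx).neg
    have h2 := (h1.rpow_const (p := 1 - q) (Or.inl hne)).mul_const (q - 1)⁻¹
    have h3 : HasDerivAt (fun y : ℝ => lam * y) lam x := by
      simpa using (hasDerivAt_id x).const_mul lam
    exact h2.add h3
  have hφderiv_neg : ∀ x : ℝ, 0 < x →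
      (-(g' x) * (1 - q) * (-(g x)) ^ (1 - q - 1)) * (q - 1)⁻¹ + lam < 0 := by
    intro x hx
    have hgx : g x < 0 := hf'neg x hx
    have hpos : 0 < -(g x) := by linarith
    have habs : |g x| = -(g x) := abs_of_neg hgx
    have hineqx := hineq x hx
    rw [habs] at hineqx
    have hrpos : 0 < (-(g x)) ^ (-q) := Real.rpow_pos_of_pos hpos _
    have hmul : g' x * (-(g x)) ^ (-q) < (-lam * (-(g x)) ^ q) * (-(g x)) ^ (-q) :=
      mul_lt_mul_of_pos_right hineqx hrpos
    have hcancel : (-(g x)) ^ q * (-(g x)) ^ (-q) = 1 := by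
      rw [← Real.rpow_add hpos]; simp
    have h2 : g' x * (-(g x)) ^ (-q) < -lam := by
      calc g' x * (-(g x)) ^ (-q) < (-lam * (-(g x)) ^ q) * (-(g x)) ^ (-q) := hmul
        _ = -lam * ((-(g x)) ^ q * (-(g x)) ^ (-q)) := by ring
        _ = -lam := by rw [hcancel]; ring
    have hsimp : (-(g' x) * (1 - q) * (-(g x)) ^ (1 - q - 1)) * (q - 1)⁻¹
        = g' x * (-(g x)) ^ (-q) := by
      have : (1 : ℝ) - q - 1 = -q := by ring
      rw [this]
      field_simp
      ring
    rw [hsimp]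
    linarith
  have key : ∀ ξ₁ ξ : ℝ, 0 < ξ₁ → ξ₁ < ξ →
      lam * (ξ - ξ₁) < 1 / ((q - 1) * |g ξ₁| ^ (q - 1)) := by
    intro ξ₁ ξ h1 h12
    -- φ is strictly antitone on Ici ξ₁
    have hanti : StrictAntiOn φ (Set.Ici ξ₁) := by
      apply strictAntiOn_of_deriv_neg (convex_Ici ξ₁)
      · intro x hx
        exact ((hφderiv x (lt_of_lt_of_le h1 hx)).differentiableAt).continuousAt.continuousWithinAt
      · intro x hx
        rw [interior_Ici] at hx
        have hx0 : 0 < x := h1.trans hx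
        rw [(hφderiv x hx0).deriv]
        exact hφderiv_neg x hx0
    have hlt : φ ξ < φ ξ₁ := hanti (le_refl ξ₁) h12.le h12
    have hHpos : 0 < H ξ := by
      have hgξ : g ξ < 0 := hf'neg ξ (h1.trans h12)
      have : 0 < -(g ξ) := by linarith
      have := Real.rpow_pos_of_pos this (1 - q)
      positivity
    have hHval : H ξ₁ = 1 / ((q - 1) * |g ξ₁| ^ (q - 1)) := by
      have hgξ₁ : g ξ₁ < 0 := hf'neg ξ₁ h1
      have hpos : 0 < -(g ξ₁) := by linarith
      rw [abs_of_neg hgξ₁]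
      have h1q : (1:ℝ) - q = -(q - 1) := by ring
      rw [hHdef]
      simp only
      rw [h1q, Real.rpow_neg hpos.le]
      rw [one_div, mul_inv, mul_comm]
    -- φ ξ < φ ξ₁ : H ξ + lam ξ < H ξ₁ + lam ξ₁, H ξ > 0
    have : lam * (ξ - ξ₁) < H ξ₁ := by
      simp only [hφdef] at hlt
      nlinarith
    rwa [hHval] at this
  refine ⟨key, ?_⟩
  have h2 := key 1 (1 + (1 / ((q - 1) * |g 1| ^ (q - 1))) / lam) one_pos ?_
  · rw [mul_comm, add_sub_cancel_left, div_mul_cancel₀ _ (ne_of_gt hlam)] at h2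
    exact lt_irrefl _ h2
  · have hg1 : g 1 < 0 := hf'neg 1 one_pos
    have hpos : 0 < |g 1| ^ (q - 1) := Real.rpow_pos_of_pos (abs_pos.mpr hg1.ne) _
    have : 0 < 1 / ((q - 1) * |g 1| ^ (q - 1)) := by positivity
    have := div_pos this hlam
    linarith
end

section
/- Let q > 2, λ > 0, and let f : [0,∞) → ℝ be a twice continuously differentiable solution of the ODE f''(ξ) + λ|f'(ξ)|^q − (1/2)ξ f'(ξ) + ((q−2)/(2(q−1))) f(ξ) = 0 on [0,∞) with f(0) = −1 and f'(0) = 0, and define g(t) = e^{−t/(q−1)} f'(e^t). Then the function g(t), which is positive and bounded for large t, cannot converge to 0 as t → ∞; more precisely, if g were eventually monotone with limit L ≥ 0, then necessarily L = C₀ = (1/(λq))^{1/(q−1)}. -/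
open Set Filter Topology Real

lemma kpz_hasDeriv (q lam : ℝ) (f : ℝ → ℝ) (hsol : SolvesKPZProfile q lam (Set.Ici 0) f) :
    ∀ ξ ∈ Set.Ici (0:ℝ), HasDerivWithinAt (derivWithin f (Set.Ici 0))
      ((1/2)*ξ*(derivWithin f (Set.Ici 0) ξ) - lam*|derivWithin f (Set.Ici 0) ξ|^q
        - ((q-2)/(2*(q-1))) * f ξ) (Set.Ici 0) ξ := by
  intro ξ hξ
  have hC1 : ContDiffOn ℝ 1 (derivWithin f (Set.Ici 0)) (Set.Ici 0) :=
    hsol.1.derivWithin (uniqueDiffOn_Ici 0) (by norm_num)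
  have hd := (hC1.differentiableOn (by norm_num) ξ hξ).hasDerivWithinAt
  have := hsol.2 ξ hξ
  have heq : derivWithin (derivWithin f (Set.Ici 0)) (Set.Ici 0) ξ
      = (1/2)*ξ*(derivWithin f (Set.Ici 0) ξ) - lam*|derivWithin f (Set.Ici 0) ξ|^q
        - ((q-2)/(2*(q-1))) * f ξ := by linarith
  rwa [heq] at hd

lemma kpz_w_pos (q lam : ℝ) (hq : 2 < q) (hlam : 0 < lam) (f : ℝ → ℝ)
    (hsol : SolvesKPZProfile q lam (Set.Ici 0) f)
    (hf0 : f 0 = -1) (hf'0 : derivWithin f (Set.Ici 0) 0 = 0) :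
    ∀ ξ ∈ Set.Ici (0:ℝ),
      0 < (1/2)*ξ*(derivWithin f (Set.Ici 0) ξ) - lam*|derivWithin f (Set.Ici 0) ξ|^q
        - ((q-2)/(2*(q-1))) * f ξ := by
  set h : ℝ → ℝ := derivWithin f (Set.Ici 0) with hh
  set c : ℝ := (q-2)/(2*(q-1)) with hc
  set w : ℝ → ℝ := fun ξ => (1/2)*ξ*(h ξ) - lam*|h ξ|^q - c * f ξ with hwdef
  have hq1 : (0:ℝ) < q - 1 := by linarith
  have hcpos : 0 < c := div_pos (by linarith) (by linarith)
  have hchalf : c < 1/2 := by rw [hc, div_lt_iff₀ (by linarith : (0:ℝ) < 2*(q-1))]; linarith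
  have hwd : ∀ ξ ∈ Set.Ici (0:ℝ), HasDerivWithinAt h (w ξ) (Set.Ici 0) ξ :=
    kpz_hasDeriv q lam f hsol
  have hfd : ∀ ξ ∈ Set.Ici (0:ℝ), HasDerivWithinAt f (h ξ) (Set.Ici 0) ξ := by
    intro ξ hξ
    exact (hsol.1.differentiableOn (by norm_num) ξ hξ).hasDerivWithinAt
  have hcont_f : ContinuousOn f (Set.Ici 0) := hsol.1.continuousOn
  have hC1 : ContDiffOn ℝ 1 h (Set.Ici 0) :=
    hsol.1.derivWithin (uniqueDiffOn_Ici 0) (by norm_num)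
  have hcont_h : ContinuousOn h (Set.Ici 0) := hC1.continuousOn
  have hcont_w : ContinuousOn w (Set.Ici 0) := by
    apply ContinuousOn.sub
    apply ContinuousOn.sub
    · exact (continuousOn_const.mul continuousOn_id).mul hcont_h
    · exact continuousOn_const.mul (hcont_h.abs.rpow_const
        (fun x hx => Or.inr (by linarith)))
    · exact continuousOn_const.mul hcont_f
  have hw0 : w 0 = c := by
    have he : w 0 = 1/2*0*(h 0) - lam*|h 0|^q - c*f 0 := rfl
    rw [he, hf'0, hf0, abs_zero, Real.zero_rpow (ne_of_gt (by linarith : (0:ℝ) < q))]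
    ring
  -- contradiction setup
  by_contra hcon
  push_neg at hcon
  obtain ⟨ξ₁, hξ₁, hwξ₁⟩ := hcon
  set W : ℝ → ℝ := fun ξ => w (max ξ 0) with hW
  have hWcont : Continuous W :=
    hcont_w.comp_continuous (continuous_id.max continuous_const)
      (fun x => mem_Ici.2 (le_max_right _ _))
  have hWw : ∀ ξ ≥ (0:ℝ), W ξ = w ξ := fun ξ hξ => by simp [hW, max_eq_left hξ]
  set S : Set ℝ := Set.Ici 0 ∩ W ⁻¹' (Set.Iic 0) with hS
  have hSclosed : IsClosed S := isClosed_Ici.inter (isClosed_Iic.preimage hWcont)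
  have hSne : S.Nonempty := ⟨ξ₁, hξ₁, by rw [mem_preimage, mem_Iic, hWw ξ₁ hξ₁]; exact hwξ₁⟩
  have hSbdd : BddBelow S := ⟨0, fun x hx => hx.1⟩
  set ξs : ℝ := sInf S with hξs
  have hmem : ξs ∈ S := hSclosed.csInf_mem hSne hSbdd
  have hξs0 : 0 ≤ ξs := hmem.1
  have hwξs : w ξs ≤ 0 := by
    have := hmem.2
    rwa [mem_preimage, mem_Iic, hWw ξs hξs0] at this
  have hlt : ∀ ξ, 0 ≤ ξ → ξ < ξs → 0 < w ξ := by
    intro ξ h0 hlt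
    by_contra hle
    push_neg at hle
    exact absurd (csInf_le hSbdd ⟨h0, by simp [mem_preimage, hWw ξ h0, hle]⟩)
      (not_le.2 hlt)
  have hξspos : 0 < ξs := by
    rcases lt_or_eq_of_le hξs0 with h | h
    · exact h
    · exfalso; rw [← h, hw0] at hwξs; linarith
  -- w ξs = 0 from left continuity
  have hwzero : w ξs = 0 := by
    refine le_antisymm hwξs ?_
    have htd : Tendsto W (𝓝[<] ξs) (𝓝 (W ξs)) :=
      (hWcont.continuousAt).continuousWithinAt.tendsto
    have hev : ∀ᶠ ξ in 𝓝[<] ξs, 0 ≤ W ξ := by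
      filter_upwards [self_mem_nhdsWithin] with ξ hξ
      have hm : (0:ℝ) ≤ max ξ 0 := le_max_right _ _
      have hm2 : max ξ 0 < ξs := max_lt hξ hξspos
      exact le_of_lt (hlt _ hm hm2)
    have := ge_of_tendsto htd hev
    rwa [hWw ξs hξs0] at this
  -- h is positive at ξs
  have hhd_at : ∀ x, 0 < x → HasDerivAt h (w x) x := fun x hx =>
    (hwd x (le_of_lt hx)).hasDerivAt (Ici_mem_nhds hx)
  have hfd_at : ∀ x, 0 < x → HasDerivAt f (h x) x := fun x hx =>
    (hfd x (le_of_lt hx)).hasDerivAt (Ici_mem_nhds hx)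
  have hmono : StrictMonoOn h (Set.Icc 0 ξs) := by
    apply strictMonoOn_of_deriv_pos (convex_Icc 0 ξs)
      (hcont_h.mono (Icc_subset_Ici_self))
    intro x hx
    rw [interior_Icc] at hx
    rw [(hhd_at x hx.1).deriv]
    exact hlt x hx.1.le hx.2
  have hhpos : 0 < h ξs := by
    have := hmono (left_mem_Icc.2 hξs0) (right_mem_Icc.2 hξs0) hξspos
    rwa [hf'0] at this
  -- derivative of w at ξs
  have hterm1 : HasDerivAt (fun ξ => (1/2)*ξ*(h ξ))
      ((1/2)*(1 * h ξs + ξs * w ξs)) ξs := by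
    have h1 : HasDerivAt (fun ξ => ξ * h ξ) (1 * h ξs + ξs * w ξs) ξs :=
      (hasDerivAt_id' ξs).mul (hhd_at ξs hξspos)
    have h2 := h1.const_mul (1/2 : ℝ)
    have he : (fun ξ => (1/2:ℝ)*ξ*(h ξ)) = (fun ξ => (1/2:ℝ)*(ξ*(h ξ))) := by
      funext ξ; ring
    rw [he]
    exact h2
  have habs : (fun ξ => lam * |h ξ|^q) =ᶠ[𝓝 ξs] (fun ξ => lam * (h ξ)^q) := by
    filter_upwards [(hhd_at ξs hξspos).continuousAt.eventually
      (eventually_gt_nhds hhpos)] with ξ hξ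
    rw [abs_of_pos hξ]
  have hterm2 : HasDerivAt (fun ξ => lam * |h ξ|^q)
      (lam * (w ξs * q * (h ξs)^(q-1))) ξs := by
    refine HasDerivAt.congr_of_eventuallyEq ?_ habs
    exact ((hhd_at ξs hξspos).rpow_const (Or.inl hhpos.ne')).const_mul lam
  have hterm3 : HasDerivAt (fun ξ => c * f ξ) (c * h ξs) ξs :=
    (hfd_at ξs hξspos).const_mul c
  have hwderiv : HasDerivAt w
      ((1/2)*(1 * h ξs + ξs * w ξs) - lam * (w ξs * q * (h ξs)^(q-1)) - c * h ξs) ξs :=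
    (hterm1.sub hterm2).sub hterm3
  set d : ℝ := (1/2)*(1 * h ξs + ξs * w ξs) - lam * (w ξs * q * (h ξs)^(q-1)) - c * h ξs
    with hd
  have hdpos : 0 < d := by
    rw [hd, hwzero]
    have : (1/2)*(1 * h ξs + ξs * 0) - lam * (0 * q * (h ξs)^(q-1)) - c * h ξs
        = (1/2 - c) * h ξs := by ring
    rw [this]
    exact mul_pos (by linarith) hhpos
  -- but slope from the left is ≤ 0
  have hWd : HasDerivWithinAt w d (Set.Iio ξs) ξs := hwderiv.hasDerivWithinAt
  rw [hasDerivWithinAt_iff_tendsto_slope] at hWd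
  have hdiff : (Set.Iio ξs) \ {ξs} = Set.Iio ξs := by
    apply diff_singleton_eq_self; simp
  rw [hdiff] at hWd
  have hev : ∀ᶠ ξ in 𝓝[<] ξs, slope w ξs ξ ≤ 0 := by
    have h1 : ∀ᶠ ξ in 𝓝[<] ξs, (0:ℝ) < ξ :=
      eventually_nhdsWithin_of_eventually_nhds (eventually_gt_nhds hξspos)
    filter_upwards [self_mem_nhdsWithin, h1] with ξ hξ h0
    rw [slope_def_field]
    have hwpos : 0 < w ξ := hlt ξ h0.le hξ
    have h2 : w ξ - w ξs > 0 := by rw [hwzero]; linarith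
    have h3 : ξ - ξs < 0 := by simp only [mem_Iio] at hξ; linarith
    exact div_nonpos_of_nonneg_of_nonpos (by linarith) (by linarith)
  have : d ≤ 0 := le_of_tendsto hWd hev
  linarith


lemma cesaro_rpow {F H : ℝ → ℝ} {a L : ℝ} (ha : 0 < a)
    (hcont : ContinuousOn H (Set.Ici 0))
    (hd : ∀ x : ℝ, 0 < x → HasDerivAt F (H x) x)
    (hta : Tendsto (fun ξ => H ξ / ξ ^ a) atTop (𝓝 L)) :
    Tendsto (fun ξ => F ξ / ξ ^ (a+1)) atTop (𝓝 (L/(a+1))) := by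
  set b : ℝ := a + 1 with hbdef
  have hb1 : (1:ℝ) ≤ b := by simp [hbdef]; linarith
  have hb0 : (0:ℝ) < b := by linarith
  rw [Metric.tendsto_nhds]
  intro ε hε
  set δ : ℝ := ε/2 with hδdef
  have hδ : 0 < δ := by positivity
  have hev : ∀ᶠ ξ in atTop, |H ξ / ξ ^ a - L| < δ := by
    have := Metric.tendsto_nhds.1 hta δ hδ
    simpa [Real.dist_eq] using this
  obtain ⟨s₁, hs₁⟩ := eventually_atTop.1 (hev.and (eventually_ge_atTop 1))
  set s0 : ℝ := max s₁ 1 with hs0def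
  have hs01 : (1:ℝ) ≤ s0 := le_max_right _ _
  have hs00 : (0:ℝ) < s0 := lt_of_lt_of_le one_pos hs01
  have hbound : ∀ ξ, s0 ≤ ξ → (L-δ)*ξ^a ≤ H ξ ∧ H ξ ≤ (L+δ)*ξ^a := by
    intro ξ hξ
    have hξ1 : (1:ℝ) ≤ ξ := le_trans hs01 hξ
    have hξ0 : (0:ℝ) < ξ := lt_of_lt_of_le one_pos hξ1
    have hp : 0 < ξ ^ a := Real.rpow_pos_of_pos hξ0 a
    have := (hs₁ ξ (le_trans (le_max_left _ _) hξ)).1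
    rw [abs_lt] at this
    constructor
    · have := this.1
      have h2 : L - δ < H ξ / ξ ^ a := by linarith
      calc (L-δ)*ξ^a ≤ (H ξ / ξ ^ a) * ξ ^ a := by nlinarith
        _ = H ξ := div_mul_cancel₀ _ (ne_of_gt hp)
    · have h2 : H ξ / ξ ^ a < L + δ := by linarith [this.2]
      calc H ξ = (H ξ / ξ ^ a) * ξ ^ a := (div_mul_cancel₀ _ (ne_of_gt hp)).symm
        _ ≤ (L+δ)*ξ^a := by nlinarith
  -- FTC
  have hFTC : ∀ ξ, s0 ≤ ξ → F ξ - F s0 = ∫ s in s0..ξ, H s := by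
    intro ξ hξ
    have huicc : Set.uIcc s0 ξ = Set.Icc s0 ξ := uIcc_of_le hξ
    have hsub : Set.uIcc s0 ξ ⊆ Set.Ici 0 := by
      rw [huicc]; exact fun x hx => le_trans (le_of_lt hs00) hx.1
    have hint : IntervalIntegrable H MeasureTheory.volume s0 ξ :=
      (hcont.mono hsub).intervalIntegrable
    have := intervalIntegral.integral_eq_sub_of_hasDerivAt
      (f := F) (f' := H) (a := s0) (b := ξ)
      (fun x hx => hd x (lt_of_lt_of_le hs00 ((huicc ▸ hx).1))) hint
    linarith [this]
  have hintH : ∀ ξ, s0 ≤ ξ → IntervalIntegrable H MeasureTheory.volume s0 ξ := by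
    intro ξ hξ
    have huicc : Set.uIcc s0 ξ = Set.Icc s0 ξ := uIcc_of_le hξ
    refine (hcont.mono ?_).intervalIntegrable
    rw [huicc]; exact fun x hx => le_trans (le_of_lt hs00) hx.1
  have hcontpow : ∀ (k : ℝ) (ξ : ℝ), s0 ≤ ξ →
      IntervalIntegrable (fun s => k * s ^ a) MeasureTheory.volume s0 ξ := by
    intro k ξ hξ
    refine (ContinuousOn.intervalIntegrable ?_)
    apply continuousOn_const.mul
    apply ContinuousOn.rpow_const continuousOn_id
    intro x hx
    rw [uIcc_of_le hξ] at hx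
    exact Or.inl (ne_of_gt (lt_of_lt_of_le hs00 hx.1))
  have hval : ∀ (k : ℝ) (ξ : ℝ), s0 ≤ ξ →
      (∫ s in s0..ξ, k * s ^ a) = k * ((ξ^b - s0^b)/b) := by
    intro k ξ hξ
    rw [intervalIntegral.integral_const_mul]
    rw [integral_rpow (Or.inl (by linarith : (-1:ℝ) < a))]
  have hIub : ∀ ξ, s0 ≤ ξ → F ξ - F s0 ≤ (L+δ) * ((ξ^b - s0^b)/b) := by
    intro ξ hξ
    rw [hFTC ξ hξ, ← hval (L+δ) ξ hξ]
    exact intervalIntegral.integral_mono_on hξ (hintH ξ hξ) (hcontpow _ ξ hξ)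
      (fun x hx => (hbound x hx.1).2)
  have hIlb : ∀ ξ, s0 ≤ ξ → (L-δ) * ((ξ^b - s0^b)/b) ≤ F ξ - F s0 := by
    intro ξ hξ
    rw [hFTC ξ hξ, ← hval (L-δ) ξ hξ]
    exact intervalIntegral.integral_mono_on hξ (hcontpow _ ξ hξ) (hintH ξ hξ)
      (fun x hx => (hbound x hx.1).1)
  set C : ℝ := |F s0| + (|L| + δ)*s0^b/b with hCdef
  have hC0 : 0 ≤ C := by positivity
  have hCt : Tendsto (fun ξ : ℝ => C / ξ^b) atTop (𝓝 0) := by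
    have h1 : Tendsto (fun ξ : ℝ => ξ^b) atTop atTop := tendsto_rpow_atTop hb0
    simpa [div_eq_mul_inv] using h1.inv_tendsto_atTop.const_mul C
  have hCev : ∀ᶠ ξ in atTop, C / ξ^b < ε/2 := by
    have := Metric.tendsto_nhds.1 hCt (ε/2) (by positivity)
    filter_upwards [this] with ξ hξ
    rw [Real.dist_eq, sub_zero] at hξ
    exact lt_of_le_of_lt (le_abs_self _) hξ
  filter_upwards [eventually_ge_atTop s0, hCev] with ξ hξ hCξ
  have hξ1 : (1:ℝ) ≤ ξ := le_trans hs01 hξ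
  have hξ0 : (0:ℝ) < ξ := lt_of_lt_of_le one_pos hξ1
  have hP : 0 < ξ^b := Real.rpow_pos_of_pos hξ0 b
  have hs0P : 0 < s0^b := Real.rpow_pos_of_pos hs00 b
  rw [Real.dist_eq]
  have hXeq : F ξ/ξ^b - L/b = (F ξ - (L/b)*ξ^b)/ξ^b := by
    field_simp
  rw [hXeq]
  set X : ℝ := F ξ - (L/b)*ξ^b with hXdef
  have hXb : X*b = F ξ*b - L*ξ^b := by
    rw [hXdef]; field_simp
  have hCb : C*b = |F s0| * b + (|L| + δ)*s0^b := by
    rw [hCdef]; field_simp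
  have hXub : X*b ≤ C*b + δ*ξ^b := by
    have h1' : (F ξ - F s0)*b ≤ (L+δ)*(ξ^b - s0^b) := by
      have h2 := mul_le_mul_of_nonneg_right (hIub ξ hξ) hb0.le
      calc (F ξ - F s0)*b ≤ ((L+δ)*((ξ^b - s0^b)/b))*b := h2
        _ = (L+δ)*(ξ^b - s0^b) := by field_simp
    have hA : F s0 * b ≤ |F s0| * b := mul_le_mul_of_nonneg_right (le_abs_self _) hb0.le
    have hB : 0 ≤ (|L| + L + 2*δ)*s0^b :=
      mul_nonneg (by linarith [neg_abs_le L]) hs0P.le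
    rw [hXb, hCb]
    linarith [h1', hA, hB]
  have hXlb : -(X*b) ≤ C*b + δ*ξ^b := by
    have h1' : (L-δ)*(ξ^b - s0^b) ≤ (F ξ - F s0)*b := by
      have h2 := mul_le_mul_of_nonneg_right (hIlb ξ hξ) hb0.le
      calc (L-δ)*(ξ^b - s0^b) = ((L-δ)*((ξ^b - s0^b)/b))*b := by field_simp
        _ ≤ (F ξ - F s0)*b := h2
    have hA : -(F s0) * b ≤ |F s0| * b :=
      mul_le_mul_of_nonneg_right (neg_le_abs _) hb0.le
    have hB : 0 ≤ (|L| - L + 2*δ)*s0^b :=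
      mul_nonneg (by linarith [le_abs_self L]) hs0P.le
    rw [hXb, hCb]
    linarith [h1', hA, hB]
  have hXle : |X| ≤ C + (δ/b)*ξ^b := by
    rw [abs_le]
    constructor
    · apply le_of_mul_le_mul_right ?_ hb0
      calc (-(C + δ/b*ξ^b))*b = -(C*b + δ*ξ^b) := by field_simp
        _ ≤ X*b := by linarith [hXlb]
    · apply le_of_mul_le_mul_right ?_ hb0
      calc X*b ≤ C*b + δ*ξ^b := hXub
        _ = (C + δ/b*ξ^b)*b := by field_simp
  calc |X/ξ^b| = |X|/ξ^b := by rw [abs_div, abs_of_pos hP]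
    _ ≤ (C + (δ/b)*ξ^b)/ξ^b := by gcongr
    _ = C/ξ^b + δ/b := by
        rw [add_div, mul_div_assoc, div_self (ne_of_gt hP), mul_one]
    _ < ε := by
        have h5 := div_le_self hδ.le hb1
        rw [hδdef] at h5 ⊢
        linarith


set_option maxHeartbeats 1000000 in
theorem kpz_g_monotone_limit (q lam : ℝ) (hq : 2 < q) (hlam : 0 < lam)
    (f : ℝ → ℝ)
    (hsol : SolvesKPZProfile q lam (Set.Ici 0) f)
    (hf0 : f 0 = -1)
    (hf'0 : derivWithin f (Set.Ici 0) 0 = 0) :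
    ¬ Tendsto (kpzG q f) atTop (𝓝 0) ∧
    ∀ L : ℝ, 0 ≤ L →
      (∃ T : ℝ, MonotoneOn (kpzG q f) (Set.Ici T) ∨ AntitoneOn (kpzG q f) (Set.Ici T)) →
      Tendsto (kpzG q f) atTop (𝓝 L) →
      L = (1 / (lam * q)) ^ (1 / (q - 1)) := by
  set h : ℝ → ℝ := derivWithin f (Set.Ici 0) with hh
  set c : ℝ := (q-2)/(2*(q-1)) with hc
  set a : ℝ := 1/(q-1) with hadef
  have hq1 : (0:ℝ) < q - 1 := by linarith
  have ha : 0 < a := div_pos one_pos hq1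
  have ha1 : a < 1 := by rw [hadef, div_lt_one hq1]; linarith
  have haq : a * (q-1) = 1 := by rw [hadef]; field_simp
  have hcpos : 0 < c := div_pos (by linarith) (by linarith)
  have hca : c = 1/2 - a/2 := by rw [hc, hadef]; field_simp; ring
  set w : ℝ → ℝ := fun ξ => (1/2)*ξ*(h ξ) - lam*|h ξ|^q - c * f ξ with hwdef
  have hwpos : ∀ ξ ∈ Set.Ici (0:ℝ), 0 < w ξ :=
    fun ξ hξ => kpz_w_pos q lam hq hlam f hsol hf0 hf'0 ξ hξ
  have hwd : ∀ ξ ∈ Set.Ici (0:ℝ), HasDerivWithinAt h (w ξ) (Set.Ici 0) ξ :=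
    fun ξ hξ => kpz_hasDeriv q lam f hsol ξ hξ
  have hfd : ∀ ξ ∈ Set.Ici (0:ℝ), HasDerivWithinAt f (h ξ) (Set.Ici 0) ξ := by
    intro ξ hξ
    exact (hsol.1.differentiableOn (by norm_num) ξ hξ).hasDerivWithinAt
  have hhd_at : ∀ x : ℝ, 0 < x → HasDerivAt h (w x) x := fun x hx =>
    (hwd x (le_of_lt hx)).hasDerivAt (Ici_mem_nhds hx)
  have hfd_at : ∀ x : ℝ, 0 < x → HasDerivAt f (h x) x := fun x hx =>
    (hfd x (le_of_lt hx)).hasDerivAt (Ici_mem_nhds hx)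
  have hcont_f : ContinuousOn f (Set.Ici 0) := hsol.1.continuousOn
  have hC1 : ContDiffOn ℝ 1 h (Set.Ici 0) :=
    hsol.1.derivWithin (uniqueDiffOn_Ici 0) (by norm_num)
  have hcont_h : ContinuousOn h (Set.Ici 0) := hC1.continuousOn
  have hmonoh : StrictMonoOn h (Set.Ici 0) := by
    apply strictMonoOn_of_deriv_pos (convex_Ici 0) hcont_h
    intro x hx
    rw [interior_Ici] at hx
    rw [(hhd_at x hx).deriv]
    exact hwpos x (mem_Ici.2 (le_of_lt hx))
  have hhpos : ∀ ξ : ℝ, 0 < ξ → 0 < h ξ := by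
    intro ξ hξ
    have := hmonoh (mem_Ici.2 le_rfl) (mem_Ici.2 hξ.le) hξ
    rwa [hf'0] at this
  have hhnn : ∀ ξ : ℝ, 0 ≤ ξ → 0 ≤ h ξ := by
    intro ξ hξ
    rcases eq_or_lt_of_le hξ with h1 | h1
    · rw [← h1, hf'0]
    · exact (hhpos ξ h1).le
  have hfle : ∀ ξ : ℝ, 0 ≤ ξ → f ξ ≤ ξ * h ξ := by
    have hψ : MonotoneOn (fun ξ => ξ * h ξ - f ξ) (Set.Ici 0) := by
      apply monotoneOn_of_deriv_nonneg (convex_Ici 0)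
      · exact (continuousOn_id.mul hcont_h).sub hcont_f
      · intro x hx
        rw [interior_Ici] at hx
        exact (((hasDerivAt_id' x).mul (hhd_at x hx)).sub
          (hfd_at x hx)).differentiableAt.differentiableWithinAt
      · intro x hx
        rw [interior_Ici] at hx
        rw [show deriv (fun ξ => ξ * h ξ - f ξ) x = _ from (((hasDerivAt_id' x).mul (hhd_at x hx)).sub (hfd_at x hx)).deriv]
        have h1 := mul_pos hx (hwpos x (mem_Ici.2 hx.le))
        nlinarith
    intro ξ hξ
    have h1 := hψ (mem_Ici.2 le_rfl) (mem_Ici.2 hξ) hξ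
    simp only [hf'0, hf0] at h1
    nlinarith [h1]
  have hkg : ∀ ξ : ℝ, 0 < ξ → kpzG q f (Real.log ξ) = h ξ / ξ ^ a := by
    intro ξ hξ
    have h1 : Real.exp (Real.log ξ) = ξ := Real.exp_log hξ
    have h2 : Real.exp (-(Real.log ξ)/(q-1)) = ξ ^ (-a) := by
      rw [Real.rpow_def_of_pos hξ]
      congr 1
      rw [hadef]; ring
    calc kpzG q f (Real.log ξ)
        = Real.exp (-(Real.log ξ)/(q-1)) * h (Real.exp (Real.log ξ)) := rfl
      _ = ξ^(-a) * h ξ := by rw [h1, h2]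
      _ = h ξ / ξ^a := by rw [Real.rpow_neg hξ.le]; ring
  have htrans : ∀ L : ℝ, Tendsto (kpzG q f) atTop (𝓝 L) →
      Tendsto (fun ξ => h ξ / ξ ^ a) atTop (𝓝 L) := by
    intro L hgL
    have h1 : Tendsto (fun ξ => kpzG q f (Real.log ξ)) atTop (𝓝 L) :=
      hgL.comp Real.tendsto_log_atTop
    refine Tendsto.congr' ?_ h1
    filter_upwards [eventually_gt_atTop 0] with ξ hξ
    exact hkg ξ hξ
  have key1 : ¬ Tendsto (kpzG q f) atTop (𝓝 0) := by
    intro hg0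
    have ht0 := htrans 0 hg0
    set ε : ℝ := (a/(4*lam))^a with hεdef
    have hεpos : 0 < ε := Real.rpow_pos_of_pos (by positivity) a
    have hεq : lam * ε^(q-1) = a/4 := by
      rw [hεdef, ← Real.rpow_mul (by positivity : (0:ℝ) ≤ a/(4*lam)), haq,
        Real.rpow_one]
      field_simp
    obtain ⟨ξ₀, hξ₀⟩ := eventually_atTop.1
      ((Metric.tendsto_nhds.1 ht0 ε hεpos).and (eventually_ge_atTop 1))
    set ξ₁ : ℝ := max ξ₀ 1 with hξ₁def
    have hξ₁1 : (1:ℝ) ≤ ξ₁ := le_max_right _ _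
    have hξ₁0 : (0:ℝ) < ξ₁ := by linarith
    have hsm : ∀ ξ, ξ₁ ≤ ξ → h ξ < ε * ξ^a := by
      intro ξ hξ
      have hξ1 : (1:ℝ) ≤ ξ := le_trans hξ₁1 hξ
      have hξpos : (0:ℝ) < ξ := by linarith
      have hp : 0 < ξ^a := Real.rpow_pos_of_pos hξpos a
      have h1 := (hξ₀ ξ (le_trans (le_max_left _ _) hξ)).1
      rw [Real.dist_eq, sub_zero,
        abs_of_nonneg (div_nonneg (hhnn ξ hξpos.le) hp.le)] at h1
      calc h ξ = (h ξ/ξ^a)*ξ^a := (div_mul_cancel₀ _ (ne_of_gt hp)).symm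
        _ < ε*ξ^a := by nlinarith
    have hwlb : ∀ ξ, ξ₁ ≤ ξ → (a/4)*ξ*(h ξ) ≤ w ξ := by
      intro ξ hξ
      have hξ1 : (1:ℝ) ≤ ξ := le_trans hξ₁1 hξ
      have hξpos : (0:ℝ) < ξ := by linarith
      have hhp : 0 < h ξ := hhpos ξ hξpos
      have hqsplit : |h ξ|^q = h ξ^(q-1) * h ξ := by
        rw [abs_of_pos hhp, show q = (q-1)+1 by ring, Real.rpow_add_one hhp.ne']
        norm_num
      have hle : h ξ^(q-1) ≤ ε^(q-1) * ξ := by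
        calc h ξ^(q-1) ≤ (ε*ξ^a)^(q-1) :=
              Real.rpow_le_rpow hhp.le (hsm ξ hξ).le (by linarith)
          _ = ε^(q-1) * (ξ^a)^(q-1) :=
              Real.mul_rpow hεpos.le (Real.rpow_nonneg hξpos.le a)
          _ = ε^(q-1) * ξ := by
              rw [← Real.rpow_mul hξpos.le, haq, Real.rpow_one]
      have hlam_h : lam * |h ξ|^q ≤ (a/4)*ξ*h ξ := by
        rw [hqsplit]
        calc lam * (h ξ^(q-1) * h ξ) ≤ lam * ((ε^(q-1)*ξ) * h ξ) := by
              apply mul_le_mul_of_nonneg_left ?_ hlam.le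
              exact mul_le_mul_of_nonneg_right hle hhp.le
          _ = (lam * ε^(q-1)) * ξ * h ξ := by ring
          _ = (a/4)*ξ*h ξ := by rw [hεq]
      have hcf : c * f ξ ≤ c * (ξ * h ξ) :=
        mul_le_mul_of_nonneg_left (hfle ξ hξpos.le) hcpos.le
      have hwx : w ξ = (1/2)*ξ*(h ξ) - lam*|h ξ|^q - c * f ξ := rfl
      rw [hwx]
      have hcc : c * (ξ * h ξ) = (1/2)*(ξ*h ξ) - (a/2)*(ξ*h ξ) := by
        rw [hca]; ring
      nlinarith [hlam_h, hcf, hcc]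
    -- Gronwall
    have hexpd : ∀ x : ℝ, HasDerivAt (fun ξ : ℝ => Real.exp (-(a/8)*ξ^2))
        (Real.exp (-(a/8)*x^2) * (-(a/8)*(2*x))) x := by
      intro x
      have h1 : HasDerivAt (fun ξ : ℝ => -(a/8)*ξ^2) (-(a/8)*(2*x)) x := by
        have := (hasDerivAt_pow 2 x).const_mul (-(a/8) : ℝ)
        simpa using this
      exact h1.exp
    set K : ℝ := h ξ₁ * Real.exp (-(a/8)*ξ₁^2) with hK
    have hKpos : 0 < K := mul_pos (hhpos ξ₁ hξ₁0) (Real.exp_pos _)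
    have humono : MonotoneOn (fun ξ => h ξ * Real.exp (-(a/8)*ξ^2)) (Set.Ici ξ₁) := by
      apply monotoneOn_of_deriv_nonneg (convex_Ici ξ₁)
      · apply ContinuousOn.mul (hcont_h.mono (Ici_subset_Ici.2 hξ₁0.le))
        exact (Real.continuous_exp.comp (continuous_const.mul (continuous_pow 2))).continuousOn
      · intro x hx
        rw [interior_Ici] at hx
        have hx0 : (0:ℝ) < x := lt_trans hξ₁0 hx
        exact ((hhd_at x hx0).mul (hexpd x)).differentiableAt.differentiableWithinAt
      · intro x hx
        rw [interior_Ici] at hx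
        have hx0 : (0:ℝ) < x := lt_trans hξ₁0 hx
        rw [show deriv (fun ξ => h ξ * Real.exp (-(a/8)*ξ^2)) x = _ from ((hhd_at x hx0).mul (hexpd x)).deriv]
        have h1 := hwlb x hx.le
        have h2 := mul_le_mul_of_nonneg_right h1 (Real.exp_pos (-(a/8)*x^2)).le
        have h3 : h x * (Real.exp (-(a/8)*x^2) * (-(a/8)*(2*x)))
            = -((a/4)*x*(h x)*Real.exp (-(a/8)*x^2)) := by ring
        linarith [h2, h3]
    have hgrow : ∀ ξ, ξ₁ ≤ ξ → K * Real.exp ((a/8)*ξ^2) ≤ h ξ := by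
      intro ξ hξ
      have h1 := humono (mem_Ici.2 le_rfl) (mem_Ici.2 hξ) hξ
      have hE : Real.exp (-(a/8)*ξ^2) * Real.exp ((a/8)*ξ^2) = 1 := by
        rw [← Real.exp_add]; norm_num
      calc K * Real.exp ((a/8)*ξ^2)
          ≤ (h ξ * Real.exp (-(a/8)*ξ^2)) * Real.exp ((a/8)*ξ^2) :=
            mul_le_mul_of_nonneg_right h1 (Real.exp_pos _).le
        _ = h ξ * (Real.exp (-(a/8)*ξ^2) * Real.exp ((a/8)*ξ^2)) := by ring
        _ = h ξ := by rw [hE, mul_one]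
    have hT : Tendsto (fun ξ : ℝ => K * (Real.exp ξ / ξ)) atTop atTop := by
      have h1 : Tendsto (fun ξ : ℝ => Real.exp ξ / ξ) atTop atTop := by
        simpa using tendsto_exp_div_pow_atTop 1
      exact h1.const_mul_atTop hKpos
    obtain ⟨ξ₃, hξ₃all⟩ := eventually_atTop.1
      (((hT.eventually_ge_atTop ε).and (eventually_ge_atTop ξ₁)).and
        ((eventually_ge_atTop 1).and (eventually_ge_atTop (8/a))))
    obtain ⟨⟨hP1, hP2⟩, hP3, hP4⟩ := hξ₃all ξ₃ le_rfl
    have hξpos : (0:ℝ) < ξ₃ := by linarith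
    have hsm3 := hsm ξ₃ hP2
    have hgr3 := hgrow ξ₃ hP2
    have hexp_mono : Real.exp ξ₃ ≤ Real.exp ((a/8)*ξ₃^2) := by
      apply Real.exp_le_exp.2
      have h8 : 8 ≤ ξ₃ * a := (div_le_iff₀ ha).1 hP4
      nlinarith
    have hpow : ξ₃^a ≤ ξ₃ := by
      calc ξ₃^a ≤ ξ₃^(1:ℝ) := Real.rpow_le_rpow_of_exponent_le hP3 ha1.le
        _ = ξ₃ := Real.rpow_one _
    have hl1 : ε * ξ₃ ≤ K * Real.exp ξ₃ := by
      have h2 := mul_le_mul_of_nonneg_right hP1 hξpos.le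
      calc ε * ξ₃ ≤ (K * (Real.exp ξ₃ / ξ₃)) * ξ₃ := h2
        _ = K * Real.exp ξ₃ := by field_simp
    have hl2 : K * Real.exp ξ₃ ≤ K * Real.exp ((a/8)*ξ₃^2) :=
      mul_le_mul_of_nonneg_left hexp_mono hKpos.le
    have hεξ : ε * ξ₃^a ≤ ε * ξ₃ := mul_le_mul_of_nonneg_left hpow hεpos.le
    linarith
  refine ⟨key1, ?_⟩
  intro L hL _ hgL
  have hLpos : 0 < L := by
    rcases lt_or_eq_of_le hL with h1 | h1
    · exact h1
    · exact absurd (h1 ▸ hgL) key1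
  have hta := htrans L hgL
  set b : ℝ := a + 1 with hbdef
  have hb0 : (0:ℝ) < b := by linarith
  have hfb : Tendsto (fun ξ => f ξ / ξ^b) atTop (𝓝 (L/b)) :=
    cesaro_rpow ha hcont_h hfd_at hta
  have haq2 : a * q = b := by rw [hbdef, hadef]; field_simp; ring
  set M : ℝ := (1/2)*L - lam * L^q - c*(L/b) with hM
  have tM : Tendsto (fun ξ => w ξ / ξ^b) atTop (𝓝 M) := by
    have t1 : Tendsto (fun ξ => (1/2)*(h ξ/ξ^a)) atTop (𝓝 ((1/2)*L)) :=
      hta.const_mul _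
    have hcontR : ContinuousAt (fun x : ℝ => x^q) L :=
      Real.continuousAt_rpow_const L q (Or.inl hLpos.ne')
    have t2 : Tendsto (fun ξ => lam*((h ξ/ξ^a)^q)) atTop (𝓝 (lam*L^q)) :=
      (hcontR.tendsto.comp hta).const_mul lam
    have t3 : Tendsto (fun ξ => c*(f ξ/ξ^b)) atTop (𝓝 (c*(L/b))) :=
      hfb.const_mul c
    have tAll := (t1.sub t2).sub t3
    refine Tendsto.congr' ?_ tAll
    filter_upwards [eventually_ge_atTop 1] with ξ hξ1
    have hξpos : (0:ℝ) < ξ := by linarith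
    have hpa : 0 < ξ^a := Real.rpow_pos_of_pos hξpos a
    have hpb : 0 < ξ^b := Real.rpow_pos_of_pos hξpos b
    have hbb : ξ^b = ξ * ξ^a := by
      rw [hbdef, Real.rpow_add hξpos, Real.rpow_one]; ring
    have habs : |h ξ| = h ξ := abs_of_nonneg (hhnn ξ hξpos.le)
    have hpq : (h ξ/ξ^a)^q = (h ξ)^q / ξ^b := by
      rw [Real.div_rpow (hhnn ξ hξpos.le) hpa.le]
      congr 1
      rw [← Real.rpow_mul hξpos.le, haq2]
    have hwx : w ξ = (1/2)*ξ*(h ξ) - lam*|h ξ|^q - c * f ξ := rfl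
    rw [hpq, hwx, habs, hbb]
    field_simp
  have hM0 : 0 ≤ M := by
    refine ge_of_tendsto tM ?_
    filter_upwards [eventually_ge_atTop 1] with ξ hξ1
    have hξpos : (0:ℝ) < ξ := by linarith
    exact div_nonneg (hwpos ξ hξpos.le).le (Real.rpow_pos_of_pos hξpos b).le
  have hMle : ¬ (0 < M) := by
    intro hMpos
    have hev : ∀ᶠ ξ in atTop, (M/2)*ξ^b ≤ w ξ := by
      filter_upwards [Metric.tendsto_nhds.1 tM (M/2) (half_pos hMpos),
        eventually_ge_atTop 1] with ξ h1 h2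
      have hξpos : (0:ℝ) < ξ := by linarith
      have hpb : 0 < ξ^b := Real.rpow_pos_of_pos hξpos b
      rw [Real.dist_eq, abs_lt] at h1
      have h3 : M/2 < w ξ/ξ^b := by linarith
      calc (M/2)*ξ^b ≤ (w ξ/ξ^b)*ξ^b := by nlinarith
        _ = w ξ := div_mul_cancel₀ _ (ne_of_gt hpb)
    obtain ⟨ξ₂, hξ₂⟩ := eventually_atTop.1 (hev.and (eventually_ge_atTop 1))
    have hξ₂1 : (1:ℝ) ≤ ξ₂ := (hξ₂ ξ₂ le_rfl).2
    have hξ₂0 : (0:ℝ) < ξ₂ := by linarith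
    have hb1ne : b + 1 ≠ 0 := ne_of_gt (by linarith)
    have hrpd : ∀ x : ℝ, 0 < x →
        HasDerivAt (fun ξ : ℝ => (M/2)*ξ^(b+1)/(b+1)) ((M/2)*x^b) x := by
      intro x hx
      have h1 : HasDerivAt (fun ξ : ℝ => ξ^(b+1)) ((b+1)*x^(b+1-1)) x :=
        Real.hasDerivAt_rpow_const (Or.inl (ne_of_gt hx))
      have h2 := (h1.const_mul (M/2 : ℝ)).div_const (b+1)
      have hb1 : b + 1 - 1 = b := by ring
      rw [hb1] at h2
      refine h2.congr_deriv ?_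
      rw [div_eq_iff hb1ne]
      ring
    have hvmono : MonotoneOn (fun ξ => h ξ - (M/2)*ξ^(b+1)/(b+1)) (Set.Ici ξ₂) := by
      apply monotoneOn_of_deriv_nonneg (convex_Ici ξ₂)
      · apply ContinuousOn.sub (hcont_h.mono (Ici_subset_Ici.2 hξ₂0.le))
        apply ContinuousOn.div_const
        exact continuousOn_const.mul (ContinuousOn.rpow_const continuousOn_id
          (fun x hx => Or.inl (ne_of_gt (lt_of_lt_of_le hξ₂0 hx))))
      · intro x hx
        rw [interior_Ici] at hx
        have hx0 : (0:ℝ) < x := lt_trans hξ₂0 hx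
        exact ((hhd_at x hx0).sub (hrpd x hx0)).differentiableAt.differentiableWithinAt
      · intro x hx
        rw [interior_Ici] at hx
        have hx0 : (0:ℝ) < x := lt_trans hξ₂0 hx
        rw [show deriv (fun ξ => h ξ - (M/2)*ξ^(b+1)/(b+1)) x = _ from ((hhd_at x hx0).sub (hrpd x hx0)).deriv]
        have h1 := (hξ₂ x hx.le).1
        linarith
    have hgrow2 : ∀ ξ, ξ₂ ≤ ξ →
        h ξ₂ - (M/2)*ξ₂^(b+1)/(b+1) + (M/2)*ξ^(b+1)/(b+1) ≤ h ξ := by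
      intro ξ hξ
      have h1 : h ξ₂ - (M/2)*ξ₂^(b+1)/(b+1) ≤ h ξ - (M/2)*ξ^(b+1)/(b+1) :=
        hvmono (mem_Ici.2 le_rfl) (mem_Ici.2 hξ) hξ
      linarith
    set C₂ : ℝ := h ξ₂ - (M/2)*ξ₂^(b+1)/(b+1) with hC₂
    have hTT : Tendsto (fun ξ => h ξ/ξ^a) atTop atTop := by
      have hbase : Tendsto
          (fun ξ : ℝ => C₂/ξ^a + (M/(2*(b+1)))*ξ^(2:ℝ)) atTop atTop := by
        have hc1 : Tendsto (fun ξ : ℝ => C₂/ξ^a) atTop (𝓝 0) := by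
          have h2 : Tendsto (fun ξ : ℝ => (ξ^a)⁻¹) atTop (𝓝 0) := by
            have h3 := (tendsto_rpow_atTop ha).inv_tendsto_atTop
            simpa [Pi.inv_def] using h3
          have h4 := Filter.Tendsto.const_mul (b := C₂) h2
          simpa [div_eq_mul_inv] using h4
        have hc2 : Tendsto (fun ξ : ℝ => (M/(2*(b+1)))*ξ^(2:ℝ)) atTop atTop := by
          apply Tendsto.const_mul_atTop (by positivity)
          exact tendsto_rpow_atTop (by norm_num)
        exact hc1.add_atTop hc2
      apply tendsto_atTop_mono' atTop ?_ hbase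
      filter_upwards [eventually_ge_atTop ξ₂, eventually_ge_atTop 1] with ξ hξ hξ1
      have hξpos : (0:ℝ) < ξ := by linarith
      have hpa : 0 < ξ^a := Real.rpow_pos_of_pos hξpos a
      have hdiv : ξ^(b+1)/ξ^a = ξ^(2:ℝ) := by
        rw [← Real.rpow_sub hξpos]
        congr 1
        rw [hbdef]; ring
      have h1 := hgrow2 ξ hξ
      have h2 : (C₂ + (M/2)*ξ^(b+1)/(b+1))/ξ^a ≤ h ξ/ξ^a := by
        gcongr
      have h3 : (C₂ + (M/2)*ξ^(b+1)/(b+1))/ξ^a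
          = C₂/ξ^a + (M/(2*(b+1)))*ξ^(2:ℝ) := by
        rw [add_div, ← hdiv]
        field_simp
      linarith [h2, h3]
    exact absurd hTT (not_tendsto_atTop_of_tendsto_nhds hta)
  have hMeq : M = 0 := le_antisymm (not_lt.1 hMle) hM0
  have hMsimp : L/q - lam*L^q = 0 := by
    rw [hM, hbdef, hadef, hc] at hMeq
    field_simp at hMeq ⊢
    have h9 : (4*(q-1))*(L - q*(lam*L^q)) = 0 := by linear_combination (2*(q-1)) * hMeq
    have h11 : (4*(q-1)) ≠ 0 := by positivity
    linear_combination (mul_eq_zero.1 h9).resolve_left h11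
  have hLq : L^(q-1) = 1/(lam*q) := by
    have hq0 : (0:ℝ) < q := by linarith
    have h2 : L^q = L^(q-1)*L := by
      rw [show q = (q-1)+1 by ring, Real.rpow_add_one hLpos.ne']
      norm_num
    rw [h2] at hMsimp
    field_simp [hq0.ne'] at hMsimp
    have h6 : (lam * q * L^(q-1) - 1) * L = 0 := by
      linear_combination -hMsimp
    rcases mul_eq_zero.1 h6 with h7 | h7
    · rw [eq_div_iff (ne_of_gt (mul_pos hlam hq0))]
      linarith
    · exact absurd h7 hLpos.ne'
  calc L = L^(1:ℝ) := (Real.rpow_one L).symm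
    _ = L^((q-1)*(1/(q-1))) := by rw [mul_one_div_cancel (ne_of_gt hq1)]
    _ = (L^(q-1))^(1/(q-1)) := Real.rpow_mul hL _ _
    _ = (1/(lam*q))^(1/(q-1)) := by rw [hLq]
end
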